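/- arXiv:1909.01655 — 6 statements merged into one kernel-verified Lean document; each statement's English description precedes it below -/
import Mathlib

section
/- Let (Φ,η) be an IFS on a complete separable metric space (X,d) satisfying Hypotheses (1) and (2) for some q > 0, A > 0, ρ ∈ (0,1) and x₀ ∈ X. Then the dual transfer operator L* maps 𝒫_q(X) into itself and is a contraction on (𝒫_q(X), W_q) of ratio at most ρ̄ = ρ^{min(1,1/q)}: for all μ₀, μ₁ ∈ 𝒫_q(X), W_q(L*μ₀, L*μ₁) ≤ ρ̄·W_q(μ₀,μ₁). -/
open MeasureTheory ENNReal Set Metric Filter Topology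

noncomputable section

/-- `γ` is a coupling of `μ₀` and `μ₁`, i.e. a measure on the product whose
marginals are `μ₀` and `μ₁`. -/
def IsCoupling {α β : Type*} [MeasurableSpace α] [MeasurableSpace β]
    (γ : Measure (α × β)) (μ₀ : Measure α) (μ₁ : Measure β) : Prop :=
  γ.map Prod.fst = μ₀ ∧ γ.map Prod.snd = μ₁

/-- The optimal transportation cost of exponent `q`:
`C_q(μ₀,μ₁) = inf over couplings γ of ∫ d(x,y)^q dγ(x,y)`. -/
def wCost {X : Type*} [MetricSpace X] [MeasurableSpace X]
    (q : ℝ) (μ₀ μ₁ : Measure X) : ℝ≥0∞ :=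
  ⨅ (γ : Measure (X × X)) (_ : IsCoupling γ μ₀ μ₁),
    ∫⁻ p, ENNReal.ofReal (dist p.1 p.2 ^ q) ∂γ

/-- The Wasserstein distance of exponent `q`: `W_q = C_q^{min(1,1/q)}`. -/
def wDist {X : Type*} [MetricSpace X] [MeasurableSpace X]
    (q : ℝ) (μ₀ μ₁ : Measure X) : ℝ≥0∞ :=
  wCost q μ₀ μ₁ ^ min 1 (1 / q)

/-- The `q`-th moment of a measure `μ` with respect to the base point `x₀`. -/
def moment {X : Type*} [MetricSpace X] [MeasurableSpace X]
    (q : ℝ) (x₀ : X) (μ : Measure X) : ℝ≥0∞ :=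
  ∫⁻ x, ENNReal.ofReal (dist x x₀ ^ q) ∂μ

/-- The dual transfer operator `L*μ = ∫ (φ_i)_* μ dη(i)` of the IFS `(Φ, η)`. -/
def dualTransfer {X : Type*} [MeasurableSpace X] {I : Type*} [MeasurableSpace I]
    (φ : I → X → X) (η : Measure I) (μ : Measure X) : Measure X :=
  η.bind (fun i => μ.map (φ i))

/-- A measurable family of maps pushes forward an s-finite measure measurably. -/
lemma measurable_map_fam {I Y Z : Type*} [MeasurableSpace I] [MeasurableSpace Y] [MeasurableSpace Z]
    (ν : Measure Y) [SFinite ν] {ψ : I → Y → Z}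
    (h : Measurable fun p : I × Y => ψ p.1 p.2) :
    Measurable fun i => ν.map (ψ i) := by
  apply Measure.measurable_of_measurable_coe
  intro s hs
  have heq : ∀ i, ν.map (ψ i) s = ν (Prod.mk i ⁻¹' ((fun p : I × Y => ψ p.1 p.2) ⁻¹' s)) :=
    fun i => Measure.map_apply (h.comp measurable_prodMk_left) hs
  simp_rw [heq]
  exact measurable_measure_prodMk_left (h hs)

/-- Elementary inequality: `(a+b)^q ≤ 2^q (a^q + b^q)` for nonnegative reals. -/
lemma add_rpow_le' (a b q : ℝ) (ha : 0 ≤ a) (hb : 0 ≤ b) (hq : 0 ≤ q) :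
    (a + b) ^ q ≤ 2 ^ q * (a ^ q + b ^ q) := by
  have h1 : a + b ≤ 2 * max a b := by
    rcases le_total a b with h | h
    · rw [max_eq_right h]; linarith
    · rw [max_eq_left h]; linarith
  have hm : (0:ℝ) ≤ max a b := le_max_of_le_left ha
  calc (a + b) ^ q ≤ (2 * max a b) ^ q := Real.rpow_le_rpow (by linarith) h1 hq
    _ = 2 ^ q * (max a b) ^ q := Real.mul_rpow (by norm_num) hm
    _ ≤ 2 ^ q * (a ^ q + b ^ q) := by
        refine mul_le_mul_of_nonneg_left ?_ (Real.rpow_nonneg (by norm_num) q)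
        rcases le_total a b with h | h
        · rw [max_eq_right h]; exact le_add_of_nonneg_left (Real.rpow_nonneg ha q)
        · rw [max_eq_left h]; exact le_add_of_nonneg_right (Real.rpow_nonneg hb q)

section Aux

variable {X : Type*} [MetricSpace X] [TopologicalSpace.SeparableSpace X]
    [MeasurableSpace X] [BorelSpace X]
    {I : Type*} [MeasurableSpace I]
    (φ : I → X → X)
    (hmeas : Measurable fun p : I × X => φ p.1 p.2)
    (η : Measure I) [IsProbabilityMeasure η]
    (x₀ : X) (q A ρ : ℝ) (hq : 0 < q) (hρ₀ : 0 < ρ)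
    (h1 : ∀ x y : X, ∫⁻ i, ENNReal.ofReal (dist (φ i x) (φ i y) ^ q) ∂η
            ≤ ENNReal.ofReal (ρ * dist x y ^ q))
    (h2 : ∫⁻ i, ENNReal.ofReal (dist x₀ (φ i x₀) ^ q) ∂η ≤ ENNReal.ofReal A)

omit [MetricSpace X] [TopologicalSpace.SeparableSpace X] [BorelSpace X] in
include hmeas in
/-- The dual transfer operator preserves probability measures. -/
lemma dualTransfer_prob (μ : Measure X) [IsProbabilityMeasure μ] :
    IsProbabilityMeasure (dualTransfer φ η μ) := by
  have hφm : ∀ i, Measurable (φ i) := fun i => hmeas.comp measurable_prodMk_left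
  constructor
  rw [dualTransfer, Measure.bind_apply MeasurableSet.univ (measurable_map_fam μ hmeas).aemeasurable]
  have h : ∀ i, μ.map (φ i) univ = 1 := fun i => by
    rw [Measure.map_apply (hφm i) MeasurableSet.univ]; simp
  simp [h]

include hmeas hq hρ₀ h1 h2 in
/-- The dual transfer operator preserves finiteness of the `q`-th moment. -/
lemma dualTransfer_moment (μ : Measure X) [IsProbabilityMeasure μ] (hm : moment q x₀ μ < ∞) :
    moment q x₀ (dualTransfer φ η μ) < ∞ := by
  haveI : SecondCountableTopology X := UniformSpace.secondCountable_of_separable X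
  have hq' : (0:ℝ) ≤ q := hq.le
  have hφm : ∀ i, Measurable (φ i) := fun i => hmeas.comp measurable_prodMk_left
  have hrpm : Measurable fun t : ℝ => t ^ q := (Real.continuous_rpow_const hq').measurable
  have hf : Measurable fun x : X => ENNReal.ofReal (dist x x₀ ^ q) :=
    ENNReal.measurable_ofReal.comp (hrpm.comp (measurable_id.dist measurable_const))
  have hA : Measurable fun p : I × X =>
      ENNReal.ofReal (dist (φ p.1 p.2) (φ p.1 x₀) ^ q) :=
    ENNReal.measurable_ofReal.comp (hrpm.comp
      (hmeas.dist (hmeas.comp (measurable_fst.prodMk measurable_const))))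
  have hB : Measurable fun i : I => ENNReal.ofReal (dist (φ i x₀) x₀ ^ q) :=
    ENNReal.measurable_ofReal.comp (hrpm.comp
      ((hmeas.comp (measurable_id.prodMk measurable_const)).dist measurable_const))
  rw [moment, dualTransfer, Measure.lintegral_bind (measurable_map_fam μ hmeas).aemeasurable hf.aemeasurable]
  have hmapped : ∀ i, ∫⁻ x, ENNReal.ofReal (dist x x₀ ^ q) ∂(μ.map (φ i))
      = ∫⁻ x, ENNReal.ofReal (dist (φ i x) x₀ ^ q) ∂μ := fun i => lintegral_map hf (hφm i)
  simp_rw [hmapped]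
  have ptb : ∀ i x, ENNReal.ofReal (dist (φ i x) x₀ ^ q) ≤
      ENNReal.ofReal (2 ^ q) * (ENNReal.ofReal (dist (φ i x) (φ i x₀) ^ q)
        + ENNReal.ofReal (dist (φ i x₀) x₀ ^ q)) := by
    intro i x
    have hd : dist (φ i x) x₀ ^ q ≤ (dist (φ i x) (φ i x₀) + dist (φ i x₀) x₀) ^ q :=
      Real.rpow_le_rpow dist_nonneg (dist_triangle _ _ _) hq'
    have h2' := add_rpow_le' (dist (φ i x) (φ i x₀)) (dist (φ i x₀) x₀) q
      dist_nonneg dist_nonneg hq'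
    calc ENNReal.ofReal (dist (φ i x) x₀ ^ q)
        ≤ ENNReal.ofReal (2 ^ q * (dist (φ i x) (φ i x₀) ^ q + dist (φ i x₀) x₀ ^ q)) :=
          ENNReal.ofReal_le_ofReal (hd.trans h2')
      _ = _ := by
          rw [ENNReal.ofReal_mul (Real.rpow_nonneg (by norm_num) q),
            ENNReal.ofReal_add (Real.rpow_nonneg dist_nonneg q)
              (Real.rpow_nonneg dist_nonneg q)]
  have step1 : ∫⁻ i, ∫⁻ x, ENNReal.ofReal (dist (φ i x) x₀ ^ q) ∂μ ∂η
      ≤ ENNReal.ofReal (2 ^ q) *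
        ((∫⁻ i, ∫⁻ x, ENNReal.ofReal (dist (φ i x) (φ i x₀) ^ q) ∂μ ∂η)
          + ∫⁻ i, ENNReal.ofReal (dist (φ i x₀) x₀ ^ q) ∂η) := by
    have inner : ∀ i, ∫⁻ x, ENNReal.ofReal (dist (φ i x) x₀ ^ q) ∂μ
        ≤ ENNReal.ofReal (2 ^ q) *
          ((∫⁻ x, ENNReal.ofReal (dist (φ i x) (φ i x₀) ^ q) ∂μ)
            + ENNReal.ofReal (dist (φ i x₀) x₀ ^ q)) := by
      intro i
      have hAi : Measurable fun x : X => ENNReal.ofReal (dist (φ i x) (φ i x₀) ^ q) :=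
        hA.comp measurable_prodMk_left
      calc ∫⁻ x, ENNReal.ofReal (dist (φ i x) x₀ ^ q) ∂μ
          ≤ ∫⁻ x, ENNReal.ofReal (2 ^ q) * (ENNReal.ofReal (dist (φ i x) (φ i x₀) ^ q)
              + ENNReal.ofReal (dist (φ i x₀) x₀ ^ q)) ∂μ := lintegral_mono (ptb i)
        _ = ENNReal.ofReal (2 ^ q) * ∫⁻ x, (ENNReal.ofReal (dist (φ i x) (φ i x₀) ^ q)
              + ENNReal.ofReal (dist (φ i x₀) x₀ ^ q)) ∂μ := by
            exact lintegral_const_mul _ (hAi.add measurable_const)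
        _ = _ := by
            rw [lintegral_add_right _ measurable_const, lintegral_const, measure_univ, mul_one]
    calc ∫⁻ i, ∫⁻ x, ENNReal.ofReal (dist (φ i x) x₀ ^ q) ∂μ ∂η
        ≤ ∫⁻ i, ENNReal.ofReal (2 ^ q) *
            ((∫⁻ x, ENNReal.ofReal (dist (φ i x) (φ i x₀) ^ q) ∂μ)
              + ENNReal.ofReal (dist (φ i x₀) x₀ ^ q)) ∂η := lintegral_mono inner
      _ = ENNReal.ofReal (2 ^ q) * ∫⁻ i,
            ((∫⁻ x, ENNReal.ofReal (dist (φ i x) (φ i x₀) ^ q) ∂μ)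
              + ENNReal.ofReal (dist (φ i x₀) x₀ ^ q)) ∂η := by
          exact lintegral_const_mul _ ((hA.lintegral_prod_right').add hB)
      _ = _ := by rw [lintegral_add_right _ hB]
  have T1 : ∫⁻ i, ∫⁻ x, ENNReal.ofReal (dist (φ i x) (φ i x₀) ^ q) ∂μ ∂η
      ≤ ENNReal.ofReal ρ * moment q x₀ μ := by
    rw [lintegral_lintegral_swap hA.aemeasurable]
    calc ∫⁻ x, ∫⁻ i, ENNReal.ofReal (dist (φ i x) (φ i x₀) ^ q) ∂η ∂μ
        ≤ ∫⁻ x, ENNReal.ofReal (ρ * dist x x₀ ^ q) ∂μ := lintegral_mono fun x => h1 x x₀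
      _ = ∫⁻ x, ENNReal.ofReal ρ * ENNReal.ofReal (dist x x₀ ^ q) ∂μ := by
          simp_rw [ENNReal.ofReal_mul hρ₀.le]
      _ = ENNReal.ofReal ρ * moment q x₀ μ := by rw [lintegral_const_mul _ hf]; rfl
  have T2 : ∫⁻ i, ENNReal.ofReal (dist (φ i x₀) x₀ ^ q) ∂η ≤ ENNReal.ofReal A := by
    simp_rw [dist_comm (φ _ x₀) x₀]; exact h2
  calc ∫⁻ i, ∫⁻ x, ENNReal.ofReal (dist (φ i x) x₀ ^ q) ∂μ ∂η
      ≤ ENNReal.ofReal (2 ^ q) *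
        ((∫⁻ i, ∫⁻ x, ENNReal.ofReal (dist (φ i x) (φ i x₀) ^ q) ∂μ ∂η)
          + ∫⁻ i, ENNReal.ofReal (dist (φ i x₀) x₀ ^ q) ∂η) := step1
    _ ≤ ENNReal.ofReal (2 ^ q) * (ENNReal.ofReal ρ * moment q x₀ μ + ENNReal.ofReal A) :=
        mul_le_mul_right (add_le_add T1 T2) _
    _ < ∞ := ENNReal.mul_lt_top ENNReal.ofReal_lt_top
        (ENNReal.add_lt_top.mpr ⟨ENNReal.mul_lt_top ENNReal.ofReal_lt_top hm, ENNReal.ofReal_lt_top⟩)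

include hmeas hq hρ₀ h1 in
/-- The dual transfer operator contracts the transportation cost by a factor `ρ`. -/
lemma wCost_contract (μ₀ μ₁ : Measure X) [IsProbabilityMeasure μ₀] [IsProbabilityMeasure μ₁] :
    wCost q (dualTransfer φ η μ₀) (dualTransfer φ η μ₁) ≤ ENNReal.ofReal ρ * wCost q μ₀ μ₁ := by
  haveI : SecondCountableTopology X := UniformSpace.secondCountable_of_separable X
  have hρ_ne : ENNReal.ofReal ρ ≠ 0 := (ENNReal.ofReal_pos.mpr hρ₀).ne'
  have hφm : ∀ i, Measurable (φ i) := fun i => hmeas.comp measurable_prodMk_left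
  have hrpm : Measurable fun t : ℝ => t ^ q := (Real.continuous_rpow_const hq.le).measurable
  have hcostm : Measurable fun p : X × X => ENNReal.ofReal (dist p.1 p.2 ^ q) :=
    ENNReal.measurable_ofReal.comp (hrpm.comp (measurable_fst.dist measurable_snd))
  simp only [wCost]
  rw [ENNReal.mul_iInf_of_ne hρ_ne ENNReal.ofReal_ne_top]
  refine le_iInf fun γ => ?_
  rw [ENNReal.mul_iInf_of_ne hρ_ne ENNReal.ofReal_ne_top]
  refine le_iInf fun hγ => ?_
  haveI hγp : IsProbabilityMeasure γ := by
    constructor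
    have := congrArg (fun ν : Measure X => ν univ) hγ.1
    simpa [Measure.map_apply measurable_fst MeasurableSet.univ] using this
  set Ψ : I → X × X → X × X := fun i p => (φ i p.1, φ i p.2) with hΨdef
  have hΨ : Measurable fun p : I × (X × X) => Ψ p.1 p.2 :=
    (hmeas.comp (measurable_fst.prodMk (measurable_fst.comp measurable_snd))).prodMk
      (hmeas.comp (measurable_fst.prodMk (measurable_snd.comp measurable_snd)))
  have hΨi : ∀ i, Measurable (Ψ i) := fun i => hΨ.comp measurable_prodMk_left
  set γ' : Measure (X × X) := η.bind fun i => γ.map (Ψ i) with hγ'def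
  have hmapfam : Measurable fun i => γ.map (Ψ i) := measurable_map_fam γ hΨ
  have hcoup : IsCoupling γ' (dualTransfer φ η μ₀) (dualTransfer φ η μ₁) := by
    constructor
    · ext s hs
      rw [Measure.map_apply measurable_fst hs, hγ'def,
        Measure.bind_apply (measurable_fst hs) hmapfam.aemeasurable,
        dualTransfer, Measure.bind_apply hs (measurable_map_fam μ₀ hmeas).aemeasurable]
      refine lintegral_congr fun i => ?_
      rw [Measure.map_apply (hΨi i) (measurable_fst hs), Measure.map_apply (hφm i) hs,
        ← hγ.1, Measure.map_apply measurable_fst ((hφm i) hs)]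
      rfl
    · ext s hs
      rw [Measure.map_apply measurable_snd hs, hγ'def,
        Measure.bind_apply (measurable_snd hs) hmapfam.aemeasurable,
        dualTransfer, Measure.bind_apply hs (measurable_map_fam μ₁ hmeas).aemeasurable]
      refine lintegral_congr fun i => ?_
      rw [Measure.map_apply (hΨi i) (measurable_snd hs), Measure.map_apply (hφm i) hs,
        ← hγ.2, Measure.map_apply measurable_snd ((hφm i) hs)]
      rfl
  refine iInf₂_le_of_le γ' hcoup ?_
  have hjm : Measurable fun p : I × (X × X) =>
      ENNReal.ofReal (dist (φ p.1 p.2.1) (φ p.1 p.2.2) ^ q) := hcostm.comp hΨ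
  calc ∫⁻ p, ENNReal.ofReal (dist p.1 p.2 ^ q) ∂γ'
      = ∫⁻ i, ∫⁻ p, ENNReal.ofReal (dist p.1 p.2 ^ q) ∂(γ.map (Ψ i)) ∂η :=
        Measure.lintegral_bind hmapfam.aemeasurable hcostm.aemeasurable
    _ = ∫⁻ i, ∫⁻ p, ENNReal.ofReal (dist (φ i p.1) (φ i p.2) ^ q) ∂γ ∂η := by
        refine lintegral_congr fun i => lintegral_map hcostm (hΨi i)
    _ = ∫⁻ p, ∫⁻ i, ENNReal.ofReal (dist (φ i p.1) (φ i p.2) ^ q) ∂η ∂γ :=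
        lintegral_lintegral_swap hjm.aemeasurable
    _ ≤ ∫⁻ p : X × X, ENNReal.ofReal (ρ * dist p.1 p.2 ^ q) ∂γ :=
        lintegral_mono fun p => h1 p.1 p.2
    _ = ∫⁻ p : X × X, ENNReal.ofReal ρ * ENNReal.ofReal (dist p.1 p.2 ^ q) ∂γ := by
        simp_rw [ENNReal.ofReal_mul hρ₀.le]
    _ = ENNReal.ofReal ρ * ∫⁻ p, ENNReal.ofReal (dist p.1 p.2 ^ q) ∂γ :=
        lintegral_const_mul _ hcostm

end Aux

/-- **Lemma (contraction of the dual transfer operator).**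
Under hypotheses (1) and (2), the dual transfer operator maps `𝒫_q(X)` into itself
and is a `ρ^{min(1,1/q)}`-contraction for the Wasserstein distance `W_q`. -/
theorem stmt1
    {X : Type*} [MetricSpace X] [CompleteSpace X] [TopologicalSpace.SeparableSpace X]
    [MeasurableSpace X] [BorelSpace X]
    {I : Type*} [MeasurableSpace I]
    (φ : I → X → X) (hcont : ∀ i, Continuous (φ i))
    (hmeas : Measurable fun p : I × X => φ p.1 p.2)
    (η : Measure I) [IsProbabilityMeasure η]
    (x₀ : X) (q A ρ : ℝ) (hq : 0 < q) (hA : 0 < A) (hρ₀ : 0 < ρ) (hρ₁ : ρ < 1)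
    (h1 : ∀ x y : X, ∫⁻ i, ENNReal.ofReal (dist (φ i x) (φ i y) ^ q) ∂η
            ≤ ENNReal.ofReal (ρ * dist x y ^ q))
    (h2 : ∫⁻ i, ENNReal.ofReal (dist x₀ (φ i x₀) ^ q) ∂η ≤ ENNReal.ofReal A) :
    ∀ μ₀ μ₁ : Measure X, IsProbabilityMeasure μ₀ → IsProbabilityMeasure μ₁ →
      moment q x₀ μ₀ < ∞ → moment q x₀ μ₁ < ∞ →
      (moment q x₀ (dualTransfer φ η μ₀) < ∞ ∧
        IsProbabilityMeasure (dualTransfer φ η μ₀)) ∧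
      wDist q (dualTransfer φ η μ₀) (dualTransfer φ η μ₁)
        ≤ ENNReal.ofReal (ρ ^ min 1 (1 / q)) * wDist q μ₀ μ₁ := by
  intro μ₀ μ₁ hp₀ hp₁ hm₀ hm₁
  haveI := hp₀; haveI := hp₁
  have hr : (0:ℝ) ≤ min 1 (1 / q) := le_min zero_le_one (by positivity)
  refine ⟨⟨dualTransfer_moment φ hmeas η x₀ q A ρ hq hρ₀ h1 h2 μ₀ hm₀,
    dualTransfer_prob φ hmeas η μ₀⟩, ?_⟩
  have hcost := wCost_contract φ hmeas η q ρ hq hρ₀ h1 μ₀ μ₁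
  calc wDist q (dualTransfer φ η μ₀) (dualTransfer φ η μ₁)
      = wCost q (dualTransfer φ η μ₀) (dualTransfer φ η μ₁) ^ min 1 (1 / q) := rfl
    _ ≤ (ENNReal.ofReal ρ * wCost q μ₀ μ₁) ^ min 1 (1 / q) :=
        ENNReal.rpow_le_rpow hcost hr
    _ = ENNReal.ofReal ρ ^ min 1 (1 / q) * wCost q μ₀ μ₁ ^ min 1 (1 / q) :=
        ENNReal.mul_rpow_of_nonneg _ _ hr
    _ = ENNReal.ofReal (ρ ^ min 1 (1 / q)) * wDist q μ₀ μ₁ := by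
        rw [ENNReal.ofReal_rpow_of_pos hρ₀]; rfl

end
end

section
/- Let (Φ,η) be an IFS on a complete separable metric space (X,d) satisfying Hypotheses (1) and (2) for some q > 0, A > 0, ρ ∈ (0,1) and x₀ ∈ X, and let μ be its unique stationary measure in 𝒫_q(X). Then every stationary measure μ' of (Φ,η) (not assumed a priori to have finite q-th moment) satisfies m_{x₀}^q(μ') ≤ m_{x₀}^q(μ) < ∞; in particular μ' ∈ 𝒫_q(X) and hence μ' = μ, so the stationary measure is unique among all probability measures on X. -/
open MeasureTheory ENNReal Set Metric Filter Topology

noncomputable section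

lemma aux_rpow_add {q : ℝ} (hq : 0 < q) {a b ε : ℝ} (ha : 0 ≤ a) (hb : 0 ≤ b) (hε : 0 < ε) :
    (a + b) ^ q ≤ (1 + ε) ^ q * a ^ q + (1 + ε⁻¹) ^ q * b ^ q := by
  rcases le_or_gt b (ε * a) with h | h
  · have h1 : a + b ≤ (1 + ε) * a := by nlinarith
    calc (a + b) ^ q ≤ ((1 + ε) * a) ^ q :=
          Real.rpow_le_rpow (by positivity) h1 hq.le
      _ = (1 + ε) ^ q * a ^ q := Real.mul_rpow (by positivity) ha
      _ ≤ _ := le_add_of_nonneg_right (by positivity)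
  · have h1 : a + b ≤ (1 + ε⁻¹) * b := by
      have : a ≤ ε⁻¹ * b := by
        rw [le_inv_mul_iff₀ hε]; linarith
      nlinarith
    calc (a + b) ^ q ≤ ((1 + ε⁻¹) * b) ^ q :=
          Real.rpow_le_rpow (by positivity) h1 hq.le
      _ = (1 + ε⁻¹) ^ q * b ^ q := Real.mul_rpow (by positivity) hb
      _ ≤ _ := le_add_of_nonneg_left (by positivity)

lemma aux_stat_lintegral
    {X : Type*} [MeasurableSpace X]
    {I : Type*} [MeasurableSpace I]
    (φ : I → X → X)
    (hmeas : Measurable fun p : I × X => φ p.1 p.2)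
    (η : Measure I) [IsProbabilityMeasure η]
    (μ' : Measure X) [IsProbabilityMeasure μ'] (hstat : dualTransfer φ η μ' = μ')
    (g : X → ℝ≥0∞) (hg : Measurable g) :
    ∫⁻ x, g x ∂μ' = ∫⁻ x, ∫⁻ i, g (φ i x) ∂η ∂μ' := by
  have hφ : ∀ i, Measurable (φ i) := fun i => hmeas.comp (measurable_prodMk_left)
  have hκ : Measurable fun i => μ'.map (φ i) := by
    apply Measure.measurable_of_measurable_coe
    intro s hs
    simp_rw [Measure.map_apply (hφ _) hs]
    have : ∀ i, φ i ⁻¹' s = Prod.mk i ⁻¹' ((fun p : I × X => φ p.1 p.2) ⁻¹' s) := fun i => rfl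
    simp_rw [this]
    exact measurable_measure_prodMk_left (hmeas hs)
  conv_lhs => rw [← hstat]
  rw [dualTransfer, Measure.lintegral_bind hκ.aemeasurable hg.aemeasurable]
  simp_rw [lintegral_map hg (hφ _)]
  rw [lintegral_lintegral_swap]
  exact (hg.comp hmeas).aemeasurable

lemma aux_min_mul {c u w : ℝ≥0∞} (hc : 1 ≤ c) : min (c * u) w ≤ c * min u w := by
  rcases le_total u w with h | h
  · rw [min_eq_left h]; exact min_le_left _ _
  · rw [min_eq_right h]
    exact (min_le_right _ _).trans (le_mul_of_one_le_left zero_le hc)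

lemma aux_min_add {u v w : ℝ≥0∞} : min (u + v) w ≤ min u w + v := by
  calc min (u + v) w ≤ min (u + v) (w + v) := min_le_min le_rfl (self_le_add_right _ _)
    _ = min u w + v := min_add_add_right u w v

lemma aux_isup_min {a : ℝ≥0∞} (ha : a ≠ ∞) : ⨆ m : ℕ, min a (m : ℝ≥0∞) = a := by
  apply le_antisymm (iSup_le fun m => min_le_left _ _)
  obtain ⟨m, hm⟩ := ENNReal.exists_nat_gt ha
  calc a = min a (m : ℝ≥0∞) := (min_eq_left hm.le).symm
    _ ≤ _ := le_iSup (fun m : ℕ => min a (m : ℝ≥0∞)) m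

/-- **Lemma.** Under hypotheses (1) and (2), if `μ` is the unique stationary measure in
`𝒫_q(X)`, then every stationary probability measure `μ'` (not assumed a priori to have
finite `q`-th moment) satisfies `m_{x₀}^q(μ') ≤ m_{x₀}^q(μ) < ∞`; in particular
`μ' ∈ 𝒫_q(X)` and hence `μ' = μ`: the stationary measure is unique among all
probability measures on `X`. -/
theorem stmt4
    {X : Type*} [MetricSpace X] [CompleteSpace X] [TopologicalSpace.SeparableSpace X]
    [MeasurableSpace X] [BorelSpace X]
    {I : Type*} [MeasurableSpace I]
    (φ : I → X → X) (hcont : ∀ i, Continuous (φ i))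
    (hmeas : Measurable fun p : I × X => φ p.1 p.2)
    (η : Measure I) [IsProbabilityMeasure η]
    (x₀ : X) (q A ρ : ℝ) (hq : 0 < q) (hA : 0 < A) (hρ₀ : 0 < ρ) (hρ₁ : ρ < 1)
    (h1 : ∀ x y : X, ∫⁻ i, ENNReal.ofReal (dist (φ i x) (φ i y) ^ q) ∂η
            ≤ ENNReal.ofReal (ρ * dist x y ^ q))
    (h2 : ∫⁻ i, ENNReal.ofReal (dist x₀ (φ i x₀) ^ q) ∂η ≤ ENNReal.ofReal A)
    (μ : Measure X) (hμprob : IsProbabilityMeasure μ)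
    (hμmom : moment q x₀ μ < ∞) (hμstat : dualTransfer φ η μ = μ)
    (hμuniq : ∀ ν : Measure X, IsProbabilityMeasure ν → moment q x₀ ν < ∞ →
      dualTransfer φ η ν = ν → ν = μ) :
    ∀ μ' : Measure X, IsProbabilityMeasure μ' → dualTransfer φ η μ' = μ' →
      moment q x₀ μ' ≤ moment q x₀ μ ∧ moment q x₀ μ' < ∞ ∧ μ' = μ := by
  intro μ' hμ'prob hμ'stat
  -- basic constants
  set δ : ℝ := ρ ^ ((2 * q)⁻¹) with hδdef
  have hδ0 : 0 < δ := Real.rpow_pos_of_pos hρ₀ _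
  have hδ1 : δ < 1 := Real.rpow_lt_one hρ₀.le hρ₁ (by positivity)
  have hδq : δ ^ q = ρ ^ (2⁻¹ : ℝ) := by
    rw [hδdef, ← Real.rpow_mul hρ₀.le]
    congr 1
    field_simp
  set s : ℝ := ρ ^ (2⁻¹ : ℝ) with hsdef
  have hs0 : 0 < s := Real.rpow_pos_of_pos hρ₀ _
  have hs1 : s < 1 := Real.rpow_lt_one hρ₀.le hρ₁ (by norm_num)
  set D : X → ℝ≥0∞ := fun x => ENNReal.ofReal (dist x x₀ ^ q) with hDdef
  have hD : Measurable D := by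
    apply ENNReal.measurable_ofReal.comp
    exact ((Real.continuous_rpow_const hq.le).comp (continuous_id.dist continuous_const)).measurable
  set r : ℝ≥0∞ := ENNReal.ofReal ρ with hrdef
  have hr1 : r < 1 := by rw [hrdef]; exact ENNReal.ofReal_lt_one.mpr hρ₁
  set c : ℕ → ℝ≥0∞ := fun n => ENNReal.ofReal ((1 + δ ^ n) ^ q) with hcdef
  set C : ℕ → ℝ≥0∞ := fun n => ENNReal.ofReal ((1 + (δ ^ n)⁻¹) ^ q) with hCdef
  have hc1 : ∀ n, 1 ≤ c n := by
    intro n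
    rw [hcdef]
    exact ENNReal.one_le_ofReal.mpr (Real.one_le_rpow (by nlinarith [pow_pos hδ0 n]) hq.le)
  set Ae : ℝ≥0∞ := ENNReal.ofReal A with hAedef
  set u : ℕ → ℕ → ℝ≥0∞ := fun n m => ∫⁻ x, min (r ^ n * D x) (m : ℝ≥0∞) ∂μ' with hudef
  have hφx : ∀ x, Measurable fun i => φ i x := fun x =>
    hmeas.comp (measurable_id.prodMk measurable_const)
  -- one-step inequality
  have step : ∀ n m, u n m ≤ c n * u (n + 1) m + C n * (r ^ n * Ae) := by
    intro n m
    have hg : Measurable fun x => min (r ^ n * D x) (m : ℝ≥0∞) :=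
      (hD.const_mul _).min measurable_const
    have hrw := aux_stat_lintegral φ hmeas η μ' hμ'stat _ hg
    rw [hudef]
    dsimp only
    rw [hrw]
    have inner : ∀ x, (∫⁻ i, min (r ^ n * D (φ i x)) (m : ℝ≥0∞) ∂η)
        ≤ c n * min (r ^ (n + 1) * D x) (m : ℝ≥0∞) + C n * (r ^ n * Ae) := by
      intro x
      have pt : ∀ i, min (r ^ n * D (φ i x)) (m : ℝ≥0∞)
          ≤ c n * min (r ^ n * ENNReal.ofReal (dist (φ i x) (φ i x₀) ^ q)) (m : ℝ≥0∞)
            + C n * (r ^ n * ENNReal.ofReal (dist x₀ (φ i x₀) ^ q)) := by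
        intro i
        have htri : dist (φ i x) x₀ ≤ dist (φ i x) (φ i x₀) + dist x₀ (φ i x₀) := by
          calc dist (φ i x) x₀ ≤ dist (φ i x) (φ i x₀) + dist (φ i x₀) x₀ := dist_triangle _ _ _
            _ = _ := by rw [dist_comm (φ i x₀) x₀]
        have h4 : dist (φ i x) x₀ ^ q ≤
            (1 + δ ^ n) ^ q * dist (φ i x) (φ i x₀) ^ q
              + (1 + (δ ^ n)⁻¹) ^ q * dist x₀ (φ i x₀) ^ q :=
          le_trans (Real.rpow_le_rpow dist_nonneg htri hq.le)
            (aux_rpow_add hq dist_nonneg dist_nonneg (pow_pos hδ0 n))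
        have h3 : D (φ i x) ≤ c n * ENNReal.ofReal (dist (φ i x) (φ i x₀) ^ q)
            + C n * ENNReal.ofReal (dist x₀ (φ i x₀) ^ q) := by
          calc D (φ i x) ≤ ENNReal.ofReal ((1 + δ ^ n) ^ q * dist (φ i x) (φ i x₀) ^ q
              + (1 + (δ ^ n)⁻¹) ^ q * dist x₀ (φ i x₀) ^ q) := ENNReal.ofReal_le_ofReal h4
            _ = _ := by
              rw [ENNReal.ofReal_add (by positivity) (by positivity),
                ENNReal.ofReal_mul (by positivity), ENNReal.ofReal_mul (by positivity)]
        have h5 : r ^ n * D (φ i x)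
            ≤ c n * (r ^ n * ENNReal.ofReal (dist (φ i x) (φ i x₀) ^ q))
              + C n * (r ^ n * ENNReal.ofReal (dist x₀ (φ i x₀) ^ q)) := by
          calc r ^ n * D (φ i x)
              ≤ r ^ n * (c n * ENNReal.ofReal (dist (φ i x) (φ i x₀) ^ q)
                + C n * ENNReal.ofReal (dist x₀ (φ i x₀) ^ q)) := mul_le_mul_right h3 _
            _ = _ := by ring
        calc min (r ^ n * D (φ i x)) (m : ℝ≥0∞)
            ≤ min (c n * (r ^ n * ENNReal.ofReal (dist (φ i x) (φ i x₀) ^ q))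
              + C n * (r ^ n * ENNReal.ofReal (dist x₀ (φ i x₀) ^ q))) (m : ℝ≥0∞) :=
              min_le_min h5 le_rfl
          _ ≤ min (c n * (r ^ n * ENNReal.ofReal (dist (φ i x) (φ i x₀) ^ q))) (m : ℝ≥0∞)
              + C n * (r ^ n * ENNReal.ofReal (dist x₀ (φ i x₀) ^ q)) := aux_min_add
          _ ≤ _ := add_le_add_left (aux_min_mul (hc1 n)) _
      have hmi : Measurable fun i =>
          min (r ^ n * ENNReal.ofReal (dist (φ i x) (φ i x₀) ^ q)) (m : ℝ≥0∞) := by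
        apply Measurable.min _ measurable_const
        apply Measurable.const_mul
        apply ENNReal.measurable_ofReal.comp
        exact (Real.continuous_rpow_const hq.le).measurable.comp ((hφx x).dist (hφx x₀))
      have hmi2 : Measurable fun i => ENNReal.ofReal (dist x₀ (φ i x₀) ^ q) := by
        apply ENNReal.measurable_ofReal.comp
        exact (Real.continuous_rpow_const hq.le).measurable.comp (measurable_const.dist (hφx x₀))
      calc (∫⁻ i, min (r ^ n * D (φ i x)) (m : ℝ≥0∞) ∂η)
          ≤ ∫⁻ i, (c n * min (r ^ n * ENNReal.ofReal (dist (φ i x) (φ i x₀) ^ q)) (m : ℝ≥0∞)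
            + C n * (r ^ n * ENNReal.ofReal (dist x₀ (φ i x₀) ^ q))) ∂η := lintegral_mono pt
        _ = c n * ∫⁻ i, min (r ^ n * ENNReal.ofReal (dist (φ i x) (φ i x₀) ^ q)) (m : ℝ≥0∞) ∂η
            + C n * (r ^ n * ∫⁻ i, ENNReal.ofReal (dist x₀ (φ i x₀) ^ q) ∂η) := by
            rw [lintegral_add_left (hmi.const_mul _), lintegral_const_mul _ hmi,
              lintegral_const_mul _ (hmi2.const_mul _), lintegral_const_mul _ hmi2]
        _ ≤ c n * min (r ^ (n + 1) * D x) (m : ℝ≥0∞) + C n * (r ^ n * Ae) := by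
            apply add_le_add
            · apply mul_le_mul_right
              refine le_min ?_ ?_
              · calc (∫⁻ i, min (r ^ n * ENNReal.ofReal (dist (φ i x) (φ i x₀) ^ q))
                    (m : ℝ≥0∞) ∂η)
                    ≤ ∫⁻ i, r ^ n * ENNReal.ofReal (dist (φ i x) (φ i x₀) ^ q) ∂η :=
                      lintegral_mono fun i => min_le_left _ _
                  _ = r ^ n * ∫⁻ i, ENNReal.ofReal (dist (φ i x) (φ i x₀) ^ q) ∂η := by
                      rw [lintegral_const_mul _ (by
                        apply ENNReal.measurable_ofReal.comp
                        exact (Real.continuous_rpow_const hq.le).measurable.comp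
                          ((hφx x).dist (hφx x₀)))]
                  _ ≤ r ^ n * ENNReal.ofReal (ρ * dist x x₀ ^ q) := mul_le_mul_right (h1 x x₀) _
                  _ = r ^ (n + 1) * D x := by
                      rw [ENNReal.ofReal_mul hρ₀.le, pow_succ]; ring
              · calc _ ≤ ∫⁻ _ : I, (m : ℝ≥0∞) ∂η := lintegral_mono fun i => min_le_right _ _
                  _ = (m : ℝ≥0∞) := by simp
            · exact mul_le_mul_right (mul_le_mul_right h2 _) _
    calc (∫⁻ x, ∫⁻ i, min (r ^ n * D (φ i x)) (m : ℝ≥0∞) ∂η ∂μ')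
        ≤ ∫⁻ x, (c n * min (r ^ (n + 1) * D x) (m : ℝ≥0∞) + C n * (r ^ n * Ae)) ∂μ' :=
          lintegral_mono inner
      _ = c n * u (n + 1) m + C n * (r ^ n * Ae) := by
          rw [lintegral_add_right _ measurable_const,
            lintegral_const_mul _ ((hD.const_mul _).min measurable_const), lintegral_const,
            measure_univ, mul_one]
  -- iteration
  have iter : ∀ n m, u 0 m ≤ (∏ k ∈ Finset.range n, c k) * u n m
      + ∑ k ∈ Finset.range n, (∏ j ∈ Finset.range k, c j) * (C k * (r ^ k * Ae)) := by
    intro n m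
    induction n with
    | zero => simp
    | succ n ih =>
      calc u 0 m ≤ (∏ k ∈ Finset.range n, c k) * u n m
          + ∑ k ∈ Finset.range n, (∏ j ∈ Finset.range k, c j) * (C k * (r ^ k * Ae)) := ih
        _ ≤ (∏ k ∈ Finset.range n, c k) * (c n * u (n + 1) m + C n * (r ^ n * Ae))
          + ∑ k ∈ Finset.range n, (∏ j ∈ Finset.range k, c j) * (C k * (r ^ k * Ae)) :=
            add_le_add_left (mul_le_mul_right (step n m) _) _
        _ = _ := by
            rw [Finset.prod_range_succ, Finset.sum_range_succ]; ring
  -- bound on products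
  set P : ℝ≥0∞ := ENNReal.ofReal (Real.exp ((1 - δ)⁻¹) ^ q) with hPdef
  have hPtop : P ≠ ∞ := ENNReal.ofReal_ne_top
  have hP : ∀ n, (∏ k ∈ Finset.range n, c k) ≤ P := by
    intro n
    rw [hcdef, ← ENNReal.ofReal_prod_of_nonneg (fun k _ => by positivity), hPdef]
    apply ENNReal.ofReal_le_ofReal
    rw [Real.finset_prod_rpow _ _ (fun k _ => by positivity)]
    apply Real.rpow_le_rpow (by positivity) _ hq.le
    calc (∏ k ∈ Finset.range n, (1 + δ ^ k))
        ≤ ∏ k ∈ Finset.range n, Real.exp (δ ^ k) := by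
          apply Finset.prod_le_prod (fun k _ => by positivity)
          intro k _
          have := Real.add_one_le_exp (δ ^ k)
          linarith
      _ = Real.exp (∑ k ∈ Finset.range n, δ ^ k) := (Real.exp_sum _ _).symm
      _ ≤ Real.exp ((1 - δ)⁻¹) := by
          apply Real.exp_le_exp.mpr
          calc (∑ k ∈ Finset.range n, δ ^ k) ≤ ∑' k : ℕ, δ ^ k :=
              (summable_geometric_of_lt_one hδ0.le hδ1).sum_le_tsum _ (fun k _ => by positivity)
            _ = (1 - δ)⁻¹ := tsum_geometric_of_lt_one hδ0.le hδ1
  -- bound on the series terms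
  have hterm : ∀ k, C k * r ^ k ≤ ENNReal.ofReal (2 ^ q) * (ENNReal.ofReal s) ^ k := by
    intro k
    rw [hCdef, hrdef, ← ENNReal.ofReal_pow hρ₀.le, ← ENNReal.ofReal_mul (by positivity),
      ← ENNReal.ofReal_pow hs0.le, ← ENNReal.ofReal_mul (by positivity)]
    apply ENNReal.ofReal_le_ofReal
    have hδk : δ ^ k ≤ 1 := pow_le_one₀ hδ0.le hδ1.le
    have hδkq : (δ ^ k : ℝ) ^ q = s ^ k := by
      rw [← Real.rpow_natCast δ k, ← Real.rpow_mul hδ0.le, mul_comm, Real.rpow_mul hδ0.le,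
        hδq, Real.rpow_natCast]
    have h6 : (1 + (δ ^ k)⁻¹) ^ q ≤ 2 ^ q * (s ^ k)⁻¹ := by
      calc (1 + (δ ^ k)⁻¹) ^ q ≤ (2 * (δ ^ k)⁻¹) ^ q := by
            apply Real.rpow_le_rpow (by positivity) _ hq.le
            have : (1 : ℝ) ≤ (δ ^ k)⁻¹ := (one_le_inv₀ (pow_pos hδ0 k)).mpr hδk
            linarith
        _ = 2 ^ q * ((δ ^ k)⁻¹) ^ q := Real.mul_rpow (by norm_num) (by positivity)
        _ = 2 ^ q * (s ^ k)⁻¹ := by rw [Real.inv_rpow (by positivity : (0:ℝ) ≤ δ ^ k), hδkq]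
    have hρk : (ρ : ℝ) ^ k = s ^ k * s ^ k := by
      rw [hsdef, ← mul_pow, ← Real.rpow_add hρ₀]
      norm_num
    calc (1 + (δ ^ k)⁻¹) ^ q * ρ ^ k ≤ 2 ^ q * (s ^ k)⁻¹ * ρ ^ k :=
          mul_le_mul_of_nonneg_right h6 (by positivity)
      _ = 2 ^ q * s ^ k := by
          rw [hρk]
          field_simp
  -- the uniform bound B
  set B : ℝ≥0∞ := P * (ENNReal.ofReal (2 ^ q) * Ae) * (1 - ENNReal.ofReal s)⁻¹ with hBdef
  have hBtop : B ≠ ∞ := by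
    rw [hBdef]
    apply ENNReal.mul_ne_top (by
      exact ENNReal.mul_ne_top hPtop (ENNReal.mul_ne_top ENNReal.ofReal_ne_top
        ENNReal.ofReal_ne_top))
    rw [Ne, ENNReal.inv_eq_top]
    intro h
    have hlt : ENNReal.ofReal s < 1 := ENNReal.ofReal_lt_one.mpr hs1
    exact absurd h (tsub_pos_iff_lt.mpr hlt).ne'
  have hsum : ∀ n, (∑ k ∈ Finset.range n,
      (∏ j ∈ Finset.range k, c j) * (C k * (r ^ k * Ae))) ≤ B := by
    intro n
    calc (∑ k ∈ Finset.range n, (∏ j ∈ Finset.range k, c j) * (C k * (r ^ k * Ae)))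
        ≤ ∑ k ∈ Finset.range n,
            P * (ENNReal.ofReal (2 ^ q) * Ae) * (ENNReal.ofReal s) ^ k := by
          apply Finset.sum_le_sum
          intro k _
          calc (∏ j ∈ Finset.range k, c j) * (C k * (r ^ k * Ae))
              ≤ P * (C k * (r ^ k * Ae)) := mul_le_mul_left (hP k) _
            _ = P * ((C k * r ^ k) * Ae) := by ring
            _ ≤ P * ((ENNReal.ofReal (2 ^ q) * (ENNReal.ofReal s) ^ k) * Ae) :=
                mul_le_mul_right (mul_le_mul_left (hterm k) _) _
            _ = P * (ENNReal.ofReal (2 ^ q) * Ae) * (ENNReal.ofReal s) ^ k := by ring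
      _ = P * (ENNReal.ofReal (2 ^ q) * Ae) * ∑ k ∈ Finset.range n, (ENNReal.ofReal s) ^ k := by
          rw [Finset.mul_sum]
      _ ≤ P * (ENNReal.ofReal (2 ^ q) * Ae) * ∑' k : ℕ, (ENNReal.ofReal s) ^ k :=
          mul_le_mul_right (ENNReal.sum_le_tsum _) _
      _ = B := by rw [ENNReal.tsum_geometric, hBdef]
  -- the truncated moments are uniformly bounded by B
  have hU0 : ∀ m : ℕ, u 0 m ≤ B := by
    intro m
    have hub : ∀ n, u 0 m ≤ P * u n m + B := by
      intro n
      calc u 0 m ≤ (∏ k ∈ Finset.range n, c k) * u n m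
          + ∑ k ∈ Finset.range n, (∏ j ∈ Finset.range k, c j) * (C k * (r ^ k * Ae)) :=
            iter n m
        _ ≤ P * u n m + B := add_le_add (mul_le_mul_left (hP n) _) (hsum n)
    have hlim : Tendsto (fun n => u n m) atTop (𝓝 0) := by
      have h0 : (0 : ℝ≥0∞) = ∫⁻ _ : X, (0 : ℝ≥0∞) ∂μ' := by simp
      rw [hudef]
      dsimp only
      rw [h0]
      apply tendsto_lintegral_of_dominated_convergence (fun _ => (m : ℝ≥0∞))
        (fun n => (hD.const_mul _).min measurable_const)
        (fun n => Eventually.of_forall fun x => min_le_right _ _)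
        (by simp)
      apply Eventually.of_forall
      intro x
      have h7 : Tendsto (fun n => r ^ n * D x) atTop (𝓝 0) := by
        have := ENNReal.Tendsto.mul_const
          (ENNReal.tendsto_pow_atTop_nhds_zero_of_lt_one hr1)
          (Or.inr (ENNReal.ofReal_ne_top : D x ≠ ∞))
        simpa using this
      exact tendsto_of_tendsto_of_tendsto_of_le_of_le tendsto_const_nhds h7
        (fun n => zero_le) (fun n => min_le_left _ _)
    have hlim2 : Tendsto (fun n => P * u n m + B) atTop (𝓝 B) := by
      have h8 : Tendsto (fun n => P * u n m + B) atTop (𝓝 (P * 0 + B)) :=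
        (ENNReal.Tendsto.const_mul hlim (Or.inr hPtop)).add tendsto_const_nhds
      simpa using h8
    exact ge_of_tendsto' hlim2 hub
  -- conclude finiteness of the moment of μ'
  have hmom' : moment q x₀ μ' ≤ B := by
    rw [moment]
    calc (∫⁻ x, ENNReal.ofReal (dist x x₀ ^ q) ∂μ')
        = ∫⁻ x, ⨆ m : ℕ, min (D x) (m : ℝ≥0∞) ∂μ' :=
          lintegral_congr fun x => (aux_isup_min ENNReal.ofReal_ne_top).symm
      _ = ⨆ m : ℕ, ∫⁻ x, min (D x) (m : ℝ≥0∞) ∂μ' := by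
          apply lintegral_iSup (fun m => hD.min measurable_const)
          intro m m' hmm x
          exact min_le_min le_rfl (by exact_mod_cast Nat.cast_le.mpr hmm)
      _ ≤ B := by
          apply iSup_le
          intro m
          have := hU0 m
          rw [hudef] at this
          simpa using this
  have hfin : moment q x₀ μ' < ∞ := lt_of_le_of_lt hmom' (lt_top_iff_ne_top.mpr hBtop)
  have heq : μ' = μ := hμuniq μ' hμ'prob hfin hμ'stat
  exact ⟨by rw [heq], hfin, heq⟩

end
end

section
/- Let (Φ,η) be an IFS on a complete separable metric space (X,d) whose maps φ_i are all Lipschitz. If ∫ log Lip(φ_i) dη(i) < 0 and there exists p > 0 with ∫ Lip(φ_i)^p dη(i) < ∞, then there exist q > 0 and ρ ∈ (0,1) such that ∫ d(φ_i(x),φ_i(y))^q dη(i) ≤ ρ·d(x,y)^q for all x,y ∈ X. -/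
open MeasureTheory ENNReal NNReal Set Metric Filter Topology

noncomputable section

/-- The Lipschitz constant of a map `f : X → X`, i.e. the least `C ≥ 0` such that
`d(f(x),f(y)) ≤ C·d(x,y)` for all `x, y`. -/
def lipConst {X : Type*} [MetricSpace X] (f : X → X) : ℝ :=
  sInf {C : ℝ | 0 ≤ C ∧ ∀ x y : X, dist (f x) (f y) ≤ C * dist x y}

private lemma exp_taylor2 (x : ℝ) (hx : 0 ≤ x) :
    Real.exp x ≤ 1 + x + x ^ 2 * Real.exp x := by
  have h1 : (-x) + 1 ≤ Real.exp (-x) := Real.add_one_le_exp (-x)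
  have h2 : Real.exp (-x) * Real.exp x = 1 := by
    rw [← Real.exp_add]; simp
  have h3 : Real.exp x ≤ 1 + x * Real.exp x := by
    nlinarith [mul_le_mul_of_nonneg_right h1 (Real.exp_pos x).le]
  have h4 : x * Real.exp x ≤ x * (1 + x * Real.exp x) :=
    mul_le_mul_of_nonneg_left h3 hx
  nlinarith [h3, h4]

private lemma sq_le_exp_aux (p w : ℝ) (hp : 0 < p) (hw : 0 ≤ w) :
    w ^ 2 ≤ 16 / p ^ 2 * Real.exp (p * w / 2) := by
  have h1 : p * w / 4 + 1 ≤ Real.exp (p * w / 4) := Real.add_one_le_exp _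
  have h2 : Real.exp (p * w / 4) * Real.exp (p * w / 4) = Real.exp (p * w / 2) := by
    rw [← Real.exp_add]; ring_nf
  have h0 : 0 ≤ p * w / 4 := by positivity
  have h3 : (1 + p * w / 4) ^ 2 ≤ Real.exp (p * w / 2) := by
    nlinarith [h1, h2, h0]
  have hp2 : (0:ℝ) < p ^ 2 := by positivity
  rw [div_mul_eq_mul_div, le_div_iff₀ hp2]
  nlinarith [h3, mul_nonneg hp.le hw]

private lemma exp_neg_add_le (x : ℝ) (hx : 0 ≤ x) :
    Real.exp (-x) + x ≤ 1 + x ^ 2 := by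
  have h1 : x + 1 ≤ Real.exp x := Real.add_one_le_exp x
  have h2 : Real.exp (-x) * Real.exp x = 1 := by
    rw [← Real.exp_add]; simp
  have h3 : (-x) + 1 ≤ Real.exp (-x) := Real.add_one_le_exp (-x)
  have h4 : Real.exp (-x) * (x + 1) ≤ 1 := by
    calc Real.exp (-x) * (x + 1) ≤ Real.exp (-x) * Real.exp x :=
          mul_le_mul_of_nonneg_left h1 (Real.exp_pos (-x)).le
      _ = 1 := h2
  nlinarith [h4, h3, mul_le_mul_of_nonneg_left h3 hx]

private lemma pointwise_bound (p c q w t : ℝ) (hp : 0 < p) (hc : 0 ≤ c) (hq : 0 < q)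
    (hqp : q ≤ p / 2) (ht0 : 0 ≤ t) (htc : t ≤ c) (htw : t ≤ max (-w) 0) :
    Real.exp (q * w) + q * t
      ≤ 1 + q * max w 0 + q ^ 2 * (16 / p ^ 2 + c ^ 2) * (1 + Real.exp (p * w)) := by
  rcases le_or_gt 0 w with hw | hw
  · -- w ≥ 0, so t = 0
    have hmaxw : max (-w) 0 = 0 := max_eq_right (by linarith)
    have htz : t = 0 := le_antisymm (by rw [hmaxw] at htw; exact htw) ht0
    have hmax : max w 0 = w := max_eq_left hw
    have hqw : 0 ≤ q * w := by positivity
    have h1 : Real.exp (q * w) ≤ 1 + q * w + (q * w) ^ 2 * Real.exp (q * w) :=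
      exp_taylor2 _ hqw
    have h2 : w ^ 2 ≤ 16 / p ^ 2 * Real.exp (p * w / 2) := sq_le_exp_aux p w hp hw
    have h3 : Real.exp (q * w) ≤ Real.exp (p * w / 2) := by
      apply Real.exp_le_exp.2; nlinarith
    have h4 : Real.exp (p * w / 2) * Real.exp (p * w / 2) = Real.exp (p * w) := by
      rw [← Real.exp_add]; ring_nf
    have h5 : w ^ 2 * Real.exp (q * w) ≤ 16 / p ^ 2 * Real.exp (p * w) := by
      calc w ^ 2 * Real.exp (q * w)
          ≤ (16 / p ^ 2 * Real.exp (p * w / 2)) * Real.exp (p * w / 2) := by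
            apply mul_le_mul h2 h3 (Real.exp_pos _).le
            positivity
        _ = 16 / p ^ 2 * Real.exp (p * w) := by rw [mul_assoc, h4]
    have h6 : (q * w) ^ 2 * Real.exp (q * w) ≤ q ^ 2 * (16 / p ^ 2 * Real.exp (p * w)) := by
      have := mul_le_mul_of_nonneg_left h5 (sq_nonneg q)
      calc (q * w) ^ 2 * Real.exp (q * w) = q ^ 2 * (w ^ 2 * Real.exp (q * w)) := by ring
        _ ≤ q ^ 2 * (16 / p ^ 2 * Real.exp (p * w)) := this
    have hexp : 0 < Real.exp (p * w) := Real.exp_pos _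
    have hp2 : (0:ℝ) < 16 / p ^ 2 := by positivity
    rw [htz, hmax]
    nlinarith [h1, h6, sq_nonneg q, sq_nonneg c, mul_nonneg (mul_nonneg (sq_nonneg q) (sq_nonneg c)) hexp.le, mul_nonneg (mul_nonneg (sq_nonneg q) (sq_nonneg c)) (le_of_lt hexp), mul_nonneg (mul_nonneg (sq_nonneg q) hp2.le) hexp.le, mul_nonneg (sq_nonneg q) (sq_nonneg c)]
  · -- w < 0
    have hmax : max w 0 = 0 := max_eq_right hw.le
    have htw' : t ≤ -w := by
      rw [max_eq_left (by linarith : (0:ℝ) ≤ -w)] at htw; exact htw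
    have h1 : Real.exp (q * w) ≤ Real.exp (-(q * t)) := by
      apply Real.exp_le_exp.2; nlinarith
    have h2 : Real.exp (-(q * t)) + q * t ≤ 1 + (q * t) ^ 2 :=
      exp_neg_add_le (q * t) (by positivity)
    have h3 : (q * t) ^ 2 ≤ q ^ 2 * c ^ 2 := by nlinarith [mul_le_mul htc htc ht0 hc]
    have hexp : 0 < Real.exp (p * w) := Real.exp_pos _
    have hp2 : (0:ℝ) < 16 / p ^ 2 := by positivity
    rw [hmax]
    nlinarith [h1, h2, h3, mul_nonneg (mul_nonneg (sq_nonneg q) (sq_nonneg c)) hexp.le, mul_nonneg (mul_nonneg (sq_nonneg q) hp2.le) hexp.le, mul_nonneg (sq_nonneg q) hp2.le]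

/-- **Lemma.** If `∫ log Lip(φ_i) dη(i) < 0` (possibly `-∞`, expressed here by saying
that the upper integral of the positive part of the log is strictly smaller than the
upper integral of its negative part) and `∫ Lip(φ_i)^p dη(i) < ∞` for some `p > 0`,
then there are `q > 0` and `ρ ∈ (0,1)` such that hypothesis (1) holds:
`∫ d(φ_i(x),φ_i(y))^q dη(i) ≤ ρ·d(x,y)^q` for all `x, y`. -/
theorem stmt7
    {X : Type*} [MetricSpace X] [CompleteSpace X] [TopologicalSpace.SeparableSpace X]
    [MeasurableSpace X] [BorelSpace X]
    {I : Type*} [MeasurableSpace I]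
    (φ : I → X → X) (hlip : ∀ i, ∃ C : ℝ≥0, LipschitzWith C (φ i))
    (η : Measure I) [IsProbabilityMeasure η]
    (hlog : ∫⁻ i, ENNReal.ofReal (Real.log (lipConst (φ i))) ∂η
        < ∫⁻ i, ENNReal.ofReal (-(Real.log (lipConst (φ i)))) ∂η)
    (hmom : ∃ p : ℝ, 0 < p ∧ ∫⁻ i, ENNReal.ofReal (lipConst (φ i) ^ p) ∂η < ∞) :
    ∃ q : ℝ, 0 < q ∧ ∃ ρ : ℝ, 0 < ρ ∧ ρ < 1 ∧
      ∀ x y : X, ∫⁻ i, ENNReal.ofReal (dist (φ i x) (φ i y) ^ q) ∂η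
        ≤ ENNReal.ofReal (ρ * dist x y ^ q) := by
  classical
  set L : I → ℝ := fun i => lipConst (φ i) with hLdef
  have hSne : ∀ i, {C : ℝ | 0 ≤ C ∧ ∀ x y : X, dist (φ i x) (φ i y) ≤ C * dist x y}.Nonempty := by
    intro i; obtain ⟨C, hC⟩ := hlip i
    exact ⟨C, C.2, fun x y => hC.dist_le_mul x y⟩
  have hL0 : ∀ i, 0 ≤ L i := fun i => le_csInf (hSne i) fun C hC => hC.1
  have hLd : ∀ i (x y : X), dist (φ i x) (φ i y) ≤ L i * dist x y := by
    intro i x y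
    rcases eq_or_lt_of_le (dist_nonneg : (0:ℝ) ≤ dist x y) with h0 | h0
    · have hxy : x = y := by rw [← dist_le_zero]; exact le_of_eq h0.symm
      subst hxy; simp
    · rw [← div_le_iff₀ h0]
      exact le_csInf (hSne i) fun C hC => (div_le_iff₀ h0).2 (hC.2 x y)
  obtain ⟨p, hp, hmomK⟩ := hmom
  set A := ∫⁻ i, ENNReal.ofReal (Real.log (L i)) ∂η with hAdef
  set K := ∫⁻ i, ENNReal.ofReal (L i ^ p) ∂η with hKdef
  have hAne : A ≠ ⊤ := hlog.ne_top
  have hKne : K ≠ ⊤ := hmomK.ne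
  -- extract a bounded simple minorant of the negative part of the log
  rw [lintegral_eq_nnreal] at hlog
  rw [lt_iSup_iff] at hlog
  obtain ⟨ψ, hψ⟩ := hlog
  rw [lt_iSup_iff] at hψ
  obtain ⟨hψ_le, hψA⟩ := hψ
  set T := ∫⁻ i, ((ψ i : ℝ≥0∞)) ∂η with hTdef
  have hT_eq : (MeasureTheory.SimpleFunc.map ofNNReal ψ).lintegral η = T := by
    rw [← MeasureTheory.SimpleFunc.lintegral_eq_lintegral]
    exact lintegral_congr fun i => by simp
  have hAT : A < T := by rwa [hT_eq] at hψA
  obtain ⟨c, hc⟩ := ψ.exists_forall_le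
  have hTc : T ≤ (c : ℝ≥0∞) := by
    calc T ≤ ∫⁻ _, (c : ℝ≥0∞) ∂η := lintegral_mono fun i => ENNReal.coe_le_coe.2 (hc i)
      _ = (c : ℝ≥0∞) := by simp
  have hT_ne : T ≠ ⊤ := (lt_of_le_of_lt hTc ENNReal.coe_lt_top).ne
  -- real constants
  set a0 : ℝ := A.toReal with ha0def
  set Tr : ℝ := T.toReal with hTrdef
  set Kr : ℝ := K.toReal with hKrdef
  have hKr0 : 0 ≤ Kr := ENNReal.toReal_nonneg
  have ha00 : 0 ≤ a0 := ENNReal.toReal_nonneg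
  set δ : ℝ := Tr - a0 with hδdef
  set C : ℝ := 16 / p ^ 2 + (c : ℝ) ^ 2 with hCdef
  set M : ℝ := C * (2 + Kr) with hMdef
  set q : ℝ := min (p / 2) (min (δ / (2 * M)) (1 / δ)) with hqdef
  set ρ : ℝ := 1 - q * δ / 2 with hρdef
  clear_value ρ q M C δ Kr Tr a0
  have hδ0 : 0 < δ := by
    have := (ENNReal.toReal_lt_toReal hAne hT_ne).2 hAT
    rw [hδdef, ha0def, hTrdef]
    linarith
  have hC0 : 0 < C := by rw [hCdef]; positivity
  have hM0 : 0 < M := by rw [hMdef]; nlinarith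
  have hq0 : 0 < q := by
    rw [hqdef]
    exact lt_min (by positivity)
      (lt_min (div_pos hδ0 (by linarith)) (div_pos one_pos hδ0))
  have hqp : q ≤ p / 2 := by rw [hqdef]; exact min_le_left _ _
  have hqM : q * M ≤ δ / 2 := by
    have h1 : q ≤ δ / (2 * M) := by
      rw [hqdef]; exact le_trans (min_le_right _ _) (min_le_left _ _)
    rw [le_div_iff₀ (by linarith : (0:ℝ) < 2 * M)] at h1
    nlinarith
  have hqδ : q * δ ≤ 1 := by
    have h1 : q ≤ 1 / δ := by
      rw [hqdef]; exact le_trans (min_le_right _ _) (min_le_right _ _)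
    rw [le_div_iff₀ hδ0] at h1
    linarith
  have hρ0 : 0 < ρ := by rw [hρdef]; linarith
  have hρ1 : ρ < 1 := by
    rw [hρdef]
    have : 0 < q * δ := mul_pos hq0 hδ0
    linarith
  refine ⟨q, hq0, ρ, hρ0, hρ1, ?_⟩
  -- the key integral bound for the Lipschitz constants
  have hkey : ∫⁻ i, ENNReal.ofReal (L i ^ q) ∂η ≤ ENNReal.ofReal ρ := by
    rw [lintegral_eq_nnreal]
    refine iSup₂_le fun σ hσ => ?_
    -- set up measurable real functions
    set t : I → ℝ := fun i => ((ψ i : ℝ)) with htdef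
    set u : I → ℝ := fun i => ((σ i : ℝ)) ^ (1 / q) with hudef
    set v : I → ℝ := fun i => max (u i) (Real.exp (-(t i))) with hvdef
    set w : I → ℝ := fun i => Real.log (v i) with hwdef
    have hueq : ∀ i, u i = ((σ i : ℝ)) ^ (1 / q) := fun _ => rfl
    have hteq : ∀ i, t i = ((ψ i : ℝ)) := fun _ => rfl
    have hveq : ∀ i, v i = max (u i) (Real.exp (-(t i))) := fun _ => rfl
    have hweq : ∀ i, w i = Real.log (v i) := fun _ => rfl
    have hmeas : ∀ g : ℝ≥0 × ℝ≥0 → ℝ, Measurable fun i => g (σ i, ψ i) := by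
      intro g
      have := ((σ.pair ψ).map g).measurable
      exact this
    have hw_m : Measurable w :=
      hmeas fun s => Real.log (max (((s.1 : ℝ)) ^ (1 / q)) (Real.exp (-(s.2 : ℝ))))
    have ht_m : Measurable t := measurable_coe_nnreal_real.comp ψ.measurable
    have ht0 : ∀ i, 0 ≤ t i := fun i => (ψ i).coe_nonneg
    have htc : ∀ i, t i ≤ (c : ℝ) := fun i => NNReal.coe_le_coe.2 (hc i)
    have hu0 : ∀ i, 0 ≤ u i := fun i => Real.rpow_nonneg (σ i).coe_nonneg _
    have huσ : ∀ i, u i ^ q = ((σ i : ℝ)) := by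
      intro i
      rw [hueq i, ← Real.rpow_mul (σ i).coe_nonneg, one_div_mul_cancel hq0.ne', Real.rpow_one]
    have huL : ∀ i, u i ≤ L i := by
      intro i
      have h2 : ENNReal.ofReal ((σ i : ℝ)) ≤ ENNReal.ofReal (L i ^ q) := by
        rw [ENNReal.ofReal_coe_nnreal]; exact hσ i
      have h1 : ((σ i : ℝ)) ≤ L i ^ q :=
        (ENNReal.ofReal_le_ofReal_iff (Real.rpow_nonneg (hL0 i) q)).1 h2
      calc u i = ((σ i : ℝ)) ^ (1 / q) := rfl
        _ ≤ (L i ^ q) ^ (1 / q) := Real.rpow_le_rpow (σ i).coe_nonneg h1 (by positivity)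
        _ = L i := by
            rw [← Real.rpow_mul (hL0 i), mul_one_div_cancel hq0.ne', Real.rpow_one]
    have hvpos : ∀ i, 0 < v i := fun i => lt_of_lt_of_le (Real.exp_pos _) (le_max_right _ _)
    -- (W2) t ≤ max (-w) 0
    have htw : ∀ i, t i ≤ max (-(w i)) 0 := by
      intro i
      rcases eq_or_lt_of_le (ht0 i) with h0 | h0
      · rw [← h0]; exact le_max_right _ _
      · have hψi : ENNReal.ofReal (t i) ≤ ENNReal.ofReal (-(Real.log (L i))) := by
          rw [hteq i, ENNReal.ofReal_coe_nnreal]; exact hψ_le i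
        have h1 : t i ≤ -(Real.log (L i)) := by
          rcases ENNReal.ofReal_le_ofReal_iff'.1 hψi with h | h
          · exact h
          · linarith
        have hLpos : 0 < L i := by
          rcases eq_or_lt_of_le (hL0 i) with h | h
          · exfalso; rw [← h] at h1; simp [Real.log_zero] at h1; linarith
          · exact h
        have hLle : L i ≤ Real.exp (-(t i)) := by
          rw [← Real.exp_log hLpos]
          exact Real.exp_le_exp.2 (by linarith)
        have hvi : v i = Real.exp (-(t i)) := max_eq_right (le_trans (huL i) hLle)
        have hwi : w i = -(t i) := by rw [hweq i, hvi, Real.log_exp]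
        rw [hwi, neg_neg]
        exact le_max_left _ _
    -- (W1) positive part of log
    have hw_le : ∀ i, ENNReal.ofReal (w i) ≤ ENNReal.ofReal (Real.log (L i)) := by
      intro i
      rcases le_or_gt (v i) 1 with h1 | h1
      · have hw0 : w i ≤ 0 := Real.log_nonpos (hvpos i).le h1
        rw [ENNReal.ofReal_eq_zero.2 hw0]
        exact zero_le
      · have hexp1 : Real.exp (-(t i)) ≤ 1 := Real.exp_le_one_iff.2 (by linarith [ht0 i])
        have hvu : v i = u i := by
          rw [hveq i]
          rcases max_cases (u i) (Real.exp (-(t i))) with ⟨h, _⟩ | ⟨h, _⟩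
          · exact h
          · exfalso; rw [hveq i, h] at h1; linarith
        have hupos : 0 < u i := by rw [← hvu]; exact hvpos i
        have : w i ≤ Real.log (L i) := by
          rw [hweq i, hvu]
          exact Real.log_le_log hupos (huL i)
        exact ENNReal.ofReal_le_ofReal this
    -- (W3) moment bound
    have hexp_p : ∀ i, Real.exp (p * w i) ≤ L i ^ p + 1 := by
      intro i
      have h1 : Real.exp (p * w i) = v i ^ p := by
        rw [Real.rpow_def_of_pos (hvpos i), mul_comm]
      rw [h1]
      rcases max_cases (u i) (Real.exp (-(t i))) with ⟨hv, _⟩ | ⟨hv, hv2⟩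
      · have hvi : v i = u i := by rw [hveq i]; exact hv
        rw [hvi]
        have : u i ^ p ≤ L i ^ p := Real.rpow_le_rpow (hu0 i) (huL i) hp.le
        linarith
      · have hvi : v i = Real.exp (-(t i)) := by rw [hveq i]; exact hv
        have hv1 : v i ≤ 1 := by rw [hvi]; exact Real.exp_le_one_iff.2 (by linarith [ht0 i])
        have : v i ^ p ≤ 1 := Real.rpow_le_one (hvpos i).le hv1 hp.le
        have hLp : 0 ≤ L i ^ p := Real.rpow_nonneg (hL0 i) p
        linarith
    -- (W4) the simple function is dominated
    have hσ_le : ∀ i, ((σ i : ℝ≥0∞)) ≤ ENNReal.ofReal (Real.exp (q * w i)) := by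
      intro i
      have h1 : Real.exp (q * w i) = v i ^ q := by
        rw [Real.rpow_def_of_pos (hvpos i), mul_comm]
      have h2 : u i ^ q ≤ v i ^ q :=
        Real.rpow_le_rpow (hu0 i) (le_max_left _ _) hq0.le
      calc ((σ i : ℝ≥0∞)) = ENNReal.ofReal (u i ^ q) := by
            rw [huσ i, ENNReal.ofReal_coe_nnreal]
        _ ≤ ENNReal.ofReal (v i ^ q) := ENNReal.ofReal_le_ofReal h2
        _ = ENNReal.ofReal (Real.exp (q * w i)) := by rw [h1]
    -- pointwise real inequality
    have hkey_pt : ∀ i, Real.exp (q * w i) + q * t i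
        ≤ 1 + q * max (w i) 0 + q ^ 2 * C * (1 + Real.exp (p * w i)) := by
      intro i
      rw [hCdef]
      exact pointwise_bound p (c : ℝ) q (w i) (t i) hp c.2 hq0 hqp (ht0 i) (htc i) (htw i)
    -- integrate
    have hF_m : Measurable fun i => ENNReal.ofReal (Real.exp (q * w i)) :=
      (Real.measurable_exp.comp (hw_m.const_mul q)).ennreal_ofReal
    have hG_m : Measurable fun i => (ENNReal.ofReal q) * ((ψ i : ℝ≥0∞)) :=
      (measurable_coe_nnreal_ennreal.comp ψ.measurable).const_mul _
    have hmaxw_m : Measurable fun i => ENNReal.ofReal (max (w i) 0) :=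
      (hw_m.max measurable_const).ennreal_ofReal
    have hexp_pm : Measurable fun i => ENNReal.ofReal (Real.exp (p * w i)) :=
      (Real.measurable_exp.comp (hw_m.const_mul p)).ennreal_ofReal
    set F := fun i => ENNReal.ofReal (Real.exp (q * w i)) with hFdef
    set X := ∫⁻ i, F i ∂η with hXdef
    -- main integrated inequality
    have main : X + ENNReal.ofReal q * T
        ≤ 1 + ENNReal.ofReal q * A + ENNReal.ofReal (q ^ 2 * C) * (1 + (K + 1)) := by
      have step1 : X + ENNReal.ofReal q * T
          = ∫⁻ i, (F i + ENNReal.ofReal q * ((ψ i : ℝ≥0∞))) ∂η := by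
        rw [lintegral_add_right _ hG_m, lintegral_const_mul' _ _ ENNReal.ofReal_ne_top]
      have step2 : ∀ i, F i + ENNReal.ofReal q * ((ψ i : ℝ≥0∞))
          ≤ 1 + ENNReal.ofReal q * ENNReal.ofReal (max (w i) 0)
            + ENNReal.ofReal (q ^ 2 * C) * (1 + ENNReal.ofReal (Real.exp (p * w i))) := by
        intro i
        have lhs_eq : F i + ENNReal.ofReal q * ((ψ i : ℝ≥0∞))
            = ENNReal.ofReal (Real.exp (q * w i) + q * t i) := by
          rw [ENNReal.ofReal_add (Real.exp_pos _).le (mul_nonneg hq0.le (ht0 i))]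
          congr 1
          rw [ENNReal.ofReal_mul hq0.le, htdef, ENNReal.ofReal_coe_nnreal]
        have rhs_eq : (1 : ℝ≥0∞) + ENNReal.ofReal q * ENNReal.ofReal (max (w i) 0)
            + ENNReal.ofReal (q ^ 2 * C) * (1 + ENNReal.ofReal (Real.exp (p * w i)))
            = ENNReal.ofReal (1 + q * max (w i) 0 + q ^ 2 * C * (1 + Real.exp (p * w i))) := by
          have hqmax : (0:ℝ) ≤ q * max (w i) 0 := mul_nonneg hq0.le (le_max_right _ _)
          have hqC : (0:ℝ) ≤ q ^ 2 * C := mul_nonneg (sq_nonneg q) hC0.le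
          have hexp1 : (0:ℝ) ≤ 1 + Real.exp (p * w i) := by positivity
          rw [ENNReal.ofReal_add (by linarith : (0:ℝ) ≤ 1 + q * max (w i) 0)
              (mul_nonneg hqC hexp1),
            ENNReal.ofReal_add (by norm_num : (0:ℝ) ≤ 1) hqmax,
            ENNReal.ofReal_mul hq0.le,
            ENNReal.ofReal_mul hqC,
            ENNReal.ofReal_add (by norm_num : (0:ℝ) ≤ 1) (Real.exp_pos _).le]
          simp
        rw [lhs_eq, rhs_eq]
        exact ENNReal.ofReal_le_ofReal (hkey_pt i)
      have step3 : ∫⁻ i, (F i + ENNReal.ofReal q * ((ψ i : ℝ≥0∞))) ∂η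
          ≤ ∫⁻ i, ((1 : ℝ≥0∞) + ENNReal.ofReal q * ENNReal.ofReal (max (w i) 0)
            + ENNReal.ofReal (q ^ 2 * C) * (1 + ENNReal.ofReal (Real.exp (p * w i)))) ∂η :=
        lintegral_mono step2
      have step4 : ∫⁻ i, ((1 : ℝ≥0∞) + ENNReal.ofReal q * ENNReal.ofReal (max (w i) 0)
            + ENNReal.ofReal (q ^ 2 * C) * (1 + ENNReal.ofReal (Real.exp (p * w i)))) ∂η
          = 1 + ENNReal.ofReal q * (∫⁻ i, ENNReal.ofReal (max (w i) 0) ∂η)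
            + ENNReal.ofReal (q ^ 2 * C) * (1 + ∫⁻ i, ENNReal.ofReal (Real.exp (p * w i)) ∂η) := by
        rw [lintegral_add_right _ (by exact (measurable_const.add hexp_pm).const_mul _ :
            Measurable fun i => ENNReal.ofReal (q ^ 2 * C) * (1 + ENNReal.ofReal (Real.exp (p * w i)))),
          lintegral_add_right _ (hmaxw_m.const_mul _),
          lintegral_const_mul' _ _ ENNReal.ofReal_ne_top,
          lintegral_const_mul' _ _ ENNReal.ofReal_ne_top,
          lintegral_add_right _ hexp_pm]
        simp [measure_univ]
      have hmaxA : ∫⁻ i, ENNReal.ofReal (max (w i) 0) ∂η ≤ A := by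
        rw [hAdef]
        refine lintegral_mono fun i => ?_
        show ENNReal.ofReal (max (w i) 0) ≤ ENNReal.ofReal (Real.log (L i))
        rcases le_total (w i) 0 with h | h
        · rw [max_eq_right h]; simp
        · rw [max_eq_left h]; exact hw_le i
      have hexpK : ∫⁻ i, ENNReal.ofReal (Real.exp (p * w i)) ∂η ≤ K + 1 := by
        have : ∀ i, ENNReal.ofReal (Real.exp (p * w i))
            ≤ ENNReal.ofReal (L i ^ p) + 1 := by
          intro i
          calc ENNReal.ofReal (Real.exp (p * w i)) ≤ ENNReal.ofReal (L i ^ p + 1) :=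
                ENNReal.ofReal_le_ofReal (hexp_p i)
            _ = ENNReal.ofReal (L i ^ p) + 1 := by
                rw [ENNReal.ofReal_add (Real.rpow_nonneg (hL0 i) p) (by norm_num)]
                simp
        calc ∫⁻ i, ENNReal.ofReal (Real.exp (p * w i)) ∂η
            ≤ ∫⁻ i, (ENNReal.ofReal (L i ^ p) + 1) ∂η := lintegral_mono this
          _ = K + 1 := by
              rw [lintegral_add_right _ measurable_const]
              simp [hKdef, measure_univ]
      calc X + ENNReal.ofReal q * T
          = ∫⁻ i, (F i + ENNReal.ofReal q * ((ψ i : ℝ≥0∞))) ∂η := step1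
        _ ≤ 1 + ENNReal.ofReal q * (∫⁻ i, ENNReal.ofReal (max (w i) 0) ∂η)
            + ENNReal.ofReal (q ^ 2 * C) * (1 + ∫⁻ i, ENNReal.ofReal (Real.exp (p * w i)) ∂η) := by
            rw [← step4]; exact step3
        _ ≤ 1 + ENNReal.ofReal q * A + ENNReal.ofReal (q ^ 2 * C) * (1 + (K + 1)) := by
            gcongr
    -- rewrite RHS as ofReal of a real number
    have hRHS : (1 : ℝ≥0∞) + ENNReal.ofReal q * A + ENNReal.ofReal (q ^ 2 * C) * (1 + (K + 1))
        = ENNReal.ofReal (1 + q * a0 + q ^ 2 * C * (2 + Kr)) := by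
      have hA' : A = ENNReal.ofReal a0 := by
        rw [ha0def, ENNReal.ofReal_toReal hAne]
      have hK' : K = ENNReal.ofReal Kr := by
        rw [hKrdef, ENNReal.ofReal_toReal hKne]
      rw [hA', hK']
      have hqa0 : (0:ℝ) ≤ q * a0 := mul_nonneg hq0.le ha00
      have hqC : (0:ℝ) ≤ q ^ 2 * C := mul_nonneg (sq_nonneg q) hC0.le
      rw [ENNReal.ofReal_add (by linarith : (0:ℝ) ≤ 1 + q * a0)
          (mul_nonneg hqC (by linarith : (0:ℝ) ≤ 2 + Kr)),
        ENNReal.ofReal_add (by norm_num : (0:ℝ) ≤ 1) hqa0,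
        ENNReal.ofReal_mul hq0.le,
        ENNReal.ofReal_mul hqC,
        ENNReal.ofReal_add (by norm_num : (0:ℝ) ≤ 2) hKr0]
      have h2 : ENNReal.ofReal (2:ℝ) = 2 := by norm_num
      rw [h2, ENNReal.ofReal_one]
      ring
    -- transfer to reals
    have hT' : ENNReal.ofReal q * T = ENNReal.ofReal (q * Tr) := by
      rw [ENNReal.ofReal_mul hq0.le, hTrdef, ENNReal.ofReal_toReal hT_ne]
    have hRfin : ENNReal.ofReal (1 + q * a0 + q ^ 2 * C * (2 + Kr)) ≠ ⊤ :=
      ENNReal.ofReal_ne_top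
    have hXfin : X ≠ ⊤ := by
      intro hX
      rw [hRHS] at main
      have : X ≤ ENNReal.ofReal (1 + q * a0 + q ^ 2 * C * (2 + Kr)) :=
        le_trans (le_add_right le_rfl : X ≤ X + ENNReal.ofReal q * T) main
      rw [hX] at this
      exact hRfin (top_le_iff.1 this)
    set Xr : ℝ := X.toReal with hXrdef
    have hXr : X = ENNReal.ofReal Xr := (ENNReal.ofReal_toReal hXfin).symm
    have hreal : Xr + q * Tr ≤ 1 + q * a0 + q ^ 2 * C * (2 + Kr) := by
      have h1 : ENNReal.ofReal (Xr + q * Tr)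
          ≤ ENNReal.ofReal (1 + q * a0 + q ^ 2 * C * (2 + Kr)) := by
        rw [ENNReal.ofReal_add ENNReal.toReal_nonneg
            (mul_nonneg hq0.le (hTrdef ▸ ENNReal.toReal_nonneg)), ← hXr, ← hT', ← hRHS]
        exact main
      exact (ENNReal.ofReal_le_ofReal_iff
        (by nlinarith [mul_nonneg hq0.le ha00,
          mul_nonneg (mul_nonneg (sq_nonneg q) hC0.le) (by linarith : (0:ℝ) ≤ 2 + Kr)])).1 h1
    -- conclude Xr ≤ ρ
    have hXρ : Xr ≤ ρ := by
      have hTr_eq : Tr = a0 + δ := by rw [hδdef]; ring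
      have hqqM : q ^ 2 * C * (2 + Kr) ≤ q * δ / 2 := by
        have : q * (q * M) ≤ q * (δ / 2) := mul_le_mul_of_nonneg_left hqM hq0.le
        calc q ^ 2 * C * (2 + Kr) = q * (q * M) := by rw [hMdef]; ring
          _ ≤ q * (δ / 2) := this
          _ = q * δ / 2 := by ring
      rw [hρdef]
      rw [hTr_eq] at hreal
      nlinarith [hreal, hqqM]
    -- finish: the simple function integral is at most ofReal ρ
    have hσX : (MeasureTheory.SimpleFunc.map ofNNReal σ).lintegral η ≤ X := by
      rw [← MeasureTheory.SimpleFunc.lintegral_eq_lintegral]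
      calc ∫⁻ i, (MeasureTheory.SimpleFunc.map ofNNReal σ) i ∂η
          = ∫⁻ i, ((σ i : ℝ≥0∞)) ∂η := lintegral_congr fun i => by simp
        _ ≤ ∫⁻ i, F i ∂η := lintegral_mono hσ_le
        _ = X := rfl
    calc (MeasureTheory.SimpleFunc.map ofNNReal σ).lintegral η ≤ X := hσX
      _ = ENNReal.ofReal Xr := hXr
      _ ≤ ENNReal.ofReal ρ := ENNReal.ofReal_le_ofReal hXρ
  -- conclude the theorem
  intro x y
  rcases eq_or_lt_of_le (dist_nonneg : (0:ℝ) ≤ dist x y) with hd | hd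
  · have hxy : x = y := by rw [← dist_le_zero]; exact le_of_eq hd.symm
    subst hxy
    simp [Real.zero_rpow hq0.ne']
  · calc ∫⁻ i, ENNReal.ofReal (dist (φ i x) (φ i y) ^ q) ∂η
        ≤ ∫⁻ i, ENNReal.ofReal (L i ^ q) * ENNReal.ofReal (dist x y ^ q) ∂η := by
          refine lintegral_mono fun i => ?_
          show ENNReal.ofReal (dist (φ i x) (φ i y) ^ q)
            ≤ ENNReal.ofReal (L i ^ q) * ENNReal.ofReal (dist x y ^ q)
          rw [← ENNReal.ofReal_mul (Real.rpow_nonneg (hL0 i) q)]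
          apply ENNReal.ofReal_le_ofReal
          rw [← Real.mul_rpow (hL0 i) dist_nonneg]
          exact Real.rpow_le_rpow dist_nonneg (hLd i x y) hq0.le
      _ = (∫⁻ i, ENNReal.ofReal (L i ^ q) ∂η) * ENNReal.ofReal (dist x y ^ q) :=
          lintegral_mul_const' _ _ ENNReal.ofReal_ne_top
      _ ≤ ENNReal.ofReal ρ * ENNReal.ofReal (dist x y ^ q) := mul_le_mul_left hkey _
      _ = ENNReal.ofReal (ρ * dist x y ^ q) := (ENNReal.ofReal_mul hρ0.le).symm

end
end

section
/- For all p, a ∈ (0,1) and all b < log(1/(1−p)), the stationary measure μ_{a,p} satisfies ∫ e^{bx} dμ_{a,p}(x) = ∏_{k=0}^∞ p/(1 − (1−p)·e^{a^k b}), and this quantity is finite. Moreover there is a constant C(a,p), independent of b, such that ∫ e^{bx} dμ_{a,p}(x) ≤ C(a,p)/(1 − (1−p)e^b) for all b < log(1/(1−p)). -/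
open MeasureTheory ENNReal NNReal Set Metric Filter Topology

noncomputable section

/-- `μ` is a stationary measure of the IFS on `ℝ` with maps `φ₀(x) = ax`
(probability `p`) and `φ₁(x) = x + 1` (probability `1-p`). -/
def HPStationary (a p : ℝ) (μ : Measure ℝ) : Prop :=
  μ = ENNReal.ofReal p • μ.map (fun x => a * x)
      + ENNReal.ofReal (1 - p) • μ.map (fun x => x + 1)

namespace Stmt11Aux

lemma key_lintegral {a p : ℝ} {μ : Measure ℝ} (hμstat : HPStationary a p μ)
    (f : ℝ → ℝ≥0∞) (hf : Measurable f) :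
    ∫⁻ x, f x ∂μ = ENNReal.ofReal p * ∫⁻ x, f (a * x) ∂μ
      + ENNReal.ofReal (1 - p) * ∫⁻ x, f (x + 1) ∂μ := by
  nth_rewrite 1 [hμstat]
  rw [lintegral_add_measure, lintegral_smul_measure, lintegral_smul_measure,
    lintegral_map hf (measurable_const_mul a), lintegral_map hf (measurable_add_const 1)]
  simp only [smul_eq_mul]

lemma ae_nn {μ : Measure ℝ} (hμpos : μ (Set.Iio (0:ℝ)) = 0) : ∀ᵐ x ∂μ, 0 ≤ x := by
  rw [ae_iff]
  convert hμpos using 2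
  ext x
  simp [not_le, Set.mem_Iio]

lemma meas_min_pow (T : ℝ) (n : ℕ) :
    Measurable fun x : ℝ => ENNReal.ofReal (min x T) ^ n :=
  ((measurable_id.min measurable_const).ennreal_ofReal).pow_const n

lemma trunc_lt_top {μ : Measure ℝ} [IsProbabilityMeasure μ] (n : ℕ) (T : ℝ) :
    (∫⁻ x, ENNReal.ofReal (min x T) ^ n ∂μ) ≤ ENNReal.ofReal T ^ n := by
  calc ∫⁻ x, ENNReal.ofReal (min x T) ^ n ∂μ
      ≤ ∫⁻ _, ENNReal.ofReal T ^ n ∂μ := by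
        refine lintegral_mono fun x => ?_
        exact pow_le_pow_left' (ENNReal.ofReal_le_ofReal (min_le_right _ _)) n
    _ = ENNReal.ofReal T ^ n := by simp

lemma trunc_tail_bound {μ : Measure ℝ} [IsProbabilityMeasure μ]
    (n : ℕ) (S R : ℝ) :
    (∫⁻ x, ENNReal.ofReal (min x S) ^ n ∂μ)
      ≤ ENNReal.ofReal R ^ n + ENNReal.ofReal S ^ n * μ (Set.Ioi R) := by
  have hpt : ∀ x : ℝ, ENNReal.ofReal (min x S) ^ n
      ≤ ENNReal.ofReal R ^ n
        + (Set.Ioi R).indicator (fun _ => ENNReal.ofReal S ^ n) x := by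
    intro x
    by_cases hx : R < x
    · rw [Set.indicator_of_mem (Set.mem_Ioi.mpr hx)]
      exact le_trans (pow_le_pow_left' (ENNReal.ofReal_le_ofReal (min_le_right _ _)) n)
        (self_le_add_left _ _)
    · rw [Set.indicator_of_notMem (by simpa using hx)]
      push_neg at hx
      exact le_trans (pow_le_pow_left' (ENNReal.ofReal_le_ofReal
        (le_trans (min_le_left _ _) hx)) n) (self_le_add_right _ _)
  calc (∫⁻ x, ENNReal.ofReal (min x S) ^ n ∂μ)
      ≤ ∫⁻ x, (ENNReal.ofReal R ^ n
          + (Set.Ioi R).indicator (fun _ => ENNReal.ofReal S ^ n) x) ∂μ :=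
        lintegral_mono hpt
    _ = ENNReal.ofReal R ^ n + ENNReal.ofReal S ^ n * μ (Set.Ioi R) := by
        rw [lintegral_add_left measurable_const, lintegral_const,
          lintegral_indicator_const measurableSet_Ioi]
        simp

lemma min_shift_le (x T : ℝ) (hx : 0 ≤ x) (hT : 0 ≤ T) :
    ENNReal.ofReal (min (x + 1) T) ≤ ENNReal.ofReal (min x T) + 1 := by
  have h1 : min (x + 1) T ≤ min x T + 1 := by
    rcases le_total x T with h2 | h2
    · rw [min_eq_left h2]
      exact le_trans (min_le_left _ _) le_rfl
    · rw [min_eq_right h2]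
      exact le_trans (min_le_right _ _) (by linarith)
  calc ENNReal.ofReal (min (x + 1) T) ≤ ENNReal.ofReal (min x T + 1) :=
        ENNReal.ofReal_le_ofReal h1
    _ = ENNReal.ofReal (min x T) + 1 := by
        rw [ENNReal.ofReal_add (le_min hx hT) zero_le_one, ENNReal.ofReal_one]

lemma trunc_step {a p : ℝ} {μ : Measure ℝ} (ha : a ∈ Set.Ioo (0:ℝ) 1)
    (hμpos : μ (Set.Iio (0:ℝ)) = 0) (hμstat : HPStationary a p μ)
    (n : ℕ) (T : ℝ) (hT : 0 ≤ T) :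
    (∫⁻ x, ENNReal.ofReal (min x T) ^ n ∂μ)
      ≤ ENNReal.ofReal p * (ENNReal.ofReal a ^ n
          * ∫⁻ x, ENNReal.ofReal (min x (T / a)) ^ n ∂μ)
        + ENNReal.ofReal (1 - p) * ∑ k ∈ Finset.range (n + 1),
            (n.choose k : ℝ≥0∞) * ∫⁻ x, ENNReal.ofReal (min x T) ^ k ∂μ := by
  rw [key_lintegral hμstat _ (meas_min_pow T n)]
  have h1 : (∫⁻ x, ENNReal.ofReal (min (a * x) T) ^ n ∂μ)
      = ENNReal.ofReal a ^ n * ∫⁻ x, ENNReal.ofReal (min x (T / a)) ^ n ∂μ := by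
    have hmin : ∀ x : ℝ, min (a * x) T = a * min x (T / a) := by
      intro x
      rw [mul_min_of_nonneg _ _ ha.1.le, mul_div_cancel₀ T (ne_of_gt ha.1)]
    simp_rw [hmin, ENNReal.ofReal_mul ha.1.le, mul_pow]
    rw [lintegral_const_mul _ (meas_min_pow _ n)]
  have h2 : (∫⁻ x, ENNReal.ofReal (min (x + 1) T) ^ n ∂μ)
      ≤ ∑ k ∈ Finset.range (n + 1),
          (n.choose k : ℝ≥0∞) * ∫⁻ x, ENNReal.ofReal (min x T) ^ k ∂μ := by
    calc (∫⁻ x, ENNReal.ofReal (min (x + 1) T) ^ n ∂μ)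
        ≤ ∫⁻ x, (ENNReal.ofReal (min x T) + 1) ^ n ∂μ := by
          refine lintegral_mono_ae ((ae_nn hμpos).mono fun x hx => ?_)
          exact pow_le_pow_left' (min_shift_le x T hx hT) n
      _ = ∫⁻ x, ∑ k ∈ Finset.range (n + 1),
            ENNReal.ofReal (min x T) ^ k * (n.choose k : ℝ≥0∞) ∂μ := by
          congr 1; ext x
          rw [add_pow]
          simp [one_pow]
      _ = ∑ k ∈ Finset.range (n + 1),
            (n.choose k : ℝ≥0∞) * ∫⁻ x, ENNReal.ofReal (min x T) ^ k ∂μ := by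
          rw [lintegral_finset_sum _ (fun k _ => (meas_min_pow T k).mul_const _)]
          refine Finset.sum_congr rfl fun k _ => ?_
          rw [lintegral_mul_const _ (meas_min_pow T k), mul_comm]
  rw [h1]
  exact add_le_add_right (mul_le_mul_right h2 _) _

lemma mom_lt_top {a p : ℝ} {μ : Measure ℝ} (ha : a ∈ Set.Ioo (0:ℝ) 1)
    (hp : p ∈ Set.Ioo (0:ℝ) 1) (hμprob : IsProbabilityMeasure μ)
    (hμpos : μ (Set.Iio (0:ℝ)) = 0) (hμstat : HPStationary a p μ) :
    ∀ n : ℕ, (∫⁻ x, ENNReal.ofReal x ^ n ∂μ) < ∞ := by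
  intro n
  induction n using Nat.strong_induction_on with
  | _ n ih =>
  rcases Nat.eq_zero_or_pos n with hn0 | hn1
  · subst hn0; simp
  have ha0 := ha.1
  have hp0 := hp.1
  have hp1 := hp.2
  have han : a ^ n < 1 := pow_lt_one₀ ha.1.le ha.2 hn1.ne'
  have han0 : (0:ℝ) ≤ a ^ n := pow_nonneg ha.1.le n
  set H : ℝ → ℝ≥0∞ := fun T => ∫⁻ x, ENNReal.ofReal (min x T) ^ n ∂μ with hHdef
  have hHfin : ∀ T : ℝ, H T ≠ ∞ := fun T =>
    (lt_of_le_of_lt (trunc_lt_top n T)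
      (ENNReal.pow_lt_top ENNReal.ofReal_lt_top)).ne
  set D : ℝ≥0∞ := ∑ k ∈ Finset.range n,
      (n.choose k : ℝ≥0∞) * ∫⁻ x, ENNReal.ofReal x ^ k ∂μ with hDdef
  have hDfin : D ≠ ∞ := by
    refine (lt_of_le_of_lt (le_refl D) ?_).ne
    rw [hDdef]
    refine ENNReal.sum_lt_top.mpr fun k hk => ?_
    exact ENNReal.mul_lt_top (by simp) (ih k (Finset.mem_range.mp hk))
  set c : ℝ := (1 - p) / p * D.toReal with hcdef
  have hDnn : 0 ≤ D.toReal := ENNReal.toReal_nonneg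
  have hc0 : 0 ≤ c := mul_nonneg (div_nonneg (by linarith) hp0.le) hDnn
  -- one-step inequality (real form)
  have hstep : ∀ T : ℝ, 0 ≤ T →
      (H T).toReal ≤ a ^ n * (H (T / a)).toReal + c := by
    intro T hT
    have key := trunc_step ha hμpos hμstat n T hT
    rw [Finset.sum_range_succ] at key
    have hkt : ∀ k, (∫⁻ x, ENNReal.ofReal (min x T) ^ k ∂μ)
        ≤ ∫⁻ x, ENNReal.ofReal x ^ k ∂μ := by
      intro k
      refine lintegral_mono fun x => ?_
      exact pow_le_pow_left' (ENNReal.ofReal_le_ofReal (min_le_left _ _)) k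
    have key2 : H T ≤ ENNReal.ofReal p * (ENNReal.ofReal a ^ n * H (T / a))
        + ENNReal.ofReal (1 - p) * (D + H T) := by
      refine key.trans (add_le_add_right (mul_le_mul_right ?_ _) _)
      rw [Nat.choose_self, Nat.cast_one, one_mul]
      exact add_le_add_left (Finset.sum_le_sum fun k _ => mul_le_mul_right (hkt k) _) _
    have hrhs : ENNReal.ofReal p * (ENNReal.ofReal a ^ n * H (T / a))
        + ENNReal.ofReal (1 - p) * (D + H T) ≠ ∞ := by
      refine ENNReal.add_ne_top.mpr ⟨?_, ?_⟩
      · exact ENNReal.mul_ne_top ENNReal.ofReal_ne_top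
          (ENNReal.mul_ne_top (ENNReal.pow_ne_top ENNReal.ofReal_ne_top) (hHfin _))
      · exact ENNReal.mul_ne_top ENNReal.ofReal_ne_top
          (ENNReal.add_ne_top.mpr ⟨hDfin, hHfin _⟩)
    have hreal := ENNReal.toReal_mono hrhs key2
    rw [ENNReal.toReal_add (by
          exact ENNReal.mul_ne_top ENNReal.ofReal_ne_top
            (ENNReal.mul_ne_top (ENNReal.pow_ne_top ENNReal.ofReal_ne_top) (hHfin _)))
        (by
          exact ENNReal.mul_ne_top ENNReal.ofReal_ne_top
            (ENNReal.add_ne_top.mpr ⟨hDfin, hHfin _⟩)),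
      ENNReal.toReal_mul, ENNReal.toReal_mul, ENNReal.toReal_mul,
      ENNReal.toReal_add hDfin (hHfin _), ENNReal.toReal_pow,
      ENNReal.toReal_ofReal hp0.le, ENNReal.toReal_ofReal (by linarith : (0:ℝ) ≤ 1 - p),
      ENNReal.toReal_ofReal ha0.le] at hreal
    -- hreal : (H T).toReal ≤ p * (a^n * (H (T/a)).toReal) + (1-p) * (D.toReal + (H T).toReal)
    have hpc : p * c = (1 - p) * D.toReal := by
      rw [hcdef]; field_simp
    have hmul : p * (H T).toReal ≤ p * (a ^ n * (H (T / a)).toReal + c) := by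
      nlinarith [hreal, hpc]
    exact le_of_mul_le_mul_left hmul hp0
  -- iterated inequality
  have hiter : ∀ (j : ℕ) (T : ℝ), 0 ≤ T →
      (H T).toReal ≤ (a ^ n) ^ j * (H (T / a ^ j)).toReal
        + c * ∑ i ∈ Finset.range j, (a ^ n) ^ i := by
    intro j
    induction j with
    | zero => intro T hT; simp
    | succ j ihj =>
      intro T hT
      have h1 := hstep T hT
      have h2 := ihj (T / a) (by positivity)
      have hTd : T / a / a ^ j = T / a ^ (j + 1) := by
        rw [div_div, ← pow_succ']
      rw [hTd] at h2
      calc (H T).toReal ≤ a ^ n * (H (T / a)).toReal + c := h1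
        _ ≤ a ^ n * ((a ^ n) ^ j * (H (T / a ^ (j+1))).toReal
              + c * ∑ i ∈ Finset.range j, (a ^ n) ^ i) + c := by
            have := mul_le_mul_of_nonneg_left h2 han0
            linarith
        _ = (a ^ n) ^ (j+1) * (H (T / a ^ (j+1))).toReal
              + c * ∑ i ∈ Finset.range (j+1), (a ^ n) ^ i := by
            rw [geom_sum_succ]
            ring
  -- tail bound (real form)
  have htail : ∀ S R : ℝ, 0 ≤ S → 0 ≤ R →
      (H S).toReal ≤ R ^ n + S ^ n * (μ (Set.Ioi R)).toReal := by
    intro S R hS hR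
    have hb := trunc_tail_bound (μ := μ) n S R
    have hfin2 : ENNReal.ofReal R ^ n + ENNReal.ofReal S ^ n * μ (Set.Ioi R) ≠ ∞ := by
      refine ENNReal.add_ne_top.mpr ⟨ENNReal.pow_ne_top ENNReal.ofReal_ne_top, ?_⟩
      exact ENNReal.mul_ne_top (ENNReal.pow_ne_top ENNReal.ofReal_ne_top) (measure_ne_top μ _)
    have := ENNReal.toReal_mono hfin2 hb
    rw [ENNReal.toReal_add (ENNReal.pow_ne_top ENNReal.ofReal_ne_top)
        (ENNReal.mul_ne_top (ENNReal.pow_ne_top ENNReal.ofReal_ne_top) (measure_ne_top μ _)),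
      ENNReal.toReal_mul, ENNReal.toReal_pow, ENNReal.toReal_pow,
      ENNReal.toReal_ofReal hR, ENNReal.toReal_ofReal hS] at this
    exact this
  -- uniform bound on truncated moments
  have hBnn : 0 ≤ c * (1 - a ^ n)⁻¹ :=
    mul_nonneg hc0 (inv_nonneg.mpr (by linarith))
  have hBnd : ∀ T : ℝ, 0 ≤ T → (H T).toReal ≤ c * (1 - a ^ n)⁻¹ := by
    intro T hT
    have hsum_le : ∀ j : ℕ, (∑ i ∈ Finset.range j, (a ^ n) ^ i) ≤ (1 - a ^ n)⁻¹ := by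
      intro j
      have hs : Summable fun i : ℕ => (a ^ n) ^ i := summable_geometric_of_lt_one han0 han
      calc ∑ i ∈ Finset.range j, (a ^ n) ^ i
          ≤ ∑' i : ℕ, (a ^ n) ^ i := hs.sum_le_tsum _ (fun i _ => pow_nonneg han0 i)
        _ = (1 - a ^ n)⁻¹ := tsum_geometric_of_lt_one han0 han
    have hstep2 : ∀ (R : ℝ), 0 ≤ R → ∀ j : ℕ,
        (H T).toReal ≤ (a ^ n) ^ j * R ^ n
          + (T ^ n * (μ (Set.Ioi R)).toReal + c * (1 - a ^ n)⁻¹) := by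
      intro R hR j
      have h1 := hiter j T hT
      have h2 := htail (T / a ^ j) R (by positivity) hR
      have hkey : (a ^ n) ^ j * (T / a ^ j) ^ n = T ^ n := by
        rw [div_pow, ← pow_mul, ← pow_mul, mul_comm n j, pow_mul]
        have : ((a : ℝ) ^ j) ^ n ≠ 0 := pow_ne_zero _ (pow_ne_zero _ ha0.ne')
        field_simp
      calc (H T).toReal
          ≤ (a ^ n) ^ j * (H (T / a ^ j)).toReal
            + c * ∑ i ∈ Finset.range j, (a ^ n) ^ i := h1
        _ ≤ (a ^ n) ^ j * (R ^ n + (T / a ^ j) ^ n * (μ (Set.Ioi R)).toReal)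
            + c * (1 - a ^ n)⁻¹ := by
            refine add_le_add ?_ ?_
            · exact mul_le_mul_of_nonneg_left h2 (pow_nonneg han0 j)
            · exact mul_le_mul_of_nonneg_left (hsum_le j) hc0
        _ = (a ^ n) ^ j * R ^ n
            + (T ^ n * (μ (Set.Ioi R)).toReal + c * (1 - a ^ n)⁻¹) := by
            rw [mul_add, ← add_assoc, ← mul_assoc, hkey]
    have hj : ∀ R : ℝ, 0 ≤ R →
        (H T).toReal ≤ T ^ n * (μ (Set.Ioi R)).toReal + c * (1 - a ^ n)⁻¹ := by
      intro R hR
      have hlim : Tendsto (fun j : ℕ => (a ^ n) ^ j * R ^ n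
          + (T ^ n * (μ (Set.Ioi R)).toReal + c * (1 - a ^ n)⁻¹)) atTop
          (𝓝 (0 * R ^ n + (T ^ n * (μ (Set.Ioi R)).toReal + c * (1 - a ^ n)⁻¹))) :=
        ((tendsto_pow_atTop_nhds_zero_of_lt_one han0 han).mul_const _).add_const _
      have hle := ge_of_tendsto' hlim (fun j => hstep2 R hR j)
      linarith
    have hμ0 : Tendsto (fun k : ℕ => (μ (Set.Ioi (k:ℝ))).toReal) atTop (𝓝 0) := by
      have hint : Tendsto (fun k : ℕ => μ (Set.Ioi (k:ℝ))) atTop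
          (𝓝 (μ (⋂ k : ℕ, Set.Ioi (k:ℝ)))) :=
        tendsto_measure_iInter_atTop (fun k => measurableSet_Ioi.nullMeasurableSet)
          (fun i j hij => Set.Ioi_subset_Ioi (by exact_mod_cast hij)) ⟨0, measure_ne_top μ _⟩
      have hempty : (⋂ k : ℕ, Set.Ioi ((k:ℝ))) = ∅ := by
        ext x
        simp only [Set.mem_iInter, Set.mem_Ioi, Set.mem_empty_iff_false, iff_false,
          not_forall, not_lt]
        obtain ⟨k, hk⟩ := exists_nat_gt x
        exact ⟨k, hk.le⟩
      rw [hempty, measure_empty] at hint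
      have := (ENNReal.tendsto_toReal (by simp : (0:ℝ≥0∞) ≠ ∞)).comp hint
      exact this
    have hlim2 : Tendsto (fun k : ℕ => T ^ n * (μ (Set.Ioi (k:ℝ))).toReal
        + c * (1 - a ^ n)⁻¹) atTop (𝓝 (T ^ n * 0 + c * (1 - a ^ n)⁻¹)) :=
      (hμ0.const_mul _).add_const _
    have hle2 := ge_of_tendsto' hlim2 (fun k => hj (k : ℝ) (Nat.cast_nonneg k))
    linarith
  -- conclude via monotone convergence
  have hmono : Monotone fun j : ℕ => fun x : ℝ => ENNReal.ofReal (min x (j:ℝ)) ^ n := by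
    intro i j hij x
    exact pow_le_pow_left' (ENNReal.ofReal_le_ofReal
      (min_le_min le_rfl (by exact_mod_cast hij))) n
  have hsup : (∫⁻ x, ENNReal.ofReal x ^ n ∂μ) = ⨆ j : ℕ, H (j:ℝ) := by
    rw [← lintegral_iSup (fun j => meas_min_pow _ n) hmono]
    refine lintegral_congr fun x => ?_
    refine le_antisymm ?_ (iSup_le fun j =>
      pow_le_pow_left' (ENNReal.ofReal_le_ofReal (min_le_left _ _)) n)
    calc ENNReal.ofReal x ^ n
        = ENNReal.ofReal (min x ((Nat.ceil x : ℕ) : ℝ)) ^ n := by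
          rw [min_eq_left (Nat.le_ceil x)]
      _ ≤ ⨆ j : ℕ, ENNReal.ofReal (min x (j:ℝ)) ^ n :=
          le_iSup (fun j : ℕ => ENNReal.ofReal (min x (j:ℝ)) ^ n) (Nat.ceil x)
  rw [hsup]
  refine lt_of_le_of_lt (iSup_le fun j : ℕ => ?_)
    (ENNReal.ofReal_lt_top (r := c * (1 - a ^ n)⁻¹))
  exact (ENNReal.le_ofReal_iff_toReal_le (hHfin _) hBnn).mpr
    (hBnd (j : ℝ) (Nat.cast_nonneg j))

lemma meas_opow (n : ℕ) : Measurable fun x : ℝ => ENNReal.ofReal x ^ n :=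
  (measurable_id.ennreal_ofReal).pow_const n

lemma mom_id {a p : ℝ} {μ : Measure ℝ} (ha : a ∈ Set.Ioo (0:ℝ) 1)
    (hμpos : μ (Set.Iio (0:ℝ)) = 0) (hμstat : HPStationary a p μ) (n : ℕ) :
    (∫⁻ x, ENNReal.ofReal x ^ n ∂μ)
      = ENNReal.ofReal p * (ENNReal.ofReal a ^ n * ∫⁻ x, ENNReal.ofReal x ^ n ∂μ)
        + ENNReal.ofReal (1 - p) * ∑ k ∈ Finset.range (n + 1),
            (n.choose k : ℝ≥0∞) * ∫⁻ x, ENNReal.ofReal x ^ k ∂μ := by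
  nth_rewrite 1 [key_lintegral hμstat _ (meas_opow n)]
  congr 1
  · congr 1
    simp_rw [ENNReal.ofReal_mul ha.1.le, mul_pow]
    rw [lintegral_const_mul _ (meas_opow n)]
  · congr 1
    calc ∫⁻ x, ENNReal.ofReal (x + 1) ^ n ∂μ
        = ∫⁻ x, ∑ k ∈ Finset.range (n + 1),
            ENNReal.ofReal x ^ k * (n.choose k : ℝ≥0∞) ∂μ := by
          refine lintegral_congr_ae ((ae_nn hμpos).mono fun x hx => ?_)
          dsimp only
          rw [ENNReal.ofReal_add hx zero_le_one, ENNReal.ofReal_one, add_pow]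
          simp
      _ = ∑ k ∈ Finset.range (n + 1),
            (n.choose k : ℝ≥0∞) * ∫⁻ x, ENNReal.ofReal x ^ k ∂μ := by
          rw [lintegral_finset_sum _ (fun k _ => (meas_opow k).mul_const _)]
          refine Finset.sum_congr rfl fun k _ => ?_
          rw [lintegral_mul_const _ (meas_opow k), mul_comm]

lemma mom_fact_bound {a p : ℝ} {μ : Measure ℝ} (ha : a ∈ Set.Ioo (0:ℝ) 1)
    (hp : p ∈ Set.Ioo (0:ℝ) 1) (hμprob : IsProbabilityMeasure μ)
    (hμpos : μ (Set.Iio (0:ℝ)) = 0) (hμstat : HPStationary a p μ) :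
    ∀ n : ℕ, (∫⁻ x, ENNReal.ofReal x ^ n ∂μ).toReal
      ≤ (n.factorial : ℝ) * ((1 - p) / (p * (1 - a)) + 2) ^ n := by
  have ha0 := ha.1
  have ha1 := ha.2
  have hp0 := hp.1
  have hp1 := hp.2
  set r : ℝ := (1 - p) / (p * (1 - a)) with hrdef
  have hr0 : 0 ≤ r := div_nonneg (by linarith) (by nlinarith)
  set A0 : ℝ := r + 2 with hA0def
  have hA0 : 2 ≤ A0 := by linarith
  have hA0pos : 0 < A0 := by linarith
  set M : ℕ → ℝ := fun k => (∫⁻ x, ENNReal.ofReal x ^ k ∂μ).toReal with hMdef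
  have hMnn : ∀ k, 0 ≤ M k := fun k => ENNReal.toReal_nonneg
  have hMfin : ∀ k, (∫⁻ x, ENNReal.ofReal x ^ k ∂μ) ≠ ∞ :=
    fun k => (mom_lt_top ha hp hμprob hμpos hμstat k).ne
  -- real recursion
  have hrec : ∀ n : ℕ, 1 ≤ n → M n ≤ r * ∑ k ∈ Finset.range n, (n.choose k : ℝ) * M k := by
    intro n hn
    have hid := mom_id ha hμpos hμstat n
    rw [Finset.sum_range_succ, Nat.choose_self, Nat.cast_one, one_mul] at hid
    have hsumfin : (∑ k ∈ Finset.range n, (n.choose k : ℝ≥0∞)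
        * ∫⁻ x, ENNReal.ofReal x ^ k ∂μ) ≠ ∞ := by
      refine (ENNReal.sum_lt_top.mpr fun k _ => ?_).ne
      exact ENNReal.mul_lt_top (by simp) (hMfin k).lt_top
    have := congrArg ENNReal.toReal hid
    rw [ENNReal.toReal_add
        (ENNReal.mul_ne_top ENNReal.ofReal_ne_top
          (ENNReal.mul_ne_top (ENNReal.pow_ne_top ENNReal.ofReal_ne_top) (hMfin n)))
        (ENNReal.mul_ne_top ENNReal.ofReal_ne_top
          (ENNReal.add_ne_top.mpr ⟨hsumfin, hMfin n⟩)),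
      ENNReal.toReal_mul, ENNReal.toReal_mul, ENNReal.toReal_mul,
      ENNReal.toReal_add hsumfin (hMfin n), ENNReal.toReal_pow,
      ENNReal.toReal_ofReal hp0.le, ENNReal.toReal_ofReal (by linarith : (0:ℝ) ≤ 1 - p),
      ENNReal.toReal_ofReal ha0.le, ENNReal.toReal_sum
        (fun k _ => ENNReal.mul_ne_top (by simp) (hMfin k))] at this
    simp_rw [ENNReal.toReal_mul, ENNReal.toReal_natCast] at this
    -- this : M n = p * (a^n * M n) + (1-p) * (Σ + M n)
    have han : a ^ n ≤ a := by
      calc a ^ n ≤ a ^ 1 := pow_le_pow_of_le_one ha0.le ha1.le hn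
        _ = a := pow_one a
    have hSnn : 0 ≤ ∑ k ∈ Finset.range n, (n.choose k : ℝ) * M k :=
      Finset.sum_nonneg fun k _ => mul_nonneg (Nat.cast_nonneg _) (hMnn k)
    have hkey : p * (1 - a) * M n ≤ (1 - p) * ∑ k ∈ Finset.range n, (n.choose k : ℝ) * M k := by
      nlinarith [hMnn n, mul_le_mul_of_nonneg_right han (hMnn n)]
    have hrr : r * ∑ k ∈ Finset.range n, (n.choose k : ℝ) * M k
        = ((1 - p) * ∑ k ∈ Finset.range n, (n.choose k : ℝ) * M k) / (p * (1 - a)) := by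
      rw [hrdef]; ring
    rw [hrr, le_div_iff₀ (by nlinarith)]
    linarith [hkey]
  -- factorial bound by strong induction
  intro n
  induction n using Nat.strong_induction_on with
  | _ n ih =>
  rcases Nat.eq_zero_or_pos n with hn0 | hn1
  · subst hn0
    simp [hMdef]
  have h1 := hrec n hn1
  have h2 : ∑ k ∈ Finset.range n, (n.choose k : ℝ) * M k
      ≤ (n.factorial : ℝ) * ∑ k ∈ Finset.range n, A0 ^ k := by
    rw [Finset.mul_sum]
    refine Finset.sum_le_sum fun k hk => ?_
    have hkn : k ≤ n := (Finset.mem_range.mp hk).le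
    have hck : (n.choose k : ℝ) * ((k.factorial : ℝ) * A0 ^ k)
        ≤ (n.factorial : ℝ) * A0 ^ k := by
      have hnat : n.choose k * k.factorial ≤ n.factorial := by
        calc n.choose k * k.factorial ≤ n.choose k * k.factorial * (n - k).factorial :=
              Nat.le_mul_of_pos_right _ (Nat.factorial_pos _)
          _ = n.factorial := Nat.choose_mul_factorial_mul_factorial hkn
      have : ((n.choose k * k.factorial : ℕ) : ℝ) ≤ (n.factorial : ℝ) := by
        exact_mod_cast hnat
      rw [Nat.cast_mul] at this
      nlinarith [pow_nonneg hA0pos.le k]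
    calc (n.choose k : ℝ) * M k ≤ (n.choose k : ℝ) * ((k.factorial : ℝ) * A0 ^ k) := by
          have := ih k (Finset.mem_range.mp hk)
          exact mul_le_mul_of_nonneg_left this (Nat.cast_nonneg _)
      _ ≤ (n.factorial : ℝ) * A0 ^ k := hck
  have h3 : ∑ k ∈ Finset.range n, A0 ^ k ≤ A0 ^ n / (A0 - 1) := by
    rw [geom_sum_eq (by linarith : A0 ≠ 1), div_le_div_iff_of_pos_right (by linarith)]
    linarith
  have hfac : (0:ℝ) ≤ (n.factorial : ℝ) := Nat.cast_nonneg _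
  have hpow : (0:ℝ) ≤ A0 ^ n := pow_nonneg hA0pos.le n
  calc M n ≤ r * ∑ k ∈ Finset.range n, (n.choose k : ℝ) * M k := h1
    _ ≤ r * ((n.factorial : ℝ) * (A0 ^ n / (A0 - 1))) := by
        have hh := h2.trans (mul_le_mul_of_nonneg_left h3 (Nat.cast_nonneg _))
        exact mul_le_mul_of_nonneg_left hh hr0
    _ = (r / (A0 - 1)) * ((n.factorial : ℝ) * A0 ^ n) := by ring
    _ ≤ 1 * ((n.factorial : ℝ) * A0 ^ n) := by
        refine mul_le_mul_of_nonneg_right ?_ (mul_nonneg hfac hpow)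
        rw [div_le_one (by linarith)]
        linarith
    _ = (n.factorial : ℝ) * A0 ^ n := one_mul _

lemma exp_mom_small {a p : ℝ} {μ : Measure ℝ} (ha : a ∈ Set.Ioo (0:ℝ) 1)
    (hp : p ∈ Set.Ioo (0:ℝ) 1) (hμprob : IsProbabilityMeasure μ)
    (hμpos : μ (Set.Iio (0:ℝ)) = 0) (hμstat : HPStationary a p μ)
    {b : ℝ} (hb0 : 0 < b) (hbA : b * ((1 - p) / (p * (1 - a)) + 2) < 1) :
    (∫⁻ x, ENNReal.ofReal (Real.exp (b * x)) ∂μ) < ∞ := by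
  set A0 : ℝ := (1 - p) / (p * (1 - a)) + 2 with hA0def
  have hA0pos : 0 < A0 := by
    have h0 : 0 ≤ (1 - p) / (p * (1 - a)) :=
      div_nonneg (by linarith [hp.2]) (by nlinarith [hp.1, ha.2])
    rw [hA0def]
    linarith
  clear_value A0
  have hae : ∀ᵐ x ∂μ, ENNReal.ofReal (Real.exp (b * x))
      = ∑' n : ℕ, ENNReal.ofReal (b ^ n / n.factorial) * ENNReal.ofReal x ^ n := by
    refine (ae_nn hμpos).mono fun x hx => ?_
    have hexp : Real.exp (b * x) = ∑' n : ℕ, (b * x) ^ n / n.factorial := by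
      rw [Real.exp_eq_exp_ℝ, NormedSpace.exp_eq_tsum_div]
    rw [hexp, ENNReal.ofReal_tsum_of_nonneg (fun n => by positivity)
      (Real.summable_pow_div_factorial (b * x))]
    congr 1
    ext n
    rw [show (b * x) ^ n / (n.factorial : ℝ) = (b ^ n / n.factorial) * x ^ n by ring,
      ENNReal.ofReal_mul (by positivity), ENNReal.ofReal_pow hx]
  rw [lintegral_congr_ae hae,
    lintegral_tsum (fun n => ((meas_opow n).const_mul _).aemeasurable)]
  have hterm : ∀ n : ℕ,
      (∫⁻ x, ENNReal.ofReal (b ^ n / n.factorial) * ENNReal.ofReal x ^ n ∂μ)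
        ≤ ENNReal.ofReal ((b * A0) ^ n) := by
    intro n
    rw [lintegral_const_mul _ (meas_opow n)]
    have hm := mom_fact_bound ha hp hμprob hμpos hμstat n
    rw [← hA0def] at hm
    have hfin := (mom_lt_top ha hp hμprob hμpos hμstat n).ne
    have h1 : (∫⁻ x, ENNReal.ofReal x ^ n ∂μ)
        ≤ ENNReal.ofReal ((n.factorial : ℝ) * A0 ^ n) :=
      (ENNReal.le_ofReal_iff_toReal_le hfin (by positivity)).mpr hm
    calc ENNReal.ofReal (b ^ n / n.factorial) * ∫⁻ x, ENNReal.ofReal x ^ n ∂μ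
        ≤ ENNReal.ofReal (b ^ n / n.factorial)
            * ENNReal.ofReal ((n.factorial : ℝ) * A0 ^ n) := mul_le_mul_right h1 _
      _ = ENNReal.ofReal ((b ^ n / n.factorial) * ((n.factorial : ℝ) * A0 ^ n)) :=
          (ENNReal.ofReal_mul (by positivity)).symm
      _ = ENNReal.ofReal ((b * A0) ^ n) := by
          congr 1
          have hne : (n.factorial : ℝ) ≠ 0 := Nat.cast_ne_zero.mpr (Nat.factorial_ne_zero n)
          rw [mul_pow]
          field_simp
  calc (∑' n : ℕ, ∫⁻ x, ENNReal.ofReal (b ^ n / n.factorial) * ENNReal.ofReal x ^ n ∂μ)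
      ≤ ∑' n : ℕ, ENNReal.ofReal ((b * A0) ^ n) := ENNReal.tsum_le_tsum hterm
    _ = ∑' n : ℕ, ENNReal.ofReal (b * A0) ^ n :=
        tsum_congr fun n => by rw [ENNReal.ofReal_pow (by positivity)]
    _ = (1 - ENNReal.ofReal (b * A0))⁻¹ := ENNReal.tsum_geometric _
    _ < ∞ := by
        rw [ENNReal.inv_lt_top]
        refine tsub_pos_of_lt ?_
        rw [← ENNReal.ofReal_one]
        exact ENNReal.ofReal_lt_ofReal_iff_of_nonneg (by positivity) |>.mpr hbA

lemma meas_exp (b : ℝ) : Measurable fun x : ℝ => ENNReal.ofReal (Real.exp (b * x)) :=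
  (Real.measurable_exp.comp (measurable_id.const_mul b)).ennreal_ofReal

lemma meas_exp_min (b T : ℝ) :
    Measurable fun x : ℝ => ENNReal.ofReal (Real.exp (b * min x T)) :=
  (Real.measurable_exp.comp ((measurable_id.min measurable_const).const_mul b)).ennreal_ofReal

lemma min_succ_le (x T : ℝ) : min (x + 1) T ≤ min x T + 1 := by
  rcases le_total x T with h2 | h2
  · rw [min_eq_left h2]
    exact min_le_left _ _
  · rw [min_eq_right h2]
    linarith [min_le_right (x + 1) T]

lemma F_mono {μ : Measure ℝ} (hμpos : μ (Set.Iio (0:ℝ)) = 0) {b b' : ℝ} (h : b ≤ b') :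
    (∫⁻ x, ENNReal.ofReal (Real.exp (b * x)) ∂μ)
      ≤ ∫⁻ x, ENNReal.ofReal (Real.exp (b' * x)) ∂μ := by
  refine lintegral_mono_ae ((ae_nn hμpos).mono fun x hx => ?_)
  exact ENNReal.ofReal_le_ofReal (Real.exp_le_exp.mpr (mul_le_mul_of_nonneg_right h hx))

lemma F_le_one {μ : Measure ℝ} [IsProbabilityMeasure μ] (hμpos : μ (Set.Iio (0:ℝ)) = 0)
    {b : ℝ} (hb : b ≤ 0) :
    (∫⁻ x, ENNReal.ofReal (Real.exp (b * x)) ∂μ) ≤ 1 := by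
  calc (∫⁻ x, ENNReal.ofReal (Real.exp (b * x)) ∂μ)
      ≤ ∫⁻ _, (1:ℝ≥0∞) ∂μ := by
        refine lintegral_mono_ae ((ae_nn hμpos).mono fun x hx => ?_)
        rw [← ENNReal.ofReal_one]
        exact ENNReal.ofReal_le_ofReal
          (Real.exp_le_one_iff.mpr (mul_nonpos_of_nonpos_of_nonneg hb hx))
    _ = 1 := by simp

lemma exp_one_step {a p : ℝ} {μ : Measure ℝ} (ha : a ∈ Set.Ioo (0:ℝ) 1)
    (hp : p ∈ Set.Ioo (0:ℝ) 1) (hμprob : IsProbabilityMeasure μ)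
    (hμpos : μ (Set.Iio (0:ℝ)) = 0) (hμstat : HPStationary a p μ)
    {b : ℝ} (hb0 : 0 < b) :
    (1 - ENNReal.ofReal ((1 - p) * Real.exp b))
        * ∫⁻ x, ENNReal.ofReal (Real.exp (b * x)) ∂μ
      ≤ ENNReal.ofReal p * ∫⁻ x, ENNReal.ofReal (Real.exp ((a * b) * x)) ∂μ := by
  set Q : ℝ≥0∞ := ENNReal.ofReal ((1 - p) * Real.exp b) with hQdef
  set E : ℕ → ℝ≥0∞ := fun T => ∫⁻ x, ENNReal.ofReal (Real.exp (b * min x (T:ℝ))) ∂μ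
    with hEdef
  have hEfin : ∀ T : ℕ, E T ≠ ∞ := by
    intro T
    refine (lt_of_le_of_lt (lintegral_mono fun x => ENNReal.ofReal_le_ofReal
      (Real.exp_le_exp.mpr (mul_le_mul_of_nonneg_left (min_le_right _ _) hb0.le))) ?_).ne
    rw [lintegral_const]
    exact ENNReal.mul_lt_top ENNReal.ofReal_lt_top (measure_lt_top μ _)
  have hstep : ∀ T : ℕ, E T ≤ ENNReal.ofReal p
      * (∫⁻ x, ENNReal.ofReal (Real.exp ((a * b) * x)) ∂μ) + Q * E T := by
    intro T
    have hkey := key_lintegral hμstat _ (meas_exp_min b (T:ℝ))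
    refine le_trans (le_of_eq hkey) (add_le_add ?_ ?_)
    · refine mul_le_mul_right (lintegral_mono_ae ((ae_nn hμpos).mono fun x hx => ?_)) _
      refine ENNReal.ofReal_le_ofReal (Real.exp_le_exp.mpr ?_)
      calc b * min (a * x) (T:ℝ) ≤ b * (a * x) :=
            mul_le_mul_of_nonneg_left (min_le_left _ _) hb0.le
        _ = (a * b) * x := by ring
    · calc ENNReal.ofReal (1 - p) * ∫⁻ x, ENNReal.ofReal (Real.exp (b * min (x + 1) (T:ℝ))) ∂μ
          ≤ ENNReal.ofReal (1 - p)
              * ∫⁻ x, ENNReal.ofReal (Real.exp b) * ENNReal.ofReal (Real.exp (b * min x (T:ℝ))) ∂μ := by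
            refine mul_le_mul_right (lintegral_mono fun x => ?_) _
            rw [← ENNReal.ofReal_mul (Real.exp_pos b).le, ← Real.exp_add]
            refine ENNReal.ofReal_le_ofReal (Real.exp_le_exp.mpr ?_)
            have := min_succ_le x (T:ℝ)
            nlinarith
        _ = Q * E T := by
            rw [lintegral_const_mul _ (meas_exp_min b (T:ℝ)), hQdef,
              ENNReal.ofReal_mul (by linarith [hp.2] : (0:ℝ) ≤ 1 - p), mul_assoc]
  have hsub : ∀ T : ℕ, (1 - Q) * E T ≤ ENNReal.ofReal p
      * ∫⁻ x, ENNReal.ofReal (Real.exp ((a * b) * x)) ∂μ := by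
    intro T
    rw [ENNReal.sub_mul (fun _ _ => hEfin T), one_mul]
    exact tsub_le_iff_right.mpr (hstep T)
  have hsup : (∫⁻ x, ENNReal.ofReal (Real.exp (b * x)) ∂μ) = ⨆ T : ℕ, E T := by
    rw [hEdef]
    simp only []
    rw [← lintegral_iSup (fun T => meas_exp_min b (T:ℝ))]
    · refine lintegral_congr fun x => ?_
      refine le_antisymm ?_ (iSup_le fun T => ENNReal.ofReal_le_ofReal
        (Real.exp_le_exp.mpr (mul_le_mul_of_nonneg_left (min_le_left _ _) hb0.le)))
      calc ENNReal.ofReal (Real.exp (b * x))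
          = ENNReal.ofReal (Real.exp (b * min x ((Nat.ceil x : ℕ):ℝ))) := by
            rw [min_eq_left (Nat.le_ceil x)]
        _ ≤ ⨆ T : ℕ, ENNReal.ofReal (Real.exp (b * min x (T:ℝ))) :=
            le_iSup (fun T : ℕ => ENNReal.ofReal (Real.exp (b * min x (T:ℝ)))) (Nat.ceil x)
    · intro i j hij x
      exact ENNReal.ofReal_le_ofReal (Real.exp_le_exp.mpr
        (mul_le_mul_of_nonneg_left (min_le_min le_rfl (by exact_mod_cast hij)) hb0.le))
  rw [hsup, ENNReal.mul_iSup]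
  exact iSup_le hsub

lemma hL_pos {p : ℝ} (hp : p ∈ Set.Ioo (0:ℝ) 1) : 0 < Real.log (1 / (1 - p)) := by
  refine Real.log_pos ?_
  rw [lt_div_iff₀ (by linarith [hp.2] : (0:ℝ) < 1 - p)]
  linarith [hp.1]

lemma hQ_lt_one {p : ℝ} (hp : p ∈ Set.Ioo (0:ℝ) 1) {b : ℝ}
    (hb : b < Real.log (1 / (1 - p))) : (1 - p) * Real.exp b < 1 := by
  have h1p : (0:ℝ) < 1 - p := by linarith [hp.2]
  have := (Real.lt_log_iff_exp_lt (by positivity : (0:ℝ) < 1 / (1 - p))).mp hb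
  calc (1 - p) * Real.exp b < (1 - p) * (1 / (1 - p)) :=
        mul_lt_mul_of_pos_left this h1p
    _ = 1 := by field_simp

lemma exp_mom_lt_top {a p : ℝ} {μ : Measure ℝ} (ha : a ∈ Set.Ioo (0:ℝ) 1)
    (hp : p ∈ Set.Ioo (0:ℝ) 1) (hμprob : IsProbabilityMeasure μ)
    (hμpos : μ (Set.Iio (0:ℝ)) = 0) (hμstat : HPStationary a p μ)
    {b : ℝ} (hb : b < Real.log (1 / (1 - p))) :
    (∫⁻ x, ENNReal.ofReal (Real.exp (b * x)) ∂μ) < ∞ := by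
  rcases le_or_gt b 0 with hble | hbpos
  · exact lt_of_le_of_lt (F_le_one hμpos hble) ENNReal.one_lt_top
  -- positive case
  set A0 : ℝ := (1 - p) / (p * (1 - a)) + 2 with hA0def
  have hA0pos : 0 < A0 := by
    have h0 : 0 ≤ (1 - p) / (p * (1 - a)) :=
      div_nonneg (by linarith [hp.2]) (by nlinarith [hp.1, ha.2])
    rw [hA0def]
    linarith
  obtain ⟨K, hK⟩ := exists_pow_lt_of_lt_one
    (div_pos one_pos (mul_pos hbpos hA0pos)) ha.2
  have hKsmall : a ^ K * b * A0 < 1 := by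
    have hbA : 0 < b * A0 := mul_pos hbpos hA0pos
    calc a ^ K * b * A0 = a ^ K * (b * A0) := by ring
      _ < (1 / (b * A0)) * (b * A0) := mul_lt_mul_of_pos_right hK hbA
      _ = 1 := by field_simp
  have hlt : ∀ j : ℕ, a ^ j * b < Real.log (1 / (1 - p)) := by
    intro j
    have h1 : a ^ j ≤ 1 := pow_le_one₀ ha.1.le ha.2.le
    have : a ^ j * b ≤ b := by nlinarith
    linarith
  have main : ∀ i : ℕ, (∫⁻ x, ENNReal.ofReal (Real.exp ((a ^ (K - i) * b) * x)) ∂μ) < ∞ := by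
    intro i
    induction i with
    | zero =>
      simp only [Nat.sub_zero]
      refine exp_mom_small ha hp hμprob hμpos hμstat
        (mul_pos (pow_pos ha.1 _) hbpos) ?_
      rw [← hA0def]
      exact hKsmall
    | succ i ih =>
      rcases le_or_gt K i with hKi | hiK
      · rw [Nat.sub_eq_zero_of_le (le_trans hKi (Nat.le_succ i))]
        rw [Nat.sub_eq_zero_of_le hKi] at ih
        exact ih
      · have hKi1 : K - i = (K - (i + 1)) + 1 := by omega
        rw [hKi1] at ih
        set b' : ℝ := a ^ (K - (i + 1)) * b with hb'def
        have hb'pos : 0 < b' := mul_pos (pow_pos ha.1 _) hbpos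
        have hab'' : (∫⁻ x, ENNReal.ofReal (Real.exp ((a * b') * x)) ∂μ) < ∞ := by
          have : a * b' = a ^ ((K - (i + 1)) + 1) * b := by rw [hb'def, pow_succ]; ring
          rw [this]
          exact ih
        by_contra hcon
        have htop : (∫⁻ x, ENNReal.ofReal (Real.exp (b' * x)) ∂μ) = ∞ := by
          rwa [lt_top_iff_ne_top, not_not] at hcon
        have hrel := exp_one_step ha hp hμprob hμpos hμstat hb'pos
        rw [htop, ENNReal.mul_top ?hne] at hrel
        case hne =>
          refine (tsub_pos_of_lt ?_).ne'
          rw [← ENNReal.ofReal_one]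
          exact ENNReal.ofReal_lt_ofReal_iff_of_nonneg
            (mul_nonneg (by linarith [hp.2]) (Real.exp_pos _).le) |>.mpr
            (hQ_lt_one hp (hlt (K - (i + 1))))
        exact (ENNReal.mul_ne_top ENNReal.ofReal_ne_top hab''.ne) (top_le_iff.mp hrel)
  have := main K
  rw [Nat.sub_self, pow_zero, one_mul] at this
  exact this

lemma F_pos {μ : Measure ℝ} [IsProbabilityMeasure μ] (b : ℝ) :
    (∫⁻ x, ENNReal.ofReal (Real.exp (b * x)) ∂μ) ≠ 0 := by
  intro h0
  have hae := (lintegral_eq_zero_iff (meas_exp b)).mp h0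
  have hfalse : ∀ᵐ _x ∂μ, False := by
    refine hae.mono fun x hx => ?_
    simp only [Pi.zero_apply, ENNReal.ofReal_eq_zero] at hx
    exact absurd hx (Real.exp_pos _).not_ge
  have : μ Set.univ = 0 := by simpa [ae_iff] using hfalse
  rw [measure_univ] at this
  exact one_ne_zero this

lemma F_step_eq {a p : ℝ} {μ : Measure ℝ} (ha : a ∈ Set.Ioo (0:ℝ) 1)
    (hp : p ∈ Set.Ioo (0:ℝ) 1) (hμprob : IsProbabilityMeasure μ)
    (hμpos : μ (Set.Iio (0:ℝ)) = 0) (hμstat : HPStationary a p μ)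
    {b : ℝ} (hb : b < Real.log (1 / (1 - p))) :
    (∫⁻ x, ENNReal.ofReal (Real.exp (b * x)) ∂μ).toReal
      = p / (1 - (1 - p) * Real.exp b)
        * (∫⁻ x, ENNReal.ofReal (Real.exp ((a * b) * x)) ∂μ).toReal := by
  have hab : a * b < Real.log (1 / (1 - p)) := by
    rcases le_or_gt b 0 with h | h
    · have : a * b ≤ 0 := mul_nonpos_of_nonneg_of_nonpos ha.1.le h
      exact lt_of_le_of_lt this (hL_pos hp)
    · have : a * b ≤ b := by nlinarith [ha.2]
      linarith
  have hFb := exp_mom_lt_top ha hp hμprob hμpos hμstat hb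
  have hFab := exp_mom_lt_top ha hp hμprob hμpos hμstat hab
  -- exact identity in ℝ≥0∞
  have hkey := key_lintegral hμstat _ (meas_exp b)
  have h1 : (∫⁻ x, ENNReal.ofReal (Real.exp (b * (a * x))) ∂μ)
      = ∫⁻ x, ENNReal.ofReal (Real.exp ((a * b) * x)) ∂μ := by
    refine lintegral_congr fun x => ?_
    rw [show b * (a * x) = (a * b) * x by ring]
  have h2 : (∫⁻ x, ENNReal.ofReal (Real.exp (b * (x + 1))) ∂μ)
      = ENNReal.ofReal (Real.exp b) * ∫⁻ x, ENNReal.ofReal (Real.exp (b * x)) ∂μ := by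
    rw [← lintegral_const_mul _ (meas_exp b)]
    refine lintegral_congr fun x => ?_
    rw [← ENNReal.ofReal_mul (Real.exp_pos b).le, ← Real.exp_add,
      show b + b * x = b * (x + 1) by ring]
  rw [h1, h2] at hkey
  -- to real numbers
  have hfinsum : ENNReal.ofReal p * (∫⁻ x, ENNReal.ofReal (Real.exp ((a * b) * x)) ∂μ)
      ≠ ∞ := ENNReal.mul_ne_top ENNReal.ofReal_ne_top hFab.ne
  have hfinsum2 : ENNReal.ofReal (1 - p) * (ENNReal.ofReal (Real.exp b)
      * ∫⁻ x, ENNReal.ofReal (Real.exp (b * x)) ∂μ) ≠ ∞ :=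
    ENNReal.mul_ne_top ENNReal.ofReal_ne_top
      (ENNReal.mul_ne_top ENNReal.ofReal_ne_top hFb.ne)
  have := congrArg ENNReal.toReal hkey
  rw [ENNReal.toReal_add hfinsum hfinsum2, ENNReal.toReal_mul, ENNReal.toReal_mul,
    ENNReal.toReal_mul, ENNReal.toReal_ofReal hp.1.le,
    ENNReal.toReal_ofReal (by linarith [hp.2] : (0:ℝ) ≤ 1 - p),
    ENNReal.toReal_ofReal (Real.exp_pos b).le] at this
  -- this : fb = p * fab + (1-p) * (exp b * fb)
  have hd : 0 < 1 - (1 - p) * Real.exp b := by linarith [hQ_lt_one hp hb]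
  rw [div_mul_eq_mul_div, eq_div_iff hd.ne']
  linear_combination this

end Stmt11Aux

/-- **Corollary (exponential moments of `μ_{a,p}`).** For all `p, a ∈ (0,1)` and all
`b < log(1/(1-p))`: `∫ e^{bx} dμ_{a,p}(x) = ∏_{k=0}^∞ p/(1-(1-p)e^{a^k b}) < ∞`
(the infinite product being the limit of its partial products), and there is a
constant `C(a,p)` independent of `b` with
`∫ e^{bx} dμ_{a,p} ≤ C(a,p)/(1-(1-p)e^b)`. -/
theorem stmt11 (a p : ℝ) (ha : a ∈ Set.Ioo (0:ℝ) 1) (hp : p ∈ Set.Ioo (0:ℝ) 1)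
    (μ : Measure ℝ) (hμprob : IsProbabilityMeasure μ)
    (hμpos : μ (Set.Iio (0:ℝ)) = 0) (hμstat : HPStationary a p μ) :
    (∀ b : ℝ, b < Real.log (1 / (1 - p)) →
      (∫⁻ x, ENNReal.ofReal (Real.exp (b * x)) ∂μ) < ∞ ∧
      Filter.Tendsto
        (fun K : ℕ => ∏ k ∈ Finset.range K,
          ENNReal.ofReal (p / (1 - (1 - p) * Real.exp (a ^ k * b))))
        Filter.atTop (nhds (∫⁻ x, ENNReal.ofReal (Real.exp (b * x)) ∂μ))) ∧
    ∃ C : ℝ, 0 < C ∧ ∀ b : ℝ, b < Real.log (1 / (1 - p)) →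
      (∫⁻ x, ENNReal.ofReal (Real.exp (b * x)) ∂μ)
        ≤ ENNReal.ofReal (C / (1 - (1 - p) * Real.exp b)) := by

  have hL := Stmt11Aux.hL_pos hp
  constructor
  · intro b hb
    have hfin := Stmt11Aux.exp_mom_lt_top ha hp hμprob hμpos hμstat hb
    refine ⟨hfin, ?_⟩
    set f : ℝ → ℝ := fun β => (∫⁻ x, ENNReal.ofReal (Real.exp (β * x)) ∂μ).toReal
      with hfdef
    have hlt : ∀ k : ℕ, a ^ k * b < Real.log (1 / (1 - p)) := by
      intro k
      rcases le_or_gt b 0 with h | h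
      · exact lt_of_le_of_lt (mul_nonpos_of_nonneg_of_nonpos (pow_nonneg ha.1.le k) h) hL
      · have h1 : a ^ k ≤ 1 := pow_le_one₀ ha.1.le ha.2.le
        nlinarith
    have hfin' : ∀ k : ℕ, (∫⁻ x, ENNReal.ofReal (Real.exp ((a ^ k * b) * x)) ∂μ) ≠ ∞ :=
      fun k => (Stmt11Aux.exp_mom_lt_top ha hp hμprob hμpos hμstat (hlt k)).ne
    have hpos' : ∀ k : ℕ, 0 < f (a ^ k * b) := fun k =>
      ENNReal.toReal_pos (Stmt11Aux.F_pos _) (hfin' k)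
    have hdpos : ∀ k : ℕ, 0 < 1 - (1 - p) * Real.exp (a ^ k * b) := fun k => by
      linarith [Stmt11Aux.hQ_lt_one hp (hlt k)]
    have hstep : ∀ k : ℕ, f (a ^ k * b)
        = p / (1 - (1 - p) * Real.exp (a ^ k * b)) * f (a ^ (k + 1) * b) := by
      intro k
      have hse := Stmt11Aux.F_step_eq ha hp hμprob hμpos hμstat (hlt k)
      rw [hfdef]
      simp only []
      rw [hse, show a * (a ^ k * b) = a ^ (k + 1) * b by rw [pow_succ]; ring]
    have hprod : ∀ K : ℕ,
        (∏ k ∈ Finset.range K, (p / (1 - (1 - p) * Real.exp (a ^ k * b))))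
          = f b / f (a ^ K * b) := by
      intro K
      induction K with
      | zero =>
        rw [Finset.prod_range_zero, pow_zero, one_mul,
          div_self (by simpa using (hpos' 0).ne')]
      | succ K ihK =>
        rw [Finset.prod_range_succ, ihK, hstep K]
        have h1 := (hpos' (K + 1)).ne'
        have h2 := (hdpos K).ne'
        have h3 := hp.1.ne'
        field_simp
    have hofreal : ∀ K : ℕ, (∏ k ∈ Finset.range K,
        ENNReal.ofReal (p / (1 - (1 - p) * Real.exp (a ^ k * b))))
        = ENNReal.ofReal (f b / f (a ^ K * b)) := by
      intro K
      rw [← ENNReal.ofReal_prod_of_nonneg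
        (fun k _ => le_of_lt (div_pos hp.1 (hdpos k))), hprod K]
    have hf1 : Filter.Tendsto (fun K : ℕ => f (a ^ K * b)) Filter.atTop (nhds 1) := by
      have hdct : Filter.Tendsto
          (fun K : ℕ => ∫⁻ x, ENNReal.ofReal (Real.exp ((a ^ K * b) * x)) ∂μ)
          Filter.atTop (nhds (∫⁻ _x, (1:ℝ≥0∞) ∂μ)) := by
        refine tendsto_lintegral_of_dominated_convergence
          (fun x => ENNReal.ofReal (Real.exp ((max b 0) * x)))
          (fun K => Stmt11Aux.meas_exp _) (fun K => ?_) ?_ ?_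
        · refine (Stmt11Aux.ae_nn hμpos).mono fun x hx => ?_
          refine ENNReal.ofReal_le_ofReal
            (Real.exp_le_exp.mpr (mul_le_mul_of_nonneg_right ?_ hx))
          rcases le_or_gt b 0 with h | h
          · exact le_trans (mul_nonpos_of_nonneg_of_nonpos (pow_nonneg ha.1.le K) h)
              (le_max_right _ _)
          · refine le_trans ?_ (le_max_left _ _)
            nlinarith [pow_le_one₀ ha.1.le ha.2.le (n := K)]
        · exact (Stmt11Aux.exp_mom_lt_top ha hp hμprob hμpos hμstat (max_lt hb hL)).ne
        · refine Filter.Eventually.of_forall fun x => ?_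
          have h1 : Filter.Tendsto (fun K : ℕ => (a ^ K * b) * x) Filter.atTop (nhds 0) := by
            have h0 := tendsto_pow_atTop_nhds_zero_of_lt_one ha.1.le ha.2
            have h2 := (h0.mul_const b).mul_const x
            simpa using h2
          have h2 := (Real.continuous_exp.tendsto 0).comp h1
          rw [Real.exp_zero] at h2
          have h3 := (ENNReal.continuous_ofReal.tendsto 1).comp h2
          rw [ENNReal.ofReal_one] at h3
          exact h3
      rw [lintegral_one, measure_univ] at hdct
      have h4 := (ENNReal.tendsto_toReal (by simp : (1:ℝ≥0∞) ≠ ∞)).comp hdct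
      exact h4
    have hreal : Filter.Tendsto (fun K : ℕ => f b / f (a ^ K * b))
        Filter.atTop (nhds (f b)) := by
      have h5 := Filter.Tendsto.div (tendsto_const_nhds (x := f b)) hf1 one_ne_zero
      rw [div_one] at h5
      exact h5
    have hENN := (ENNReal.continuous_ofReal.tendsto (f b)).comp hreal
    have hFb : ENNReal.ofReal (f b) = ∫⁻ x, ENNReal.ofReal (Real.exp (b * x)) ∂μ :=
      ENNReal.ofReal_toReal hfin.ne
    rw [show (ENNReal.ofReal ∘ fun K : ℕ => f b / f (a ^ K * b))
      = fun K : ℕ => ENNReal.ofReal (f b / f (a ^ K * b)) from rfl] at hENN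
    rw [hFb] at hENN
    exact Filter.Tendsto.congr (fun K => (hofreal K).symm) hENN
  · set β0 : ℝ := a * Real.log (1 / (1 - p)) with hβ0def
    have hβ0lt : β0 < Real.log (1 / (1 - p)) := by
      rw [hβ0def]
      nlinarith [ha.1, ha.2]
    have hFβ0 := Stmt11Aux.exp_mom_lt_top ha hp hμprob hμpos hμstat hβ0lt
    set Mc : ℝ := (∫⁻ x, ENNReal.ofReal (Real.exp (β0 * x)) ∂μ).toReal + 1 with hMdef
    have hM1 : 1 ≤ Mc := by
      rw [hMdef]
      linarith [ENNReal.toReal_nonneg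
        (a := ∫⁻ x, ENNReal.ofReal (Real.exp (β0 * x)) ∂μ)]
    refine ⟨p * Mc, mul_pos hp.1 (by linarith), ?_⟩
    intro b hb
    have hfin := Stmt11Aux.exp_mom_lt_top ha hp hμprob hμpos hμstat hb
    have hd : 0 < 1 - (1 - p) * Real.exp b := by
      linarith [Stmt11Aux.hQ_lt_one hp hb]
    have hstep := Stmt11Aux.F_step_eq ha hp hμprob hμpos hμstat hb
    have habM : (∫⁻ x, ENNReal.ofReal (Real.exp ((a * b) * x)) ∂μ).toReal ≤ Mc := by
      rcases le_or_gt b 0 with h | h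
      · have h1 : a * b ≤ 0 := mul_nonpos_of_nonneg_of_nonpos ha.1.le h
        have h2 := Stmt11Aux.F_le_one hμpos h1
        have h3 := ENNReal.toReal_mono (by simp) h2
        rw [ENNReal.toReal_one] at h3
        rw [hMdef]
        linarith [ENNReal.toReal_nonneg
          (a := ∫⁻ x, ENNReal.ofReal (Real.exp (β0 * x)) ∂μ)]
      · have h1 : a * b ≤ β0 := by
          rw [hβ0def]
          nlinarith [ha.1]
        have h2 := Stmt11Aux.F_mono hμpos h1
        have h3 := ENNReal.toReal_mono hFβ0.ne h2
        rw [hMdef]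
        linarith
    calc (∫⁻ x, ENNReal.ofReal (Real.exp (b * x)) ∂μ)
        = ENNReal.ofReal ((∫⁻ x, ENNReal.ofReal (Real.exp (b * x)) ∂μ).toReal) :=
          (ENNReal.ofReal_toReal hfin.ne).symm
      _ ≤ ENNReal.ofReal (p * Mc / (1 - (1 - p) * Real.exp b)) := by
          refine ENNReal.ofReal_le_ofReal ?_
          rw [hstep]
          calc p / (1 - (1 - p) * Real.exp b)
                * (∫⁻ x, ENNReal.ofReal (Real.exp ((a * b) * x)) ∂μ).toReal
              ≤ p / (1 - (1 - p) * Real.exp b) * Mc :=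
                mul_le_mul_of_nonneg_left habM (div_pos hp.1 hd).le
            _ = p * Mc / (1 - (1 - p) * Real.exp b) := by ring

end
end

section
/- For all p, a ∈ (0,1), there exist constants c > 0 and C > 0 such that for all t ≥ 1: c·(1−p)^t ≤ μ_{a,p}([t,∞)) ≤ C·t·(1−p)^t. -/
open MeasureTheory ENNReal NNReal Set Metric Filter Topology

noncomputable section

namespace HPAux


lemma step_lintegral {a p : ℝ} {μ : Measure ℝ} (hstat : HPStationary a p μ) {g : ℝ → ℝ≥0∞} (hg : Measurable g) :
    ∫⁻ x, g x ∂μ = ENNReal.ofReal p * ∫⁻ x, g (a * x) ∂μ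
      + ENNReal.ofReal (1 - p) * ∫⁻ x, g (x + 1) ∂μ := by
  conv_lhs => rw [hstat]
  rw [lintegral_add_measure, lintegral_smul_measure, lintegral_smul_measure,
    lintegral_map hg (measurable_const_mul a), lintegral_map hg (measurable_add_const 1),
    smul_eq_mul, smul_eq_mul]

lemma step_set {a p : ℝ} {μ : Measure ℝ} (ha : 0 < a) (hstat : HPStationary a p μ) (t : ℝ) :
    μ (Ici t) = ENNReal.ofReal p * μ (Ici (t / a)) + ENNReal.ofReal (1 - p) * μ (Ici (t - 1)) := by
  conv_lhs => rw [hstat]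
  rw [Measure.add_apply, Measure.smul_apply, Measure.smul_apply,
    Measure.map_apply (measurable_const_mul a) measurableSet_Ici,
    Measure.map_apply (measurable_add_const 1) measurableSet_Ici]
  have h1 : (fun x : ℝ => a * x) ⁻¹' (Ici t) = Ici (t / a) := by
    ext x
    simp only [mem_preimage, mem_Ici]
    rw [div_le_iff₀ ha, mul_comm]
  have h2 : (fun x : ℝ => x + 1) ⁻¹' (Ici t) = Ici (t - 1) := by
    ext x
    simp only [mem_preimage, mem_Ici]
    constructor <;> intro h <;> linarith
  rw [h1, h2, smul_eq_mul, smul_eq_mul]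

lemma tail_one {μ : Measure ℝ} (hμprob : IsProbabilityMeasure μ) (hμpos : μ (Set.Iio (0:ℝ)) = 0)
    {s : ℝ} (hs : s ≤ 0) : 1 ≤ μ (Ici s) := by
  have h0 : μ (Iio s) = 0 :=
    le_antisymm (le_trans (measure_mono (Iio_subset_Iio hs)) hμpos.le) zero_le
  have : (1:ℝ≥0∞) = μ Set.univ := (measure_univ).symm
  rw [this, ← Iio_union_Ici (a := s)]
  calc μ (Iio s ∪ Ici s) ≤ μ (Iio s) + μ (Ici s) := measure_union_le _ _
    _ = μ (Ici s) := by rw [h0, zero_add]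

lemma lower_iter {a p : ℝ} {μ : Measure ℝ} (ha : 0 < a) (hstat : HPStationary a p μ) (hp1 : p < 1) :
    ∀ (n : ℕ) (t : ℝ), ENNReal.ofReal ((1-p)^n) * μ (Ici (t - n)) ≤ μ (Ici t) := by
  intro n
  induction n with
  | zero => intro t; simp
  | succ n ih =>
    intro t
    have h := step_set ha hstat t
    have h2 : ENNReal.ofReal (1-p) * μ (Ici (t - 1)) ≤ μ (Ici t) := by
      rw [h]; exact le_add_self
    calc ENNReal.ofReal ((1-p)^(n+1)) * μ (Ici (t - (n+1:ℕ)))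
        = ENNReal.ofReal (1-p) * (ENNReal.ofReal ((1-p)^n) * μ (Ici (t - 1 - n))) := by
          rw [← mul_assoc, ← ENNReal.ofReal_mul (by linarith)]
          ring_nf
          congr 2
          · push_cast; ring
      _ ≤ ENNReal.ofReal (1-p) * μ (Ici (t - 1)) := by
          exact mul_le_mul_right (ih (t-1)) _
      _ ≤ μ (Ici t) := h2

noncomputable def uu (μ : Measure ℝ) (σ B : ℝ) : ℝ≥0∞ :=
  ∫⁻ x, ENNReal.ofReal (min (σ ^ x) B) ∂μ

lemma meas_rpow_const {σ : ℝ} (hσ : 0 < σ) : Measurable (fun x : ℝ => σ ^ x) := by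
  have : (fun x : ℝ => σ ^ x) = fun x => Real.exp (Real.log σ * x) := by
    ext x; rw [Real.rpow_def_of_pos hσ]
  rw [this]
  exact Real.measurable_exp.comp (measurable_const.mul measurable_id)

lemma meas_min {σ B : ℝ} (hσ : 0 < σ) :
    Measurable (fun x : ℝ => ENNReal.ofReal (min (σ ^ x) B)) :=
  ENNReal.measurable_ofReal.comp ((meas_rpow_const hσ).min measurable_const)

lemma uu_le {μ : Measure ℝ} [IsProbabilityMeasure μ] {σ B : ℝ} :
    uu μ σ B ≤ ENNReal.ofReal B := by
  calc uu μ σ B ≤ ∫⁻ _, ENNReal.ofReal B ∂μ := by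
        apply lintegral_mono
        intro x
        exact ENNReal.ofReal_le_ofReal (min_le_right _ _)
    _ = ENNReal.ofReal B := by rw [lintegral_const, measure_univ, mul_one]

lemma uu_ne_top {μ : Measure ℝ} [IsProbabilityMeasure μ] {σ B : ℝ} :
    uu μ σ B ≠ ⊤ :=
  ne_top_of_le_ne_top ENNReal.ofReal_ne_top uu_le

lemma uu_step {a p : ℝ} {μ : Measure ℝ} [IsProbabilityMeasure μ]
    (ha : a ∈ Set.Ioo (0:ℝ) 1) (hp : p ∈ Set.Ioo (0:ℝ) 1) (hstat : HPStationary a p μ)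
    {σ B : ℝ} (hσ : 1 ≤ σ) (hB : 0 ≤ B) (hqσ : (1 - p) * σ < 1) :
    uu μ σ B ≤ ENNReal.ofReal (p / (1 - (1 - p) * σ)) * uu μ (σ ^ a) B := by
  have hσ0 : (0:ℝ) < σ := lt_of_lt_of_le one_pos hσ
  have hq0 : (0:ℝ) ≤ 1 - p := by linarith [hp.2]
  have hqσ0 : (0:ℝ) ≤ (1 - p) * σ := mul_nonneg hq0 hσ0.le
  have hpos : (0:ℝ) < 1 - (1 - p) * σ := by linarith
  have hrec := step_lintegral hstat (meas_min (B := B) hσ0)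
  have ha1 : ∫⁻ x, ENNReal.ofReal (min (σ ^ (a * x)) B) ∂μ = uu μ (σ ^ a) B := by
    unfold uu
    apply lintegral_congr
    intro x
    rw [← Real.rpow_mul hσ0.le]
  have ha2 : ∀ x : ℝ, ENNReal.ofReal (min (σ ^ (x + 1)) B)
      ≤ ENNReal.ofReal σ * ENNReal.ofReal (min (σ ^ x) B) := by
    intro x
    rw [← ENNReal.ofReal_mul hσ0.le]
    apply ENNReal.ofReal_le_ofReal
    rcases le_total (σ ^ x) B with h | h
    · rw [min_eq_left h]
      calc min (σ ^ (x+1)) B ≤ σ ^ (x+1) := min_le_left _ _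
        _ = σ * σ ^ x := by rw [Real.rpow_add_one hσ0.ne' x]; ring
    · rw [min_eq_right h]
      calc min (σ ^ (x+1)) B ≤ B := min_le_right _ _
        _ ≤ σ * B := le_mul_of_one_le_left hB hσ
  set U := uu μ σ B with hUdef
  set V := uu μ (σ ^ a) B with hVdef
  set c := ENNReal.ofReal ((1 - p) * σ) with hcdef
  have key : U ≤ ENNReal.ofReal p * V + c * U := by
    calc U = ENNReal.ofReal p * ∫⁻ x, ENNReal.ofReal (min (σ ^ (a * x)) B) ∂μ
          + ENNReal.ofReal (1 - p) * ∫⁻ x, ENNReal.ofReal (min (σ ^ (x + 1)) B) ∂μ := hrec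
      _ ≤ ENNReal.ofReal p * V
          + ENNReal.ofReal (1 - p) * (ENNReal.ofReal σ * U) := by
          rw [ha1]
          apply add_le_add_right
          apply mul_le_mul_right
          calc ∫⁻ x, ENNReal.ofReal (min (σ ^ (x + 1)) B) ∂μ
              ≤ ∫⁻ x, ENNReal.ofReal σ * ENNReal.ofReal (min (σ ^ x) B) ∂μ :=
                lintegral_mono ha2
            _ = ENNReal.ofReal σ * U := lintegral_const_mul _ (meas_min hσ0)
      _ = ENNReal.ofReal p * V + c * U := by
          rw [hcdef, ENNReal.ofReal_mul hq0, mul_assoc]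
  have hc1 : c < 1 := by
    rw [show (1:ℝ≥0∞) = ENNReal.ofReal 1 by simp]
    exact ENNReal.ofReal_lt_ofReal_iff_of_nonneg hqσ0 |>.2 hqσ
  have hsub : (1 - c) * U ≤ ENNReal.ofReal p * V := by
    rw [ENNReal.sub_mul (fun _ _ => uu_ne_top), one_mul, tsub_le_iff_right]
    exact key
  have h1c : (1 : ℝ≥0∞) - c = ENNReal.ofReal (1 - (1 - p) * σ) := by
    rw [ENNReal.ofReal_sub _ hqσ0, ENNReal.ofReal_one]
  have hU : U ≤ (ENNReal.ofReal p * V) / (1 - c) := by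
    rw [ENNReal.le_div_iff_mul_le (Or.inl ?_) (Or.inl ?_)]
    · rw [mul_comm]; exact hsub
    · rw [h1c]; simpa [ENNReal.ofReal_eq_zero] using hpos
    · rw [h1c]; exact ENNReal.ofReal_ne_top
  calc U ≤ (ENNReal.ofReal p * V) / (1 - c) := hU
    _ = (ENNReal.ofReal p / (1 - c)) * V := by
        rw [ENNReal.div_eq_inv_mul, ENNReal.div_eq_inv_mul]; ring
    _ = ENNReal.ofReal (p / (1 - (1 - p) * σ)) * V := by
        rw [h1c, ← ENNReal.ofReal_div_of_pos hpos]

lemma rpow_le_linear {s u : ℝ} (hs : 1 ≤ s) (hu0 : 0 ≤ u) (hu1 : u ≤ 1) :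
    s ^ u ≤ 1 + u * (s - 1) := by
  have hs0 : (0:ℝ) < s := lt_of_lt_of_le one_pos hs
  have h := convexOn_exp.2 (Set.mem_univ (Real.log s)) (Set.mem_univ 0)
    hu0 (by linarith : (0:ℝ) ≤ 1 - u) (by ring)
  simp only [smul_eq_mul, mul_zero, add_zero, Real.exp_zero, Real.exp_log hs0] at h
  calc s ^ u = Real.exp (Real.log s * u) := Real.rpow_def_of_pos hs0 u
    _ = Real.exp (u * Real.log s) := by rw [mul_comm]
    _ ≤ u * s + (1 - u) * 1 := h
    _ = 1 + u * (s - 1) := by ring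

lemma den_pos (ha : a ∈ Set.Ioo (0:ℝ) 1) (hp : p ∈ Set.Ioo (0:ℝ) 1)
    {s u : ℝ} (hs1 : 1 < s) (hqs : (1 - p) * s < 1) (hu0 : 0 < u) (hu1 : u ≤ 1) :
    0 < 1 - (1 - p) * s ^ u := by
  have hq0 : (0:ℝ) < 1 - p := by linarith [hp.2]
  have h1 : s ^ u ≤ s := by
    calc s ^ u ≤ s ^ (1:ℝ) := Real.rpow_le_rpow_of_exponent_le hs1.le hu1
      _ = s := Real.rpow_one s
  nlinarith

lemma factor_bound (ha : a ∈ Set.Ioo (0:ℝ) 1) (hp : p ∈ Set.Ioo (0:ℝ) 1)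
    {s : ℝ} (hs1 : 1 < s) (hqs : (1 - p) * s < 1) (i : ℕ) :
    p / (1 - (1 - p) * s ^ (a ^ (i+1))) ≤ 1 + a ^ (i+1) / (1 - a) := by
  set q := 1 - p with hqdef
  set d := s - 1 with hddef
  set e := a ^ (i+1) with hedef
  have ha0 : (0:ℝ) < a := ha.1
  have ha1 : a < 1 := ha.2
  have hq0 : (0:ℝ) < q := by simp only [hqdef]; linarith [hp.2]
  have hd0 : (0:ℝ) < d := by simp only [hddef]; linarith
  have hqd : q * d < p := by simp only [hqdef, hddef]; nlinarith
  have he0 : (0:ℝ) < e := pow_pos ha0 _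
  have hea : e ≤ a := by
    calc e = a ^ (i+1) := rfl
      _ ≤ a ^ 1 := pow_le_pow_of_le_one ha0.le ha1.le (by omega)
      _ = a := pow_one a
  have he1 : e ≤ 1 := le_trans hea ha1.le
  have hlin : s ^ e ≤ 1 + e * d := rpow_le_linear hs1.le he0.le he1
  have hden : 1 - q * s ^ e ≥ p - q * d * e := by nlinarith
  have hdenpos : (0:ℝ) < p - q * d * e := by
    nlinarith [mul_le_mul_of_nonneg_left he1 (mul_nonneg hq0.le hd0.le)]
  have h1a : (0:ℝ) < 1 - a := by linarith
  set y := e / (1 - a) with hydef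
  have hy0 : (0:ℝ) ≤ y := by positivity
  have hy : y * (1 - a) = e := div_mul_cancel₀ e h1a.ne'
  have h1ae : (1 - a) * (1 + y) = 1 - a + e := by
    rw [mul_add, mul_one, mul_comm (1-a) y, hy]
  have hle : 1 - a + e ≤ 1 := by linarith
  have hkey : p ≤ (1 + y) * (p - q * d * e) := by
    nlinarith [mul_le_mul_of_nonneg_left hle (mul_nonneg (mul_nonneg hq0.le hd0.le) hy0),
      mul_le_mul_of_nonneg_right hqd.le hy0]
  have hfin : p ≤ (1 + y) * (1 - q * s ^ e) := by
    have h2 : (1 + y) * (p - q * d * e) ≤ (1 + y) * (1 - q * s ^ e) :=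
      mul_le_mul_of_nonneg_left hden (by linarith)
    linarith
  rw [div_le_iff₀ (by linarith : (0:ℝ) < 1 - q * s ^ e)]
  linarith

lemma mygeom_le {a : ℝ} (ha0 : 0 < a) (ha1 : a < 1) (m : ℕ) :
    ∑ j ∈ Finset.range m, a ^ j ≤ 1 / (1 - a) := by
  have h1a : (0:ℝ) < 1 - a := by linarith
  rw [geom_sum_eq ha1.ne m,
    show (a ^ m - 1) / (a - 1) = (1 - a ^ m) / (1 - a) by rw [← neg_div_neg_eq]; ring_nf]
  have hm : (0:ℝ) ≤ a ^ m := pow_nonneg ha0.le m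
  rw [div_le_div_iff₀ h1a h1a]
  nlinarith

lemma prod_bound {a p : ℝ} (ha : a ∈ Set.Ioo (0:ℝ) 1) (hp : p ∈ Set.Ioo (0:ℝ) 1)
    {s : ℝ} (hs1 : 1 < s) (hqs : (1 - p) * s < 1) (k : ℕ) :
    ∏ j ∈ Finset.range k, (p / (1 - (1 - p) * s ^ (a ^ j)))
      ≤ (p / (1 - (1 - p) * s)) * Real.exp (1 / (1 - a) ^ 2) := by
  have ha0 := ha.1
  have ha1 := ha.2
  have h1a : (0:ℝ) < 1 - a := by linarith
  have hp0 := hp.1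
  have hq0 : (0:ℝ) < 1 - p := by linarith [hp.2]
  have hden0 : (0:ℝ) < 1 - (1 - p) * s := by linarith
  have hf0_ge : (1:ℝ) ≤ p / (1 - (1 - p) * s) := by
    rw [le_div_iff₀ hden0]
    nlinarith
  have hexp1 : (1:ℝ) ≤ Real.exp (1 / (1 - a) ^ 2) := Real.one_le_exp (by positivity)
  cases k with
  | zero =>
    simp only [Finset.range_zero, Finset.prod_empty]
    nlinarith
  | succ m =>
    rw [Finset.prod_range_succ']
    have hprod : ∏ j ∈ Finset.range m, (p / (1 - (1 - p) * s ^ (a ^ (j+1))))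
        ≤ Real.exp (1 / (1 - a) ^ 2) := by
      calc ∏ j ∈ Finset.range m, (p / (1 - (1 - p) * s ^ (a ^ (j+1))))
          ≤ ∏ j ∈ Finset.range m, Real.exp (a ^ (j+1) / (1 - a)) := by
            apply Finset.prod_le_prod
            · intro j _
              exact div_nonneg hp0.le
                (den_pos ha hp hs1 hqs (pow_pos ha0 _) (pow_le_one₀ ha0.le ha1.le)).le
            · intro j _
              calc p / (1 - (1 - p) * s ^ (a ^ (j+1))) ≤ 1 + a ^ (j+1) / (1 - a) :=
                    factor_bound ha hp hs1 hqs j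
                _ ≤ Real.exp (a ^ (j+1) / (1 - a)) := by
                    have := Real.add_one_le_exp (a ^ (j+1) / (1 - a))
                    linarith
        _ = Real.exp (∑ j ∈ Finset.range m, a ^ (j+1) / (1 - a)) := (Real.exp_sum _ _).symm
        _ ≤ Real.exp (1 / (1 - a) ^ 2) := by
            apply Real.exp_le_exp.2
            calc ∑ j ∈ Finset.range m, a ^ (j+1) / (1 - a)
                = (∑ j ∈ Finset.range m, a ^ (j+1)) / (1 - a) := by rw [← Finset.sum_div]
              _ ≤ (1 / (1 - a)) / (1 - a) := by
                  gcongr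
                  calc ∑ j ∈ Finset.range m, a ^ (j+1)
                      = (∑ j ∈ Finset.range m, a ^ j) * a := by
                        rw [Finset.sum_mul]
                        exact Finset.sum_congr rfl fun j _ => (pow_succ a j)
                    _ ≤ (1 / (1 - a)) * 1 := by
                        apply mul_le_mul (mygeom_le ha0 ha1 m) ha1.le ha0.le (by positivity)
                    _ = 1 / (1 - a) := mul_one _
              _ = 1 / (1 - a) ^ 2 := by rw [div_div, sq]
    have hzero : p / (1 - (1 - p) * s ^ (a ^ 0)) = p / (1 - (1 - p) * s) := by
      norm_num
    rw [hzero]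
    have hf0nn : (0:ℝ) ≤ p / (1 - (1 - p) * s) := by positivity
    calc (∏ j ∈ Finset.range m, (p / (1 - (1 - p) * s ^ (a ^ (j+1))))) * (p / (1 - (1 - p) * s))
        ≤ Real.exp (1 / (1 - a) ^ 2) * (p / (1 - (1 - p) * s)) :=
          mul_le_mul_of_nonneg_right hprod hf0nn
      _ = (p / (1 - (1 - p) * s)) * Real.exp (1 / (1 - a) ^ 2) := mul_comm _ _

lemma uu_iter {a p : ℝ} {μ : Measure ℝ} [IsProbabilityMeasure μ]
    (ha : a ∈ Set.Ioo (0:ℝ) 1) (hp : p ∈ Set.Ioo (0:ℝ) 1) (hstat : HPStationary a p μ)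
    {s B : ℝ} (hs1 : 1 < s) (hB : 0 ≤ B) (hqs : (1 - p) * s < 1) (k : ℕ) :
    uu μ s B ≤ ENNReal.ofReal (∏ j ∈ Finset.range k, (p / (1 - (1 - p) * s ^ (a ^ j))))
      * uu μ (s ^ (a ^ k)) B := by
  have ha0 := ha.1
  have ha1 := ha.2
  have hs0 : (0:ℝ) < s := lt_trans one_pos hs1
  induction k with
  | zero =>
    simp only [pow_zero, Real.rpow_one, Finset.range_zero, Finset.prod_empty,
      ENNReal.ofReal_one, one_mul]
    exact le_rfl
  | succ k ih =>
    have hσ1 : 1 ≤ s ^ (a ^ k) := by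
      calc (1:ℝ) = s ^ (0:ℝ) := (Real.rpow_zero s).symm
        _ ≤ s ^ (a ^ k) := Real.rpow_le_rpow_of_exponent_le hs1.le (pow_pos ha0 k).le
    have hσs : s ^ (a ^ k) ≤ s := by
      calc s ^ (a ^ k) ≤ s ^ (1:ℝ) :=
            Real.rpow_le_rpow_of_exponent_le hs1.le (pow_le_one₀ ha0.le ha1.le)
        _ = s := Real.rpow_one s
    have hqσ : (1 - p) * s ^ (a ^ k) < 1 := by
      have hq0 : (0:ℝ) ≤ 1 - p := by linarith [hp.2]
      nlinarith
    have hstep := uu_step ha hp hstat hσ1 hB hqσ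
    have hpow : (s ^ (a ^ k)) ^ a = s ^ (a ^ (k+1)) := by
      rw [← Real.rpow_mul hs0.le, ← pow_succ]
    rw [hpow] at hstep
    calc uu μ s B
        ≤ ENNReal.ofReal (∏ j ∈ Finset.range k, (p / (1 - (1 - p) * s ^ (a ^ j))))
          * uu μ (s ^ (a ^ k)) B := ih
      _ ≤ ENNReal.ofReal (∏ j ∈ Finset.range k, (p / (1 - (1 - p) * s ^ (a ^ j))))
          * (ENNReal.ofReal (p / (1 - (1 - p) * s ^ (a ^ k))) * uu μ (s ^ (a ^ (k+1))) B) :=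
          mul_le_mul_right hstep _
      _ = ENNReal.ofReal (∏ j ∈ Finset.range (k+1), (p / (1 - (1 - p) * s ^ (a ^ j))))
          * uu μ (s ^ (a ^ (k+1))) B := by
          rw [Finset.prod_range_succ, ENNReal.ofReal_mul ?hnn, mul_assoc]
          case hnn =>
            exact Finset.prod_nonneg fun j _ => div_nonneg hp.1.le
              (den_pos ha hp hs1 hqs (pow_pos ha0 _) (pow_le_one₀ ha0.le ha1.le)).le

-- lower bound: tail against uu
lemma uu_ge_tail {μ : Measure ℝ} {σ t : ℝ} (hσ : 1 ≤ σ) :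
    ENNReal.ofReal (σ ^ t) * μ (Ici t) ≤ uu μ σ (σ ^ t) := by
  have hσ0 : (0:ℝ) < σ := lt_of_lt_of_le one_pos hσ
  calc ENNReal.ofReal (σ ^ t) * μ (Ici t)
      = ∫⁻ _ in Ici t, ENNReal.ofReal (σ ^ t) ∂μ := (setLIntegral_const _ _).symm
    _ ≤ ∫⁻ x in Ici t, ENNReal.ofReal (min (σ ^ x) (σ ^ t)) ∂μ := by
        apply setLIntegral_mono (meas_min hσ0)
        intro x hx
        apply ENNReal.ofReal_le_ofReal
        apply le_min (Real.rpow_le_rpow_of_exponent_le hσ hx) le_rfl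
    _ ≤ uu μ σ (σ ^ t) := setLIntegral_le_lintegral _ _

-- upper bound: split at L
lemma uu_split {μ : Measure ℝ} [IsProbabilityMeasure μ] {σ B : ℝ} (hσ : 1 ≤ σ) (hB : 0 ≤ B)
    (L : ℝ) :
    uu μ σ B ≤ ENNReal.ofReal (σ ^ L) + ENNReal.ofReal B * μ (Ici L) := by
  have hσ0 : (0:ℝ) < σ := lt_of_lt_of_le one_pos hσ
  have hpt : ∀ x : ℝ, ENNReal.ofReal (min (σ ^ x) B)
      ≤ ENNReal.ofReal (σ ^ L) + (Ici L).indicator (fun _ => ENNReal.ofReal B) x := by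
    intro x
    rcases le_or_gt L x with h | h
    · rw [indicator_of_mem (mem_Ici.2 h)]
      calc ENNReal.ofReal (min (σ ^ x) B) ≤ ENNReal.ofReal B :=
            ENNReal.ofReal_le_ofReal (min_le_right _ _)
        _ ≤ _ := le_add_self
    · rw [indicator_of_notMem (by simpa using h.not_ge)]
      rw [add_zero]
      apply ENNReal.ofReal_le_ofReal
      exact le_trans (min_le_left _ _) (Real.rpow_le_rpow_of_exponent_le hσ h.le)
  calc uu μ σ B
      ≤ ∫⁻ x, (ENNReal.ofReal (σ ^ L) + (Ici L).indicator (fun _ => ENNReal.ofReal B) x) ∂μ :=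
        lintegral_mono hpt
    _ = ENNReal.ofReal (σ ^ L) + ENNReal.ofReal B * μ (Ici L) := by
        rw [lintegral_add_left measurable_const,
          lintegral_indicator measurableSet_Ici, setLIntegral_const, lintegral_const,
          measure_univ, mul_one]

lemma tail_small (μ : Measure ℝ) [IsProbabilityMeasure μ] {ε : ℝ≥0∞} (hε : 0 < ε) :
    ∃ L : ℝ, 0 ≤ L ∧ μ (Ici L) ≤ ε := by
  have hT : Tendsto (fun n : ℕ => μ (Ici (n:ℝ))) atTop (nhds (μ (⋂ n : ℕ, Ici (n:ℝ)))) := by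
    have := MeasureTheory.tendsto_measure_iInter_atTop (μ := μ) (s := fun n : ℕ => Ici (n:ℝ))
      (fun n => (measurableSet_Ici).nullMeasurableSet)
      (fun m n hmn => Ici_subset_Ici.2 (by exact_mod_cast hmn))
      ⟨0, measure_ne_top μ _⟩
    exact this
  have hempty : (⋂ n : ℕ, Ici ((n:ℝ))) = ∅ := by
    ext x
    simp only [mem_iInter, mem_Ici, mem_empty_iff_false, iff_false, not_forall, not_le]
    obtain ⟨n, hn⟩ := exists_nat_gt x
    exact ⟨n, hn⟩
  rw [hempty, measure_empty] at hT
  have := hT.eventually_lt_const hε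
  rw [eventually_atTop] at this
  obtain ⟨n, hn⟩ := this
  exact ⟨n, Nat.cast_nonneg n, (hn n le_rfl).le⟩

lemma upper_main {a p : ℝ} {μ : Measure ℝ} [IsProbabilityMeasure μ]
    (ha : a ∈ Set.Ioo (0:ℝ) 1) (hp : p ∈ Set.Ioo (0:ℝ) 1) (hstat : HPStationary a p μ)
    {t : ℝ} (ht : max 1 (1/p) ≤ t) :
    μ (Ici t) ≤ ENNReal.ofReal
      ((6 * Real.exp (1 / (1 - a) ^ 2) * Real.exp 1) * t * (1 - p) ^ t) := by
  set K := Real.exp (1 / (1 - a) ^ 2) with hK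
  have hK1 : 1 ≤ K := Real.one_le_exp (by positivity)
  have hp0 := hp.1
  have hp1 := hp.2
  set q := 1 - p with hq
  have hq0 : (0:ℝ) < q := by simp only [hq]; linarith
  have hq1 : q < 1 := by simp only [hq]; linarith
  have ht1 : (1:ℝ) ≤ t := le_trans (le_max_left _ _) ht
  have ht0 : (0:ℝ) < t := lt_of_lt_of_le one_pos ht1
  have htp : 1/p ≤ t := le_trans (le_max_right _ _) ht
  have hx : 1/(2*t) < p := by
    rw [div_lt_iff₀ (by positivity)]
    rw [div_le_iff₀ hp0] at htp
    nlinarith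
  have hxpos : (0:ℝ) < 1/(2*t) := by positivity
  have hxhalf : 1/(2*t) ≤ 1/2 := by
    rw [div_le_div_iff₀ (by positivity) (by positivity)]
    linarith
  set s := (1 - 1/(2*t)) / q with hs
  have hqs_eq : q * s = 1 - 1/(2*t) := by
    rw [hs, mul_div_cancel₀ _ hq0.ne']
  have hs1 : 1 < s := by
    rw [hs, lt_div_iff₀ hq0]
    simp only [hq]
    linarith
  have hs0 : (0:ℝ) < s := lt_trans one_pos hs1
  have hqs : q * s < 1 := by rw [hqs_eq]; linarith
  have h1mqs : 1 - q * s = 1/(2*t) := by rw [hqs_eq]; ring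
  set B := s ^ t with hB
  have hB0 : (0:ℝ) < B := Real.rpow_pos_of_pos hs0 t
  -- choose L
  obtain ⟨L, hL0, hL⟩ := tail_small μ (ε := ENNReal.ofReal (s ^ (-t)))
    (ENNReal.ofReal_pos.2 (Real.rpow_pos_of_pos hs0 _))
  -- choose k
  have hlog2 : (0:ℝ) < Real.log 2 := Real.log_pos one_lt_two
  have htend : Filter.Tendsto (fun k : ℕ => a ^ k * (L * Real.log s)) atTop (nhds 0) := by
    have := tendsto_pow_atTop_nhds_zero_of_lt_one ha.1.le ha.2
    simpa using this.mul_const (L * Real.log s)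
  obtain ⟨k, hk⟩ := (Filter.eventually_atTop).1 (htend.eventually_lt_const hlog2)
  have hak : a ^ k * (L * Real.log s) < Real.log 2 := hk k le_rfl
  -- bound (s^{a^k})^L ≤ 2
  have hsk1 : 1 ≤ s ^ (a ^ k) := by
    calc (1:ℝ) = s ^ (0:ℝ) := (Real.rpow_zero s).symm
      _ ≤ s ^ (a ^ k) := Real.rpow_le_rpow_of_exponent_le hs1.le (pow_pos ha.1 k).le
  have hskL : (s ^ (a ^ k)) ^ L ≤ 2 := by
    rw [← Real.rpow_mul hs0.le]
    rw [Real.rpow_def_of_pos hs0]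
    calc Real.exp (Real.log s * (a ^ k * L)) ≤ Real.exp (Real.log 2) := by
          apply Real.exp_le_exp.2
          calc Real.log s * (a ^ k * L) = a ^ k * (L * Real.log s) := by ring
            _ ≤ Real.log 2 := hak.le
      _ = 2 := Real.exp_log two_pos
  -- main chain
  have hchain : ENNReal.ofReal (s ^ t) * μ (Ici t) ≤ ENNReal.ofReal (6 * K * (p * t)) := by
    calc ENNReal.ofReal (s ^ t) * μ (Ici t)
        ≤ uu μ s (s ^ t) := uu_ge_tail hs1.le
      _ ≤ ENNReal.ofReal (∏ j ∈ Finset.range k, (p / (1 - q * s ^ (a ^ j))))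
          * uu μ (s ^ (a ^ k)) (s ^ t) := uu_iter ha hp hstat hs1 hB0.le hqs k
      _ ≤ ENNReal.ofReal ((p / (1 - q * s)) * K)
          * (ENNReal.ofReal ((s ^ (a ^ k)) ^ L) + ENNReal.ofReal (s ^ t) * μ (Ici L)) := by
          apply mul_le_mul'
          · exact ENNReal.ofReal_le_ofReal (prod_bound ha hp hs1 hqs k)
          · exact uu_split hsk1 hB0.le L
      _ ≤ ENNReal.ofReal ((p / (1 - q * s)) * K) * (ENNReal.ofReal 2 + 1) := by
          apply mul_le_mul_right
          apply add_le_add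
          · exact ENNReal.ofReal_le_ofReal hskL
          · calc ENNReal.ofReal (s ^ t) * μ (Ici L)
                ≤ ENNReal.ofReal (s ^ t) * ENNReal.ofReal (s ^ (-t)) := mul_le_mul_right hL _
              _ = ENNReal.ofReal (s ^ t * s ^ (-t)) :=
                  (ENNReal.ofReal_mul (Real.rpow_nonneg hs0.le t)).symm
              _ = 1 := by
                  rw [← Real.rpow_add hs0, add_neg_cancel, Real.rpow_zero, ENNReal.ofReal_one]
      _ = ENNReal.ofReal (6 * K * (p * t)) := by
          rw [show (1:ℝ≥0∞) = ENNReal.ofReal 1 from ENNReal.ofReal_one.symm,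
            ← ENNReal.ofReal_add (by norm_num) (by norm_num),
            ← ENNReal.ofReal_mul (by
              rw [h1mqs]
              positivity)]
          congr 1
          rw [h1mqs]
          field_simp
          ring
  -- divide through
  have hst0 : ENNReal.ofReal (s ^ t) ≠ 0 :=
    (ENNReal.ofReal_pos.2 (Real.rpow_pos_of_pos hs0 t)).ne'
  have hfin : μ (Ici t) ≤ ENNReal.ofReal (6 * K * (p * t) * s ^ (-t)) := by
    have hdiv : μ (Ici t) ≤ ENNReal.ofReal (6 * K * (p * t)) / ENNReal.ofReal (s ^ t) := by
      rw [ENNReal.le_div_iff_mul_le (Or.inl hst0) (Or.inl ENNReal.ofReal_ne_top)]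
      rw [mul_comm]
      exact hchain
    calc μ (Ici t) ≤ ENNReal.ofReal (6 * K * (p * t)) / ENNReal.ofReal (s ^ t) := hdiv
      _ = ENNReal.ofReal (6 * K * (p * t) / s ^ t) :=
          (ENNReal.ofReal_div_of_pos (Real.rpow_pos_of_pos hs0 t)).symm
      _ = ENNReal.ofReal (6 * K * (p * t) * s ^ (-t)) := by
          rw [Real.rpow_neg hs0.le, div_eq_mul_inv]
  -- bound s^{-t} ≤ e * q^t
  have hsneg : s ^ (-t) ≤ Real.exp 1 * q ^ t := by
    set x := 1/(2*t) with hxdef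
    have hw0 : (0:ℝ) < 1 - x := by linarith
    have hlogineq : -Real.log (1 - x) ≤ 1/t := by
      have h1 := Real.log_le_sub_one_of_pos (inv_pos.2 hw0)
      rw [Real.log_inv] at h1
      have htx : t * x = 1/2 := by rw [hxdef]; field_simp; try ring
      have h2 : t * (1/t) = 1 := by field_simp
      have hinv : (1 - x)⁻¹ ≤ 1/t + 1 := by
        rw [inv_eq_one_div, div_le_iff₀ hw0]
        nlinarith [mul_pos ht0 hw0]
      linarith
    have hsval : s ^ (-t) = Real.exp (-t * Real.log s) := by
      rw [Real.rpow_def_of_pos hs0]; ring_nf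
    have hlogs : Real.log s = Real.log (1 - x) - Real.log q := by
      rw [hs, Real.log_div hw0.ne' hq0.ne']
    have hqt : q ^ t = Real.exp (t * Real.log q) := by
      rw [Real.rpow_def_of_pos hq0]; ring_nf
    rw [hsval, hqt, ← Real.exp_add]
    apply Real.exp_le_exp.2
    rw [hlogs]
    have h3 := mul_le_mul_of_nonneg_left hlogineq ht0.le
    have h4 : t * (1/t) = 1 := by field_simp
    nlinarith
  -- final
  calc μ (Ici t) ≤ ENNReal.ofReal (6 * K * (p * t) * s ^ (-t)) := hfin
    _ ≤ ENNReal.ofReal ((6 * K * Real.exp 1) * t * q ^ t) := by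
        apply ENNReal.ofReal_le_ofReal
        have hqt0 : (0:ℝ) ≤ q ^ t := (Real.rpow_pos_of_pos hq0 t).le
        have hKe : (0:ℝ) ≤ 6 * K * Real.exp 1 := by positivity
        calc 6 * K * (p * t) * s ^ (-t) ≤ 6 * K * (p * t) * (Real.exp 1 * q ^ t) := by
              apply mul_le_mul_of_nonneg_left hsneg (by positivity)
          _ = ((6 * K * Real.exp 1) * t * q ^ t) * p := by ring
          _ ≤ ((6 * K * Real.exp 1) * t * q ^ t) * 1 := by
              apply mul_le_mul_of_nonneg_left hp1.le
              exact mul_nonneg (mul_nonneg hKe ht0.le) hqt0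
          _ = (6 * K * Real.exp 1) * t * q ^ t := mul_one _


end HPAux

open HPAux

/-- **Corollary (tail estimate for `μ_{a,p}`).** For all `p, a ∈ (0,1)` there are
constants `c, C > 0` such that for all `t ≥ 1`:
`c·(1-p)^t ≤ μ_{a,p}([t,∞)) ≤ C·t·(1-p)^t`. -/
theorem stmt12 (a p : ℝ) (ha : a ∈ Set.Ioo (0:ℝ) 1) (hp : p ∈ Set.Ioo (0:ℝ) 1)
    (μ : Measure ℝ) (hμprob : IsProbabilityMeasure μ)
    (hμpos : μ (Set.Iio (0:ℝ)) = 0) (hμstat : HPStationary a p μ) :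
    ∃ c C : ℝ, 0 < c ∧ 0 < C ∧ ∀ t : ℝ, 1 ≤ t →
      ENNReal.ofReal (c * (1 - p) ^ t) ≤ μ (Set.Ici t) ∧
      μ (Set.Ici t) ≤ ENNReal.ofReal (C * t * (1 - p) ^ t) := by
  have hp0 := hp.1
  have hp1 := hp.2
  set q := 1 - p with hqdef
  have hq0 : (0:ℝ) < q := by simp only [hqdef]; linarith
  have hq1 : q < 1 := by simp only [hqdef]; linarith
  set t₀ : ℝ := max 1 (1/p) with ht₀def
  have ht₀1 : (1:ℝ) ≤ t₀ := le_max_left _ _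
  set C₀ : ℝ := 6 * Real.exp (1 / (1 - a) ^ 2) * Real.exp 1 with hC₀def
  have hC₀0 : 0 < C₀ := by positivity
  set C₁ : ℝ := (1/q) ^ t₀ with hC₁def
  have hC₁0 : 0 < C₁ := Real.rpow_pos_of_pos (by positivity) _
  have hC₁1 : 1 ≤ C₁ := by
    apply Real.one_le_rpow (by rw [le_div_iff₀ hq0]; linarith) (by linarith)
  refine ⟨q, max C₀ C₁, hq0, lt_of_lt_of_le hC₀0 (le_max_left _ _), ?_⟩
  intro t ht1
  have ht0 : (0:ℝ) < t := lt_of_lt_of_le one_pos ht1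
  have hqt0 : (0:ℝ) < q ^ t := Real.rpow_pos_of_pos hq0 t
  constructor
  · -- lower bound
    set n := ⌈t⌉₊ with hn
    have htn : t - n ≤ 0 := by
      have := Nat.le_ceil t
      linarith
    have hnt : (n:ℝ) ≤ t + 1 := by
      have := Nat.ceil_lt_add_one (by linarith : (0:ℝ) ≤ t)
      linarith
    have h1 : ENNReal.ofReal (q * q ^ t) ≤ ENNReal.ofReal (q ^ n) := by
      apply ENNReal.ofReal_le_ofReal
      calc q * q ^ t = q ^ (t + 1) := by
            rw [Real.rpow_add hq0, Real.rpow_one]; ring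
        _ ≤ q ^ (n:ℝ) := Real.rpow_le_rpow_of_exponent_ge hq0 hq1.le hnt
        _ = q ^ n := Real.rpow_natCast q n
    calc ENNReal.ofReal (q * q ^ t) = ENNReal.ofReal (q * q ^ t) * 1 := (mul_one _).symm
      _ ≤ ENNReal.ofReal (q ^ n) * μ (Ici (t - n)) :=
          mul_le_mul' h1 (tail_one hμprob hμpos htn)
      _ ≤ μ (Ici t) := lower_iter ha.1 hμstat hp1 n t
  · -- upper bound
    rcases le_or_gt t₀ t with h | h
    · calc μ (Ici t) ≤ ENNReal.ofReal (C₀ * t * q ^ t) := upper_main ha hp hμstat h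
        _ ≤ ENNReal.ofReal (max C₀ C₁ * t * q ^ t) := by
            apply ENNReal.ofReal_le_ofReal
            apply mul_le_mul_of_nonneg_right _ hqt0.le
            exact mul_le_mul_of_nonneg_right (le_max_left _ _) ht0.le
    · have hμ1 : μ (Ici t) ≤ 1 := prob_le_one
      have hge : (1:ℝ) ≤ max C₀ C₁ * t * q ^ t := by
        have hqq : C₁ * q ^ t = q ^ (t - t₀) := by
          rw [hC₁def, one_div, Real.inv_rpow hq0.le, ← Real.rpow_neg hq0.le,
            ← Real.rpow_add hq0]
          congr 1
          ring
        have h2 : (1:ℝ) ≤ q ^ (t - t₀) := by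
          calc (1:ℝ) = q ^ (0:ℝ) := (Real.rpow_zero q).symm
            _ ≤ q ^ (t - t₀) := Real.rpow_le_rpow_of_exponent_ge hq0 hq1.le (by linarith)
        have h3 : C₁ ≤ max C₀ C₁ := le_max_right _ _
        calc (1:ℝ) ≤ q ^ (t - t₀) := h2
          _ = C₁ * q ^ t := hqq.symm
          _ = C₁ * 1 * q ^ t := by ring
          _ ≤ max C₀ C₁ * t * q ^ t := by
              apply mul_le_mul_of_nonneg_right _ hqt0.le
              apply mul_le_mul h3 ht1 one_pos.le (by positivity)
      calc μ (Ici t) ≤ 1 := hμ1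
        _ ≤ ENNReal.ofReal (max C₀ C₁ * t * q ^ t) := ENNReal.one_le_ofReal.2 hge

end
end

section
/- For any two IFS (Φ₀,η₀) and (Φ₁,η₁) on a complete separable metric space (X,d) with Lipschitz maps, any q > 0, any x₀ ∈ X and any ν ∈ 𝒫_q(X): W_q(L₀*ν, L₁*ν) ≤ D·W_{x₀,q}((Φ₀,η₀),(Φ₁,η₁)), where L₀*, L₁* are the dual transfer operators of the two IFS, D = 1 + m_{x₀}^q(ν) when q ≤ 1, and D = 2^{1−1/q}·(1 + m_{x₀}^q(ν))^{1/q} when q > 1. -/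
open MeasureTheory ENNReal NNReal Set Metric Filter Topology

noncomputable section

/-- The pointed Lipschitz distance between maps:
`d_{x₀}(f,g) = sup_x d(f(x),g(x))/(1+d(x,x₀))`. -/
def mapDist {X : Type*} [MetricSpace X] (x₀ : X) (f g : X → X) : ℝ≥0∞ :=
  ⨆ x : X, ENNReal.ofReal (dist (f x) (g x) / (1 + dist x x₀))

/-- The Wasserstein-like cost between two IFS:
`C_{x₀,q} = inf over couplings γ of η₀,η₁ of ∫ d_{x₀}(φ_i,ψ_j)^q dγ(i,j)`. -/
def ifsCost {X : Type*} [MetricSpace X] {I₀ I₁ : Type*}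
    [MeasurableSpace I₀] [MeasurableSpace I₁] (q : ℝ) (x₀ : X)
    (φ : I₀ → X → X) (η₀ : Measure I₀) (ψ : I₁ → X → X) (η₁ : Measure I₁) : ℝ≥0∞ :=
  ⨅ (γ : Measure (I₀ × I₁)) (_ : IsCoupling γ η₀ η₁),
    ∫⁻ p, (mapDist x₀ (φ p.1) (ψ p.2)) ^ q ∂γ

/-- The Wasserstein-like distance between two IFS: `W_{x₀,q} = C_{x₀,q}^{min(1,1/q)}`. -/
def ifsDist {X : Type*} [MetricSpace X] {I₀ I₁ : Type*}
    [MeasurableSpace I₀] [MeasurableSpace I₁] (q : ℝ) (x₀ : X)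
    (φ : I₀ → X → X) (η₀ : Measure I₀) (ψ : I₁ → X → X) (η₁ : Measure I₁) : ℝ≥0∞ :=
  ifsCost q x₀ φ η₀ ψ η₁ ^ min 1 (1 / q)

private lemma iSup_dense_eq {X : Type*} [MetricSpace X] {h : X → ℝ≥0∞} (hc : Continuous h)
    {s : Set X} (hd : Dense s) : ⨆ x : X, h x = ⨆ x : s, h x := by
  apply le_antisymm
  · refine iSup_le fun x => ?_
    have hx : h x ∈ closure (h '' s) :=
      image_closure_subset_closure_image hc ⟨x, hd x, rfl⟩
    have h2 : h '' s ⊆ Iic (⨆ y : s, h y) := by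
      rintro _ ⟨y, hy, rfl⟩
      exact le_iSup (fun z : s => h (z : X)) ⟨y, hy⟩
    exact (isClosed_Iic.closure_subset_iff.mpr h2) hx
  · exact iSup_le fun y => le_iSup h (y : X)

private lemma mapDist_eq_iSup_dense {X : Type*} [MetricSpace X] (x₀ : X) {f g : X → X}
    (hf : Continuous f) (hg : Continuous g) {s : Set X} (hd : Dense s) :
    mapDist x₀ f g = ⨆ x : s, ENNReal.ofReal (dist (f x) (g x) / (1 + dist (x : X) x₀)) := by
  refine iSup_dense_eq ?_ hd
  refine ENNReal.continuous_ofReal.comp ?_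
  refine (hf.dist hg).div (continuous_const.add (continuous_id.dist continuous_const)) ?_
  intro x
  have : (0:ℝ) < 1 + dist x x₀ := by positivity
  exact this.ne'

private lemma ofReal_dist_le {X : Type*} [MetricSpace X] (x₀ : X) (f g : X → X) {q : ℝ}
    (hq : 0 ≤ q) (x : X) :
    ENNReal.ofReal (dist (f x) (g x) ^ q)
      ≤ mapDist x₀ f g ^ q * ENNReal.ofReal ((1 + dist x x₀) ^ q) := by
  have hpos : (0:ℝ) < 1 + dist x x₀ := by positivity
  rw [← ENNReal.ofReal_rpow_of_nonneg dist_nonneg hq,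
      ← ENNReal.ofReal_rpow_of_nonneg hpos.le hq,
      ← ENNReal.mul_rpow_of_nonneg _ _ hq]
  refine ENNReal.rpow_le_rpow ?_ hq
  have hd : dist (f x) (g x) = dist (f x) (g x) / (1 + dist x x₀) * (1 + dist x x₀) :=
    (div_mul_cancel₀ _ hpos.ne').symm
  rw [hd, ENNReal.ofReal_mul (by positivity)]
  exact mul_le_mul_left
    (le_iSup (fun z => ENNReal.ofReal (dist (f z) (g z) / (1 + dist z x₀))) x) _

private lemma dualTransfer_eq_map {X : Type*} [MeasurableSpace X]
    {I : Type*} [MeasurableSpace I] (φ : I → X → X)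
    (hφ : Measurable fun p : I × X => φ p.1 p.2) (η : Measure I) (ν : Measure X) [SFinite ν] :
    dualTransfer φ η ν = (η.prod ν).map fun p => φ p.1 p.2 := by
  have hmeas : Measurable fun i => ν.map (φ i) := by
    apply Measure.measurable_of_measurable_coe
    intro t ht
    have h1 : ∀ i, ν.map (φ i) t = ν (Prod.mk i ⁻¹' ((fun p : I × X => φ p.1 p.2) ⁻¹' t)) := by
      intro i
      rw [Measure.map_apply (show Measurable (φ i) from hφ.comp measurable_prodMk_left) ht]
      rfl
    simp_rw [h1]
    exact measurable_measure_prodMk_left (hφ ht)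
  ext t ht
  rw [dualTransfer, Measure.bind_apply ht hmeas.aemeasurable,
      Measure.map_apply hφ ht, Measure.prod_apply (hφ ht)]
  refine lintegral_congr fun i => ?_
  rw [Measure.map_apply (show Measurable (φ i) from hφ.comp measurable_prodMk_left) ht]
  rfl

/-- **Lemma.** For any two IFS with Lipschitz maps, any `q > 0` and any
`ν ∈ 𝒫_q(X)`: `W_q(L₀*ν, L₁*ν) ≤ D·W_{x₀,q}((Φ₀,η₀),(Φ₁,η₁))`, with
`D = 1 + m_{x₀}^q(ν)` when `q ≤ 1` and `D = 2^{1-1/q}(1+m_{x₀}^q(ν))^{1/q}`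
when `q > 1`. -/
theorem stmt14
    {X : Type*} [MetricSpace X] [CompleteSpace X] [TopologicalSpace.SeparableSpace X]
    [MeasurableSpace X] [BorelSpace X]
    {I₀ I₁ : Type*} [MeasurableSpace I₀] [MeasurableSpace I₁]
    (φ : I₀ → X → X) (ψ : I₁ → X → X)
    (hφlip : ∀ i, ∃ K : ℝ≥0, LipschitzWith K (φ i))
    (hψlip : ∀ j, ∃ K : ℝ≥0, LipschitzWith K (ψ j))
    (hφmeas : Measurable fun p : I₀ × X => φ p.1 p.2)
    (hψmeas : Measurable fun p : I₁ × X => ψ p.1 p.2)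
    (η₀ : Measure I₀) (η₁ : Measure I₁)
    [IsProbabilityMeasure η₀] [IsProbabilityMeasure η₁]
    (q : ℝ) (hq : 0 < q) (x₀ : X)
    (ν : Measure X) (hνprob : IsProbabilityMeasure ν) (hνmom : moment q x₀ ν < ∞) :
    (q ≤ 1 → wDist q (dualTransfer φ η₀ ν) (dualTransfer ψ η₁ ν)
      ≤ (1 + moment q x₀ ν) * ifsDist q x₀ φ η₀ ψ η₁) ∧
    (1 < q → wDist q (dualTransfer φ η₀ ν) (dualTransfer ψ η₁ ν)
      ≤ ENNReal.ofReal (2 ^ (1 - 1/q)) * (1 + moment q x₀ ν) ^ (1/q)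
          * ifsDist q x₀ φ η₀ ψ η₁) := by
  haveI hν : IsProbabilityMeasure ν := hνprob
  obtain ⟨s, hsc, hsd⟩ := TopologicalSpace.exists_countable_dense X
  haveI : Countable s := hsc.to_subtype
  have hφc : ∀ i, Continuous (φ i) := fun i => (hφlip i).choose_spec.continuous
  have hψc : ∀ j, Continuous (ψ j) := fun j => (hψlip j).choose_spec.continuous
  have hmdmeas : Measurable fun p : I₀ × I₁ => mapDist x₀ (φ p.1) (ψ p.2) ^ q := by
    have hrw : ∀ p : I₀ × I₁, mapDist x₀ (φ p.1) (ψ p.2)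
        = ⨆ x : s, ENNReal.ofReal (dist (φ p.1 x) (ψ p.2 x) / (1 + dist (x : X) x₀)) :=
      fun p => mapDist_eq_iSup_dense x₀ (hφc p.1) (hψc p.2) hsd
    refine (ENNReal.continuous_rpow_const.measurable).comp ?_
    simp_rw [hrw]
    refine Measurable.iSup fun x => ?_
    refine ENNReal.measurable_ofReal.comp ?_
    exact ((hφmeas.comp (measurable_fst.prodMk measurable_const)).dist
      (hψmeas.comp (measurable_snd.prodMk measurable_const))).div_const _
  have hgmeas : Measurable fun x : X => ENNReal.ofReal ((1 + dist x x₀) ^ q) :=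
    (ENNReal.continuous_ofReal.comp ((Real.continuous_rpow_const hq.le).comp
      (continuous_const.add (continuous_id.dist continuous_const)))).measurable
  have hMne : moment q x₀ ν ≠ ∞ := hνmom.ne
  have h1Mne : (1 + moment q x₀ ν) ≠ ∞ := ENNReal.add_ne_top.mpr ⟨ENNReal.one_ne_top, hMne⟩
  -- the key estimate on costs
  have key : ∀ C : ℝ≥0∞, C ≠ ∞ →
      (∫⁻ x, ENNReal.ofReal ((1 + dist x x₀) ^ q) ∂ν) ≤ C →
      wCost q (dualTransfer φ η₀ ν) (dualTransfer ψ η₁ ν)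
        ≤ C * ifsCost q x₀ φ η₀ ψ η₁ := by
    intro C hCtop hCB
    have main : ∀ γ : Measure (I₀ × I₁), IsCoupling γ η₀ η₁ →
        wCost q (dualTransfer φ η₀ ν) (dualTransfer ψ η₁ ν)
          ≤ C * ∫⁻ p, mapDist x₀ (φ p.1) (ψ p.2) ^ q ∂γ := by
      intro γ hγ
      haveI hγprob : IsProbabilityMeasure γ := by
        constructor
        have h1 : (γ.map Prod.fst) Set.univ = 1 := by rw [hγ.1]; exact measure_univ
        rwa [Measure.map_apply measurable_fst MeasurableSet.univ, Set.preimage_univ] at h1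
      set T : (I₀ × I₁) × X → X × X := fun p => (φ p.1.1 p.2, ψ p.1.2 p.2) with hTdef
      have hTm : Measurable T :=
        (hφmeas.comp ((measurable_fst.comp measurable_fst).prodMk measurable_snd)).prodMk
          (hψmeas.comp ((measurable_snd.comp measurable_fst).prodMk measurable_snd))
      have hfst : ((γ.prod ν).map T).map Prod.fst = dualTransfer φ η₀ ν := by
        rw [Measure.map_map measurable_fst hTm,
            dualTransfer_eq_map φ hφmeas η₀ ν, ← hγ.1]
        have hprodmap : (γ.map Prod.fst).prod ν = (γ.prod ν).map (Prod.map Prod.fst id) := by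
          have h2 := Measure.map_prod_map (f := Prod.fst) (g := (id : X → X)) γ ν
            measurable_fst measurable_id
          simpa [Measure.map_id] using h2
        rw [hprodmap, Measure.map_map hφmeas (measurable_fst.prodMap measurable_id)]
        rfl
      have hsnd : ((γ.prod ν).map T).map Prod.snd = dualTransfer ψ η₁ ν := by
        rw [Measure.map_map measurable_snd hTm,
            dualTransfer_eq_map ψ hψmeas η₁ ν, ← hγ.2]
        have hprodmap : (γ.map Prod.snd).prod ν = (γ.prod ν).map (Prod.map Prod.snd id) := by
          have h2 := Measure.map_prod_map (f := Prod.snd) (g := (id : X → X)) γ ν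
            measurable_snd measurable_id
          simpa [Measure.map_id] using h2
        rw [hprodmap, Measure.map_map hψmeas (measurable_snd.prodMap measurable_id)]
        rfl
      have hcoupling : IsCoupling ((γ.prod ν).map T)
          (dualTransfer φ η₀ ν) (dualTransfer ψ η₁ ν) := ⟨hfst, hsnd⟩
      have hcostmeas : Measurable fun p : X × X => ENNReal.ofReal (dist p.1 p.2 ^ q) :=
        (ENNReal.continuous_ofReal.comp
          ((Real.continuous_rpow_const hq.le).comp continuous_dist)).measurable
      calc wCost q (dualTransfer φ η₀ ν) (dualTransfer ψ η₁ ν)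
          ≤ ∫⁻ p, ENNReal.ofReal (dist p.1 p.2 ^ q) ∂((γ.prod ν).map T) :=
            iInf₂_le ((γ.prod ν).map T) hcoupling
        _ = ∫⁻ p, ENNReal.ofReal (dist (φ p.1.1 p.2) (ψ p.1.2 p.2) ^ q) ∂(γ.prod ν) :=
            lintegral_map hcostmeas hTm
        _ ≤ ∫⁻ p, mapDist x₀ (φ p.1.1) (ψ p.1.2) ^ q
              * ENNReal.ofReal ((1 + dist p.2 x₀) ^ q) ∂(γ.prod ν) :=
            lintegral_mono fun p => ofReal_dist_le x₀ _ _ hq.le _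
        _ = (∫⁻ ij, mapDist x₀ (φ ij.1) (ψ ij.2) ^ q ∂γ)
              * ∫⁻ x, ENNReal.ofReal ((1 + dist x x₀) ^ q) ∂ν :=
            lintegral_prod_mul hmdmeas.aemeasurable hgmeas.aemeasurable
        _ ≤ (∫⁻ ij, mapDist x₀ (φ ij.1) (ψ ij.2) ^ q ∂γ) * C := mul_le_mul_right hCB _
        _ = C * ∫⁻ ij, mapDist x₀ (φ ij.1) (ψ ij.2) ^ q ∂γ := mul_comm _ _
    haveI hne : Nonempty {γ : Measure (I₀ × I₁) // IsCoupling γ η₀ η₁} := by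
      refine ⟨⟨η₀.prod η₁, ?_, ?_⟩⟩
      · simp [Measure.map_fst_prod, measure_univ]
      · simp [Measure.map_snd_prod, measure_univ]
    have hrw2 : C * ifsCost q x₀ φ η₀ ψ η₁
        = ⨅ γ' : {γ : Measure (I₀ × I₁) // IsCoupling γ η₀ η₁},
            C * ∫⁻ p, mapDist x₀ (φ p.1) (ψ p.2) ^ q ∂γ'.1 := by
      unfold ifsCost
      rw [iInf_subtype']
      exact ENNReal.mul_iInf fun h => absurd h hCtop
    rw [hrw2]
    exact le_iInf fun γ' => main γ'.1 γ'.2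
  -- pointwise rewriting of the weight
  have hBrw : ∀ x : X, ENNReal.ofReal ((1 + dist x x₀) ^ q)
      = (1 + ENNReal.ofReal (dist x x₀)) ^ q := by
    intro x
    rw [← ENNReal.ofReal_rpow_of_nonneg (by positivity : (0:ℝ) ≤ 1 + dist x x₀) hq.le,
        ENNReal.ofReal_add zero_le_one dist_nonneg, ENNReal.ofReal_one]
  have hmom1 : ∫⁻ x, (1 + ENNReal.ofReal (dist x x₀ ^ q)) ∂ν = 1 + moment q x₀ ν := by
    rw [lintegral_add_left measurable_const, lintegral_const, measure_univ, mul_one]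
    rfl
  constructor
  · -- case q ≤ 1
    intro hq1
    have hmin : min 1 (1/q) = 1 := min_eq_left ((le_div_iff₀ hq).mpr (by linarith))
    have hCB : ∫⁻ x, ENNReal.ofReal ((1 + dist x x₀) ^ q) ∂ν ≤ 1 + moment q x₀ ν := by
      rw [← hmom1]
      refine lintegral_mono fun x => ?_
      rw [hBrw x]
      calc (1 + ENNReal.ofReal (dist x x₀)) ^ q
          ≤ 1 ^ q + ENNReal.ofReal (dist x x₀) ^ q :=
            ENNReal.rpow_add_le_add_rpow _ _ hq.le hq1
        _ = 1 + ENNReal.ofReal (dist x x₀ ^ q) := by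
            rw [ENNReal.one_rpow, ENNReal.ofReal_rpow_of_nonneg dist_nonneg hq.le]
    have h1 := key (1 + moment q x₀ ν) h1Mne hCB
    simpa only [wDist, ifsDist, hmin, ENNReal.rpow_one] using h1
  · -- case 1 < q
    intro hq1
    have hr : (0:ℝ) < 1/q := by positivity
    have hmin : min 1 (1/q) = 1/q := min_eq_right (le_of_lt ((div_lt_one hq).mpr hq1))
    set K : ℝ≥0∞ := (2:ℝ≥0∞) ^ (q-1) * (1 + moment q x₀ ν) with hK
    have hKne : K ≠ ∞ := ENNReal.mul_ne_top
      (ENNReal.rpow_ne_top_of_nonneg (by linarith) ENNReal.ofNat_ne_top) h1Mne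
    have hCB : ∫⁻ x, ENNReal.ofReal ((1 + dist x x₀) ^ q) ∂ν ≤ K := by
      have hpt : ∀ x : X, ENNReal.ofReal ((1 + dist x x₀) ^ q)
          ≤ (2:ℝ≥0∞) ^ (q-1) * (1 + ENNReal.ofReal (dist x x₀ ^ q)) := by
        intro x
        rw [hBrw x]
        calc (1 + ENNReal.ofReal (dist x x₀)) ^ q
            ≤ (2:ℝ≥0∞) ^ (q-1) * (1 ^ q + ENNReal.ofReal (dist x x₀) ^ q) :=
              ENNReal.rpow_add_le_mul_rpow_add_rpow _ _ hq1.le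
          _ = (2:ℝ≥0∞) ^ (q-1) * (1 + ENNReal.ofReal (dist x x₀ ^ q)) := by
              rw [ENNReal.one_rpow, ENNReal.ofReal_rpow_of_nonneg dist_nonneg hq.le]
      calc ∫⁻ x, ENNReal.ofReal ((1 + dist x x₀) ^ q) ∂ν
          ≤ ∫⁻ x, (2:ℝ≥0∞) ^ (q-1) * (1 + ENNReal.ofReal (dist x x₀ ^ q)) ∂ν :=
            lintegral_mono hpt
        _ = (2:ℝ≥0∞) ^ (q-1) * ∫⁻ x, (1 + ENNReal.ofReal (dist x x₀ ^ q)) ∂ν :=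
            lintegral_const_mul _ (measurable_const.add
              ((ENNReal.continuous_ofReal.comp ((Real.continuous_rpow_const hq.le).comp
                (continuous_id.dist continuous_const))).measurable))
        _ = K := by rw [hmom1]
    have h1 := key K hKne hCB
    have hexp : (q - 1) * (1/q) = 1 - 1/q := by field_simp
    have h2two : ENNReal.ofReal (2 ^ (1 - 1/q)) = (2:ℝ≥0∞) ^ (1 - 1/q) := by
      rw [← ENNReal.ofReal_rpow_of_pos (by norm_num : (0:ℝ) < 2)]
      norm_num
    simp only [wDist, ifsDist, hmin]
    calc wCost q (dualTransfer φ η₀ ν) (dualTransfer ψ η₁ ν) ^ (1/q)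
        ≤ (K * ifsCost q x₀ φ η₀ ψ η₁) ^ (1/q) := ENNReal.rpow_le_rpow h1 hr.le
      _ = K ^ (1/q) * ifsCost q x₀ φ η₀ ψ η₁ ^ (1/q) :=
          ENNReal.mul_rpow_of_nonneg _ _ hr.le
      _ = ENNReal.ofReal (2 ^ (1 - 1/q)) * (1 + moment q x₀ ν) ^ (1/q)
            * ifsCost q x₀ φ η₀ ψ η₁ ^ (1/q) := by
          rw [hK, ENNReal.mul_rpow_of_nonneg _ _ hr.le, ← ENNReal.rpow_mul, hexp, h2two]


end
end
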